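/- arXiv:1509.05957 — 3 statements merged into one kernel-verified Lean document; each statement's English description precedes it below -/
import Mathlib

section
/- For every nonempty connected trace u ∈ M(A,I), the partially commutative closure [u*]_I of the language of all words representing powers of u is regular; moreover there is a memorizing I-diamond NFA accepting it with at most 2·ρ(u)^{|A|} states, where ρ(u) is the number of prefixes of the trace u. -/
/-- The commutation relation on words generated by an independence relation. -/
def traceRel (A : Type) (I : A → A → Prop) : FreeMonoid A → FreeMonoid A → Prop :=
  fun x y => ∃ a b, I a b ∧ x = FreeMonoid.of a * FreeMonoid.of b ∧ y = FreeMonoid.of b * FreeMonoid.of a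

/-- The trace congruence ≡_I. -/
def traceCon (A : Type) (I : A → A → Prop) : Con (FreeMonoid A) := conGen (traceRel A I)

/-- The trace monoid M(A,I). -/
abbrev Trace (A : Type) (I : A → A → Prop) := (traceCon A I).Quotient

/-- The trace represented by a word. -/
def trc (A : Type) (I : A → A → Prop) (w : FreeMonoid A) : Trace A I := (traceCon A I).mk' w

/-- s I t: every letter of s is independent of every letter of t. -/
def TraceIndep (A : Type) (I : A → A → Prop) (s t : Trace A I) : Prop :=
  ∀ w w' : FreeMonoid A, s = trc A I w → t = trc A I w' →
    ∀ a ∈ w.toList, ∀ b ∈ w'.toList, I a b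

/-- A trace is connected if it has no nontrivial factorization into independent factors. -/
def TraceConnected (A : Type) (I : A → A → Prop) (t : Trace A I) : Prop :=
  ∀ u v : Trace A I, t = u * v → TraceIndep A I u v → u = 1 ∨ v = 1

/-- The set of prefixes of a trace. -/
def tracePrefixes (A : Type) (I : A → A → Prop) (t : Trace A I) : Set (Trace A I) :=
  {p | ∃ q, t = p * q}

/-- A nondeterministic finite automaton with a single initial state. -/
structure NFA' (Q A : Type) where
  Δ : Q → A → Q → Prop
  q0 : Q
  F : Set Q

/-- `M.Reaches p w q`: the automaton can go from state p to state q reading w. -/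
def NFA'.Reaches {Q A : Type} (M : NFA' Q A) : Q → List A → Q → Prop
  | p, [], q => p = q
  | p, a :: w, q => ∃ r, M.Δ p a r ∧ M.Reaches r w q

/-- The language accepted by the NFA. -/
def NFA'.lang {Q A : Type} (M : NFA' Q A) : Set (List A) :=
  {w | ∃ q ∈ M.F, M.Reaches M.q0 w q}

/-- An I-diamond NFA. -/
def IDiamond {Q A : Type} (I : A → A → Prop) (M : NFA' Q A) : Prop :=
  ∀ a b p q r, I a b → M.Δ p a q → M.Δ q b r → ∃ q', M.Δ p b q' ∧ M.Δ q' a r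

/-- A memorizing NFA: every state is reachable and determines the alphabet of
the words reaching it. -/
def Memorizing {Q A : Type} (M : NFA' Q A) : Prop :=
  (∀ q : Q, ∃ w, M.Reaches M.q0 w q) ∧
  ∃ α : Q → Set A, ∀ (w : List A) (q : Q), M.Reaches M.q0 w q → α q = {a | a ∈ w}

/-- The partially commutative closure of a language. -/
def pcClosure (A : Type) (I : A → A → Prop) (L : Set (List A)) : Set (List A) :=
  {u | ∃ v ∈ L, traceCon A I (FreeMonoid.ofList u) (FreeMonoid.ofList v)}

namespace SCR
open List
attribute [local instance] Classical.propDecidable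

variable {A : Type} {I : A → A → Prop}

def tc (I : A → A → Prop) (v v' : List A) : Prop :=
  traceCon A I (FreeMonoid.ofList v) (FreeMonoid.ofList v')

lemma tc_refl (v : List A) : tc I v v := (traceCon A I).refl _

lemma tc_symm {v v' : List A} (h : tc I v v') : tc I v' v := (traceCon A I).symm h

lemma tc_trans {v v' v'' : List A} (h : tc I v v') (h' : tc I v' v'') : tc I v v'' :=
  (traceCon A I).trans h h'

lemma tc_app {v v' z z' : List A} (h : tc I v v') (h' : tc I z z') : tc I (v ++ z) (v' ++ z') :=
  (traceCon A I).mul h h'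

lemma tc_cons (a : A) {v v' : List A} (h : tc I v v') : tc I (a :: v) (a :: v') :=
  tc_app (tc_refl [a]) h

lemma tc_swap {a b : A} (h : I a b) (s : List A) : tc I (a :: b :: s) (b :: a :: s) :=
  tc_app (ConGen.Rel.of _ _ ⟨a, b, h, rfl, rfl⟩ : tc I [a,b] [b,a]) (tc_refl s)

lemma tcF_perm {x y : FreeMonoid A} (h : traceCon A I x y) : x.toList ~ y.toList := by
  induction h with
  | of x y hxy => obtain ⟨a, b, _, rfl, rfl⟩ := hxy; exact Perm.swap' _ _ (Perm.refl _)
  | refl => exact Perm.refl _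
  | symm _ ih => exact ih.symm
  | trans _ _ ih ih' => exact ih.trans ih'
  | mul _ _ ih ih' => exact ih.append ih'

lemma tc_perm {v v' : List A} (h : tc I v v') : v ~ v' := tcF_perm h

lemma tc_count {v v' : List A} (h : tc I v v') (a : A) : v.count a = v'.count a :=
  (tc_perm h).count_eq a

lemma tc_length {v v' : List A} (h : tc I v v') : v.length = v'.length :=
  (tc_perm h).length_eq

lemma tc_mem {v v' : List A} (h : tc I v v') (a : A) : a ∈ v ↔ a ∈ v' :=
  (tc_perm h).mem_iff

/-- pairwise projection -/
noncomputable def pf (a b : A) (l : List A) : List A := l.filter (fun e => e = a ∨ e = b)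

lemma pf_append (a b : A) (l l' : List A) : pf a b (l ++ l') = pf a b l ++ pf a b l' := by
  simp [pf]

lemma tcF_pf {x y : FreeMonoid A} (h : traceCon A I x y) {a b : A} (hab : ¬ I a b) (hba : ¬ I b a) :
    pf a b x.toList = pf a b y.toList := by
  induction h with
  | of x y hxy =>
    obtain ⟨a', b', hI, rfl, rfl⟩ := hxy
    show pf a b [a', b'] = pf a b [b', a']
    by_cases h1 : (a' = a ∨ a' = b) <;> by_cases h2 : (b' = a ∨ b' = b) <;>
      simp [pf, List.filter, h1, h2]
    · rcases h1 with rfl | rfl <;> rcases h2 with rfl | rfl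
      · exact ⟨rfl, rfl⟩
      · exact absurd hI hab
      · exact absurd hI hba
      · exact ⟨rfl, rfl⟩
  | refl => rfl
  | symm _ ih => exact ih.symm
  | trans _ _ ih ih' => exact ih.trans ih'
  | mul _ _ ih ih' => show pf a b (_ ++ _) = pf a b (_ ++ _); rw [pf_append, pf_append, ih, ih']

lemma tc_pf {v v' : List A} (h : tc I v v') {a b : A} (hab : ¬ I a b) (hba : ¬ I b a) :
    pf a b v = pf a b v' := tcF_pf h hab hba

lemma pf_cons_in {x a b : A} (h : x = a ∨ x = b) (l : List A) :
    pf a b (x :: l) = x :: pf a b l := by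
  simp [pf, List.filter_cons, h]

lemma pf_cons_out {x a b : A} (h : ¬ (x = a ∨ x = b)) (l : List A) :
    pf a b (x :: l) = pf a b l := by
  simp [pf, List.filter_cons, h]

lemma mem_pf {x a b : A} {l : List A} (h : x ∈ pf a b l) : (x = a ∨ x = b) ∧ x ∈ l := by
  have := List.of_mem_filter h
  exact ⟨by simpa using this, List.mem_of_mem_filter h⟩

lemma count_pf_left (a b : A) (l : List A) : (pf a b l).count a = l.count a := by
  induction l with
  | nil => rfl
  | cons x t ih =>
    by_cases h : x = a ∨ x = b
    · rw [pf_cons_in h]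
      rcases eq_or_ne x a with rfl | hne
      · rw [List.count_cons_self, List.count_cons_self, ih]
      · rw [List.count_cons_of_ne hne, List.count_cons_of_ne hne, ih]
    · push_neg at h
      rw [pf_cons_out (by tauto)]
      rw [ih, List.count_cons_of_ne h.1]

lemma length_pf (a b : A) (hab : a ≠ b) (l : List A) :
    (pf a b l).length = l.count a + l.count b := by
  induction l with
  | nil => rfl
  | cons x t ih =>
    by_cases h : x = a ∨ x = b
    · rw [pf_cons_in h]
      rcases h with rfl | rfl
      · simp [List.count_cons_self, List.count_cons_of_ne hab, ih]; omega
      · simp [List.count_cons_self, List.count_cons_of_ne (Ne.symm hab), ih]; omega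
    · push_neg at h
      rw [pf_cons_out (by tauto)]
      rw [ih, List.count_cons_of_ne h.1, List.count_cons_of_ne h.2]

lemma tc_commute {a : A} {s : List A} (h : ∀ x ∈ s, I a x) : tc I (a :: s) (s ++ [a]) := by
  induction s with
  | nil => exact tc_refl [a]
  | cons b t ih =>
    have h1 : tc I (a :: b :: t) (b :: a :: t) := tc_swap (h b (List.mem_cons_self (a := b) (l := t))) t
    exact tc_trans h1 (tc_cons b (ih fun x hx => h x (List.mem_cons_of_mem _ hx)))

lemma tc_commute_mid {a : A} {s t : List A} (h : ∀ x ∈ s, I a x) :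
    tc I (a :: (s ++ t)) (s ++ a :: t) := by
  have := tc_app (tc_commute h) (tc_refl t)
  simpa using this

lemma mask_split : ∀ (l : List (A × Bool)),
    l.Pairwise (fun p q => p.2 = false → q.2 = true → I p.1 q.1) →
    tc I (l.map Prod.fst)
      ((l.filter (fun p => p.2)).map Prod.fst ++ (l.filter (fun p => !p.2)).map Prod.fst) := by
  intro l hl
  induction l with
  | nil => exact tc_refl []
  | cons p t ih =>
    obtain ⟨hhead, htail⟩ := List.pairwise_cons.mp hl
    obtain ⟨a, bb⟩ := p
    cases bb with
    | true =>
      have : tc I (a :: t.map Prod.fst)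
          (a :: ((t.filter (fun p => p.2)).map Prod.fst ++ (t.filter (fun p => !p.2)).map Prod.fst)) :=
        tc_cons a (ih htail)
      simpa [List.filter_cons] using this
    | false =>
      have hK : ∀ x ∈ (t.filter (fun p => p.2)).map Prod.fst, I a x := by
        intro x hx
        simp only [List.mem_map] at hx
        obtain ⟨q, hq, rfl⟩ := hx
        exact hhead q (List.mem_of_mem_filter hq) rfl (by simpa using List.of_mem_filter hq)
      have h1 : tc I (a :: t.map Prod.fst)
          (a :: ((t.filter (fun p => p.2)).map Prod.fst ++ (t.filter (fun p => !p.2)).map Prod.fst)) :=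
        tc_cons a (ih htail)
      have h2 := tc_commute_mid (I := I) (t := (t.filter (fun p => !p.2)).map Prod.fst) hK
      have := tc_trans h1 h2
      simpa [List.filter_cons] using this

/-- "alive within one copy": counts `g` are consistent with taking a prefix of each
pairwise projection of `l`. -/
def aliveT (I : A → A → Prop) (g : A → ℕ) (l : List A) : Prop :=
  ∀ a b, a ≠ b → ¬ I a b → ((pf a b l).take (g a + g b)).count a = g a

noncomputable def annotate : List A → (A → ℕ) → List (A × Bool)
  | [], _ => []
  | a :: t, g =>
    if 0 < g a then (a, true) :: annotate t (Function.update g a (g a - 1))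
    else (a, false) :: annotate t g

lemma annotate_map_fst : ∀ (l : List A) (g : A → ℕ), (annotate l g).map Prod.fst = l
  | [], _ => rfl
  | a :: t, g => by
    by_cases h : 0 < g a <;> simp [annotate, h, annotate_map_fst t]

lemma annotate_kept_pos : ∀ (l : List A) (g g' : A → ℕ), (∀ x, g' x ≤ g x) →
    ∀ b, (b, true) ∈ annotate l g' → 0 < g b := by
  intro l
  induction l with
  | nil => intro g g' _ b h; simp [annotate] at h
  | cons a t ih =>
    intro g g' hle b hmem
    by_cases h : 0 < g' a
    · rw [annotate, if_pos h] at hmem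
      rcases List.mem_cons.mp hmem with heq | hmem'
      · have hba : b = a := congrArg Prod.fst heq
        subst hba
        exact lt_of_lt_of_le h (hle b)
      · refine ih g _ ?_ b hmem'
        intro x
        rcases eq_or_ne x a with rfl | hx
        · rw [Function.update_self]
          have := hle x
          omega
        · rw [Function.update_of_ne hx]; exact hle x
    · rw [annotate, if_neg h] at hmem
      rcases List.mem_cons.mp hmem with heq | hmem'
      · exact absurd (Prod.mk.inj heq).2 (by simp)
      · exact ih g g' hle b hmem'

lemma annotate_kept_count : ∀ (l : List A) (g : A → ℕ) (b : A),
    (((annotate l g).filter (fun p => p.2)).map Prod.fst).count b = min (g b) (l.count b) := by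
  intro l
  induction l with
  | nil => intro g b; simp [annotate]
  | cons a t ih =>
    intro g b
    by_cases h : 0 < g a
    · rw [annotate, if_pos h]
      rcases eq_or_ne b a with rfl | hb
      · simp only [List.filter_cons, List.map_cons, List.count_cons_self, ih,
          Function.update_self, List.count_cons_self]
        simp only [show ((b, true).2 = true) = True by simp, if_true]
        simp only [List.map_cons, List.count_cons_self, ih, Function.update_self]
        omega
      · have : ((a, true) :: annotate t (Function.update g a (g a - 1))).filter (fun p => p.2)
            = (a, true) :: (annotate t (Function.update g a (g a - 1))).filter (fun p => p.2) := by
          simp [List.filter_cons]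
        rw [this, List.map_cons, List.count_cons_of_ne (Ne.symm hb), ih,
          Function.update_of_ne hb, List.count_cons_of_ne (Ne.symm hb)]
    · rw [annotate, if_neg h]
      have hg : g a = 0 := Nat.eq_zero_of_not_pos h
      have : ((a, false) :: annotate t g).filter (fun p => p.2)
          = (annotate t g).filter (fun p => p.2) := by simp [List.filter_cons]
      rw [this, ih]
      rcases eq_or_ne b a with rfl | hb
      · simp [hg]
      · rw [List.count_cons_of_ne (Ne.symm hb)]

lemma aliveT_update {g : A → ℕ} {a : A} (ha : 0 < g a) {t : List A}
    (hal : aliveT I g (a :: t)) :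
    aliveT I (Function.update g a (g a - 1)) t := by
  intro x y hxy hI
  rcases eq_or_ne a x with rfl | hax
  · rw [Function.update_self, Function.update_of_ne (Ne.symm hxy)]
    have h0 := hal a y hxy hI
    rw [pf_cons_in (Or.inl rfl)] at h0
    rw [show g a + g y = (g a - 1 + g y) + 1 by omega, List.take_succ_cons,
      List.count_cons_self] at h0
    omega
  · rcases eq_or_ne a y with rfl | hay
    · rw [Function.update_of_ne (Ne.symm hax), Function.update_self]
      have h0 := hal x a hxy hI
      rw [pf_cons_in (Or.inr rfl)] at h0
      rw [show g x + g a = (g x + (g a - 1)) + 1 by omega, List.take_succ_cons,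
        List.count_cons_of_ne (Ne.symm hxy)] at h0
      exact h0
    · rw [Function.update_of_ne (Ne.symm hax), Function.update_of_ne (Ne.symm hay)]
      have h0 := hal x y hxy hI
      rw [pf_cons_out (by tauto)] at h0
      exact h0

lemma aliveT_head_indep {g : A → ℕ} {a : A} {t : List A} (ha : g a = 0)
    (hal : aliveT I g (a :: t)) {b : A} (hb : 0 < g b) (hab : a ≠ b) (hI : ¬ I a b) : False := by
  have h0 := hal a b hab hI
  rw [pf_cons_in (Or.inl rfl), ha, Nat.zero_add,
    show g b = (g b - 1) + 1 by omega, List.take_succ_cons, List.count_cons_self] at h0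
  omega

lemma aliveT_tail_drop (hsym : ∀ a b, I a b → I b a) {g : A → ℕ} {a : A} {t : List A}
    (ha : g a = 0) (hal : aliveT I g (a :: t)) : aliveT I g t := by
  intro x y hxy hI
  rcases eq_or_ne a x with rfl | hax
  · by_cases hy : 0 < g y
    · exact absurd (aliveT_head_indep ha hal hy hxy hI) id
    · have hy0 : g y = 0 := Nat.eq_zero_of_not_pos hy
      rw [ha, hy0]
      simp
  · rcases eq_or_ne a y with rfl | hay
    · by_cases hx : 0 < g x
      · exact absurd (aliveT_head_indep ha hal hx (Ne.symm hxy) (fun h => hI (hsym _ _ h))) id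
      · have hx0 : g x = 0 := Nat.eq_zero_of_not_pos hx
        rw [ha, hx0]
        simp
    · have h0 := hal x y hxy hI
      rw [pf_cons_out (by tauto)] at h0
      exact h0

lemma annotate_pairwise (hsym : ∀ a b, I a b → I b a) :
    ∀ (l : List A) (g : A → ℕ), aliveT I g l →
    (annotate l g).Pairwise (fun p q : A × Bool => p.2 = false → q.2 = true → I p.1 q.1) := by
  intro l
  induction l with
  | nil => intro g _; simp [annotate]
  | cons a t ih =>
    intro g hal
    by_cases h : 0 < g a
    · rw [annotate, if_pos h]
      refine List.pairwise_cons.mpr ⟨?_, ih _ (aliveT_update h hal)⟩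
      intro q _ hfalse _
      simp at hfalse
    · rw [annotate, if_neg h]
      have hg : g a = 0 := Nat.eq_zero_of_not_pos h
      refine List.pairwise_cons.mpr ⟨?_, ih _ (aliveT_tail_drop hsym hg hal)⟩
      rintro ⟨b, bb⟩ hq - hq2
      simp only at hq2; subst hq2
      have hb : 0 < g b := annotate_kept_pos t g g (fun _ => le_refl _) b hq
      have hab : a ≠ b := fun h' => by rw [h'] at hg; omega
      by_contra hI
      exact aliveT_head_indep hg hal hb hab hI

lemma realize (hsym : ∀ a b, I a b → I b a) (g : A → ℕ) (l : List A)
    (hc : ∀ a, g a ≤ l.count a) (hal : aliveT I g l) :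
    ∃ v z : List A, tc I l (v ++ z) ∧ ∀ b, v.count b = g b := by
  refine ⟨((annotate l g).filter (fun p => p.2)).map Prod.fst,
    ((annotate l g).filter (fun p => !p.2)).map Prod.fst, ?_, ?_⟩
  · have := mask_split (I := I) (annotate l g) (annotate_pairwise hsym l g hal)
    rwa [annotate_map_fst] at this
  · intro b
    rw [annotate_kept_count]
    exact min_eq_left (hc b)

lemma first_split {a : A} : ∀ {l : List A}, a ∈ l → ∃ s t, l = s ++ a :: t ∧ a ∉ s := by
  intro l
  induction l with
  | nil => intro h; simp at h
  | cons x r ih =>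
    intro h
    rcases eq_or_ne x a with rfl | hxa
    · exact ⟨[], r, rfl, by simp⟩
    · have : a ∈ r := by
        rcases List.mem_cons.mp h with h' | h'
        · exact absurd h'.symm hxa
        · exact h'
      obtain ⟨s, t, rfl, hns⟩ := ih this
      exact ⟨x :: s, t, rfl, by
        intro hmem
        rcases List.mem_cons.mp hmem with h' | h'
        · exact hxa h'.symm
        · exact hns h'⟩

/-- Converse Cori–Perrin projection lemma. -/
lemma cp2 (hsym : ∀ a b, I a b → I b a) :
    ∀ (v v' : List A), (∀ a, v.count a = v'.count a) →
    (∀ a b, a ≠ b → ¬ I a b → pf a b v = pf a b v') → tc I v v' := by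
  intro v
  induction v with
  | nil =>
    intro v' hcount _
    have : v' = [] := by
      cases v' with
      | nil => rfl
      | cons e r =>
        have := hcount e
        simp [List.count_cons_self] at this
    rw [this]; exact tc_refl []
  | cons a t ih =>
    intro v' hcount hpf
    have hav' : a ∈ v' := by
      have := hcount a
      rw [List.count_cons_self] at this
      have : 0 < v'.count a := by omega
      exact List.count_pos_iff.mp this
    obtain ⟨z, t', rfl, haz⟩ := first_split hav'
    have hzind : ∀ c ∈ z, I a c := by
      intro c hc
      by_contra hI
      have hca : c ≠ a := fun h => haz (h ▸ hc)
      have hpf0 := hpf a c (Ne.symm hca) hI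
      rw [pf_cons_in (Or.inl rfl), pf_append, pf_cons_in (Or.inl rfl)] at hpf0
      -- pf a c z is a nonempty list of c's
      have hz1 : ∀ x ∈ pf a c z, x = c := by
        intro x hx
        obtain ⟨hor, hmem⟩ := mem_pf hx
        rcases hor with rfl | rfl
        · exact absurd hmem haz
        · rfl
      have hcz : c ∈ pf a c z := by
        apply List.mem_filter.mpr
        exact ⟨hc, by simp⟩
      cases hpfz : pf a c z with
      | nil => rw [hpfz] at hcz; simp at hcz
      | cons e r =>
        have he : e = c := hz1 e (hpfz ▸ List.mem_cons_self (a := e) (l := r))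
        rw [hpfz, he] at hpf0
        have : a = c := by
          have := congrArg (fun l => l.head?) hpf0
          simpa using this
        exact hca this.symm
    -- v' = z ++ a :: t'  ≡  a :: (z ++ t')
    have hmove : tc I (a :: (z ++ t')) (z ++ a :: t') := tc_commute_mid hzind
    -- IH on t vs z ++ t'
    have hc2 : ∀ x, t.count x = (z ++ t').count x := by
      intro x
      have h := hcount x
      rcases eq_or_ne x a with rfl | hxa
      · simp only [List.count_cons_self, List.count_append] at h ⊢
        omega
      · simp only [List.count_cons_of_ne (Ne.symm hxa), List.count_append] at h ⊢
        omega
    have hpf2 : ∀ x y, x ≠ y → ¬ I x y → pf x y t = pf x y (z ++ t') := by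
      intro x y hxy hI
      have h0 := hpf x y hxy hI
      by_cases hax : a = x ∨ a = y
      · -- pf x y z = []
        have hzempty : pf x y z = [] := by
          rw [List.eq_nil_iff_forall_not_mem]
          intro e he
          obtain ⟨hor, hmem⟩ := mem_pf he
          have hea : e ≠ a := fun h => haz (h ▸ hmem)
          have hIae : I a e := hzind e hmem
          rcases hor with rfl | rfl
          · rcases hax with rfl | rfl
            · exact hea rfl
            · exact hI (hsym _ _ hIae)
          · rcases hax with rfl | rfl
            · exact hI hIae
            · exact hea rfl
        have hin : a = x ∨ a = y := hax
        rw [pf_cons_in (by tauto), pf_append, hzempty, List.nil_append,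
          pf_cons_in (by tauto)] at h0
        have := List.cons.inj h0
        rw [pf_append, hzempty, List.nil_append]
        exact this.2
      · push_neg at hax
        rw [pf_cons_out (by tauto), pf_append, pf_cons_out (by tauto)] at h0
        rw [pf_append]
        exact h0
    have := tc_cons a (ih (z ++ t') hc2 hpf2)
    exact tc_trans this hmove

/-! ### cyclic words -/

def npow (x : List A) (n : ℕ) : List A := (List.replicate n x).flatten

def cyc (x : List A) (L : ℕ) : List A := (npow x L).take L

lemma npow_zero (x : List A) : npow x 0 = [] := rfl

lemma npow_succ (x : List A) (n : ℕ) : npow x (n + 1) = x ++ npow x n := by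
  simp [npow, List.replicate_succ]

lemma npow_nil (n : ℕ) : npow ([] : List A) n = [] := by
  induction n with
  | zero => rfl
  | succ k ih => rw [npow_succ, ih]; rfl

lemma length_npow (x : List A) (n : ℕ) : (npow x n).length = n * x.length := by
  induction n with
  | zero => simp [npow_zero]
  | succ k ih => rw [npow_succ, List.length_append, ih]; ring

lemma npow_add (x : List A) (m n : ℕ) : npow x (m + n) = npow x m ++ npow x n := by
  induction m with
  | zero => simp [npow_zero, Nat.zero_add]
  | succ k ih => rw [Nat.succ_add, npow_succ, npow_succ, ih, List.append_assoc]

lemma count_npow (x : List A) (n : ℕ) (a : A) : (npow x n).count a = n * x.count a := by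
  induction n with
  | zero => simp [npow_zero]
  | succ k ih => rw [npow_succ, List.count_append, ih]; ring

lemma mem_npow {x : List A} {n : ℕ} {e : A} (h : e ∈ npow x n) : e ∈ x := by
  induction n with
  | zero => simp [npow_zero] at h
  | succ k ih =>
    rw [npow_succ, List.mem_append] at h
    tauto

lemma take_npow_eq {x : List A} {L m n : ℕ} (hL : L ≤ m * x.length) (hmn : m ≤ n) :
    (npow x n).take L = (npow x m).take L := by
  obtain ⟨k, rfl⟩ := Nat.exists_eq_add_of_le hmn
  rw [npow_add, List.take_append_of_le_length (by rw [length_npow]; exact hL)]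

lemma cyc_eq_take {x : List A} {L n : ℕ} (h : L ≤ n * x.length) :
    cyc x L = (npow x n).take L := by
  rcases eq_or_ne x [] with rfl | hx
  · rw [npow_nil, cyc, npow_nil]
  · have hx1 : 1 ≤ x.length := by
      cases x with
      | nil => exact absurd rfl hx
      | cons _ _ => simp
    rcases le_total n L with hnL | hLn
    · rw [cyc]; exact take_npow_eq h hnL
    · rw [cyc]; exact (take_npow_eq (Nat.le_mul_of_pos_right L hx1) hLn).symm

lemma cyc_nil (L : ℕ) : cyc ([] : List A) L = [] := by rw [cyc, npow_nil]; simp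

lemma cyc_zero (x : List A) : cyc x 0 = [] := by rw [cyc]; rfl

lemma cyc_shift {x : List A} (hx : x ≠ []) (L : ℕ) :
    cyc x (x.length + L) = x ++ cyc x L := by
  have hx1 : 1 ≤ x.length := by
    cases x with
    | nil => exact absurd rfl hx
    | cons _ _ => simp
  have h1 : cyc x (x.length + L) = (npow x (1 + L)).take (x.length + L) := by
    apply cyc_eq_take
    rw [Nat.add_mul, Nat.one_mul]
    have : L ≤ L * x.length := Nat.le_mul_of_pos_right L hx1
    omega
  rw [h1, Nat.add_comm 1 L, npow_succ]
  rw [List.take_append]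
  rw [List.take_of_length_le (by omega)]
  congr 1
  rw [show x.length + L - x.length = L by omega]
  exact (cyc_eq_take (L := L) (n := L) (Nat.le_mul_of_pos_right L hx1)).symm

lemma cyc_decomp {x : List A} (hx : x ≠ []) (q r : ℕ) :
    cyc x (q * x.length + r) = npow x q ++ cyc x r := by
  induction q with
  | zero => simp [npow_zero]
  | succ k ih =>
    have : (k + 1) * x.length + r = x.length + (k * x.length + r) := by ring
    rw [this, cyc_shift hx, ih, npow_succ, List.append_assoc]

lemma length_cyc {x : List A} (hx : x ≠ []) (L : ℕ) : (cyc x L).length = L := by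
  have hx1 : 1 ≤ x.length := by
    cases x with
    | nil => exact absurd rfl hx
    | cons _ _ => simp
  rw [cyc, List.length_take, length_npow]
  have : L ≤ L * x.length := Nat.le_mul_of_pos_right L hx1
  omega

lemma mem_cyc {x : List A} {L : ℕ} {e : A} (h : e ∈ cyc x L) : e ∈ x :=
  mem_npow (List.mem_of_mem_take h)

lemma cyc_full {x : List A} (hx : x ≠ []) (m : ℕ) : cyc x (m * x.length) = npow x m := by
  have := cyc_decomp hx m 0
  simpa [cyc_zero] using this

lemma count_cyc_le {x : List A} {r : ℕ} (hr : r ≤ x.length) (a : A) :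
    (cyc x r).count a ≤ x.count a := by
  have h1 : cyc x r = x.take r := by
    have := cyc_eq_take (x := x) (L := r) (n := 1) (by rw [Nat.one_mul]; exact hr)
    rw [this]
    congr 1
    rw [npow, List.replicate_one, List.flatten]
    simp
  rw [h1]
  exact (List.take_sublist r x).count_le a

lemma length_eq_counts {a b : A} (hab : a ≠ b) :
    ∀ {l : List A}, (∀ e ∈ l, e = a ∨ e = b) → l.length = l.count a + l.count b := by
  intro l
  induction l with
  | nil => intro _; rfl
  | cons e t ih =>
    intro h
    have ht := ih (fun e' he' => h e' (List.mem_cons_of_mem _ he'))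
    rcases h e (List.mem_cons_self (a := e) (l := t)) with rfl | rfl
    · rw [List.length_cons, List.count_cons_self, List.count_cons_of_ne hab, ht]
      omega
    · rw [List.length_cons, List.count_cons_self, List.count_cons_of_ne (Ne.symm hab), ht]
      omega

/-! ### aliveness of count vectors w.r.t. powers of a fixed word -/

def aliveC (I : A → A → Prop) (W : List A) (f : A → ℕ) : Prop :=
  (∀ a, W.count a = 0 → f a = 0) ∧
  ∀ a b, a ≠ b → ¬ I a b → (cyc (pf a b W) (f a + f b)).count a = f a

lemma pf_ne_nil_len {a b : A} (hab : a ≠ b) (W : List A) :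
    (pf a b W).length = W.count a + W.count b := by
  rw [length_pf a b hab W]

lemma cyc_pf_count_b {a b : A} (hab : a ≠ b) {W : List A} (hx : pf a b W ≠ []) (L : ℕ) :
    (cyc (pf a b W) L).count a + (cyc (pf a b W) L).count b = L := by
  have h1 := length_eq_counts hab (l := cyc (pf a b W) L)
    (fun e he => (mem_pf (mem_cyc he)).1)
  rw [← h1, length_cyc hx]

lemma count_pf_right (a b : A) (l : List A) : (pf a b l).count b = l.count b := by
  have h : pf a b l = pf b a l := by
    apply List.filter_congr
    intro e _
    simp [or_comm]
  rw [h, count_pf_left]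

/-- round decomposition for a dependent pair -/
lemma pairq {W : List A} {f : A → ℕ} {a b : A} (hab : a ≠ b)
    (h2 : (cyc (pf a b W) (f a + f b)).count a = f a) (hx : pf a b W ≠ []) :
    ∃ q, q * W.count a ≤ f a ∧ f a ≤ (q + 1) * W.count a ∧
         q * W.count b ≤ f b ∧ f b ≤ (q + 1) * W.count b := by
  set x := pf a b W with hxdef
  have hlen : 0 < x.length := List.length_pos_iff.mpr hx
  set L := f a + f b with hL
  set q := L / x.length with hq
  set r := L % x.length with hr
  have hdec : cyc x L = npow x q ++ cyc x r := by
    have : L = q * x.length + r := by rw [hq, hr]; exact (Nat.div_add_mod' L x.length).symm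
    rw [this, cyc_decomp hx]
  have hca : x.count a = W.count a := count_pf_left a b W
  have hcb : x.count b = W.count b := count_pf_right a b W
  have hcnta : f a = q * W.count a + (cyc x r).count a := by
    rw [← h2, hdec, List.count_append, count_npow, hca]
  have hsa : (cyc x r).count a ≤ W.count a := by
    rw [← hca]; exact count_cyc_le (le_of_lt (Nat.mod_lt L hlen)) a
  have hsumL : (cyc x L).count a + (cyc x L).count b = L := cyc_pf_count_b hab hx L
  have hcntbL : (cyc x L).count b = f b := by omega
  have hcntb : f b = q * W.count b + (cyc x r).count b := by
    rw [← hcntbL, hdec, List.count_append, count_npow, hcb]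
  have hsb : (cyc x r).count b ≤ W.count b := by
    rw [← hcb]; exact count_cyc_le (le_of_lt (Nat.mod_lt L hlen)) b
  refine ⟨q, by omega, ?_, by omega, ?_⟩
  · rw [Nat.succ_mul]; omega
  · rw [Nat.succ_mul]; omega

lemma aliveC_sub {W : List A} {f : A → ℕ} (hal : aliveC I W f)
    (hle : ∀ b, W.count b ≤ f b) : aliveC I W (fun b => f b - W.count b) := by
  obtain ⟨h1, h2⟩ := hal
  constructor
  · intro a ha
    have := h1 a ha
    simp only [ha, this]
  · intro a b hab hI
    rcases eq_or_ne (pf a b W) [] with hx | hx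
    · have hza : W.count a = 0 := by
        have := length_pf a b hab W
        rw [hx] at this
        simp at this
        omega
      have hzb : W.count b = 0 := by
        have := length_pf a b hab W
        rw [hx] at this
        simp at this
        omega
      show (cyc (pf a b W) ((f a - W.count a) + (f b - W.count b))).count a = f a - W.count a
      simpa [hza, hzb] using h2 a b hab hI
    · have hlen : (pf a b W).length = W.count a + W.count b := length_pf a b hab W
      show (cyc (pf a b W) ((f a - W.count a) + (f b - W.count b))).count a = f a - W.count a
      have harg : f a + f b = (pf a b W).length + ((f a - W.count a) + (f b - W.count b)) := by
        have := hle a; have := hle b; omega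
      have h0 := h2 a b hab hI
      rw [harg, cyc_shift hx, List.count_append, count_pf_left] at h0
      have := hle a
      omega

lemma aliveC_addc {W : List A} {f : A → ℕ} (hal : aliveC I W f) :
    aliveC I W (fun b => f b + W.count b) := by
  obtain ⟨h1, h2⟩ := hal
  constructor
  · intro a ha
    have := h1 a ha
    simp only [ha, this]
  · intro a b hab hI
    rcases eq_or_ne (pf a b W) [] with hx | hx
    · have hl := length_pf a b hab W
      rw [hx] at hl
      simp at hl
      have hza : W.count a = 0 := by omega
      have hzb : W.count b = 0 := by omega
      show (cyc (pf a b W) ((f a + W.count a) + (f b + W.count b))).count a = f a + W.count a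
      simpa [hza, hzb] using h2 a b hab hI
    · have hlen : (pf a b W).length = W.count a + W.count b := length_pf a b hab W
      show (cyc (pf a b W) ((f a + W.count a) + (f b + W.count b))).count a = f a + W.count a
      have harg : (f a + W.count a) + (f b + W.count b) = (pf a b W).length + (f a + f b) := by
        omega
      rw [harg, cyc_shift hx, List.count_append, count_pf_left]
      have h0 := h2 a b hab hI
      omega

/-- going down by several copies -/
lemma aliveC_down {W : List A} {g : A → ℕ} (m : ℕ)
    (hal : aliveC I W (fun b => g b + m * W.count b)) : aliveC I W g := by
  induction m with
  | zero => simpa using hal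
  | succ k ih =>
    apply ih
    have hle : ∀ b, W.count b ≤ g b + (k + 1) * W.count b := by
      intro b
      have : W.count b ≤ (k + 1) * W.count b := Nat.le_mul_of_pos_left _ (by omega)
      omega
    have := aliveC_sub hal hle
    convert this using 2 with b
    rw [Nat.succ_mul]
    omega

lemma aliveC_up {W : List A} {g : A → ℕ} (m : ℕ) (hal : aliveC I W g) :
    aliveC I W (fun b => g b + m * W.count b) := by
  induction m with
  | zero => simpa using hal
  | succ k ih =>
    have := aliveC_addc ih
    convert this using 2 with b
    rw [Nat.succ_mul]
    omega

lemma npow_one (x : List A) : npow x 1 = x := by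
  rw [npow, List.replicate_one]; simp

lemma cyc_small {x : List A} {L : ℕ} (h : L ≤ x.length) : cyc x L = x.take L := by
  have := cyc_eq_take (x := x) (L := L) (n := 1) (by omega)
  rw [this, npow_one]

/-- layers of an alive vector are alive within one copy -/
lemma layer_aliveT {W : List A} {f : A → ℕ} (hal : aliveC I W f) (i : ℕ) :
    aliveT I (fun a => min (W.count a) (f a - i * W.count a)) W := by
  obtain ⟨h1, h2⟩ := hal
  intro a b hab hI
  set g : A → ℕ := fun a => min (W.count a) (f a - i * W.count a) with hg
  set x := pf a b W with hxdef
  show ((x.take (g a + g b))).count a = g a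
  rcases eq_or_ne x [] with hx | hx
  · have hl := length_pf a b hab W
    rw [← hxdef, hx] at hl
    simp at hl
    have hza : W.count a = 0 := by omega
    have hfa : f a = 0 := h1 a hza
    have hga : g a = 0 := by simp [hg, hza]
    have hgb : g b = 0 := by simp [hg, (by omega : W.count b = 0), h1 b (by omega)]
    rw [hga, hgb, hx]
    simp
  · have hlen : x.length = W.count a + W.count b := length_pf a b hab W
    have hlpos : 0 < x.length := List.length_pos_iff.mpr hx
    have hca : x.count a = W.count a := count_pf_left a b W
    have hcb : x.count b = W.count b := count_pf_right a b W
    set L := f a + f b with hL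
    have hcycL : (cyc x L).count a = f a := h2 a b hab hI
    have hcycLb : (cyc x L).count b = f b := by
      have := cyc_pf_count_b hab hx L
      rw [← hxdef] at this
      omega
    by_cases hcase : L < i * x.length
    · -- both layers are 0
      obtain ⟨q, hq1, hq2, hq3, hq4⟩ := pairq hab hcycL hx
      have hqi : q < i := by
        have hq : q * x.length ≤ L := by
          rw [hlen, Nat.mul_add]
          omega
        by_contra hcon
        push_neg at hcon
        have : i * x.length ≤ q * x.length := Nat.mul_le_mul_right _ hcon
        omega
      have hfa : f a ≤ i * W.count a := by
        have : (q + 1) * W.count a ≤ i * W.count a := Nat.mul_le_mul_right _ (by omega)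
        omega
      have hfb : f b ≤ i * W.count b := by
        have : (q + 1) * W.count b ≤ i * W.count b := Nat.mul_le_mul_right _ (by omega)
        omega
      have hga : g a = 0 := by
        simp only [hg]
        rw [Nat.sub_eq_zero_of_le hfa]
        simp
      have hgb : g b = 0 := by
        simp only [hg]
        rw [Nat.sub_eq_zero_of_le hfb]
        simp
      rw [hga, hgb]
      simp
    · push_neg at hcase
      set L' := L - i * x.length with hL'
      have hdec : cyc x L = npow x i ++ cyc x L' := by
        rw [show L = i * x.length + L' by omega, cyc_decomp hx]
      have halpha : f a = i * W.count a + (cyc x L').count a := by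
        rw [← hcycL, hdec, List.count_append, count_npow, hca]
      have hbeta : f b = i * W.count b + (cyc x L').count b := by
        rw [← hcycLb, hdec, List.count_append, count_npow, hcb]
      by_cases hbig : x.length ≤ L'
      · -- full layer
        have hdec2 : cyc x L' = x ++ cyc x (L' - x.length) := by
          have h9 := cyc_shift hx (L' - x.length)
          rw [show x.length + (L' - x.length) = L' by omega] at h9
          exact h9
        have hga : g a = W.count a := by
          have : W.count a ≤ (cyc x L').count a := by
            rw [hdec2, List.count_append, hca]; omega
          simp only [hg]
          omega
        have hgb : g b = W.count b := by
          have : W.count b ≤ (cyc x L').count b := by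
            rw [hdec2, List.count_append, hcb]; omega
          simp only [hg]
          omega
        rw [hga, hgb, ← hlen, List.take_length, hca]
      · push_neg at hbig
        have hsa : (cyc x L').count a ≤ W.count a := by
          rw [← hca]; exact count_cyc_le (le_of_lt hbig) a
        have hsb : (cyc x L').count b ≤ W.count b := by
          rw [← hcb]; exact count_cyc_le (le_of_lt hbig) b
        have hga : g a = (cyc x L').count a := by simp only [hg]; omega
        have hgb : g b = (cyc x L').count b := by simp only [hg]; omega
        have hsum : (cyc x L').count a + (cyc x L').count b = L' := by
          have := cyc_pf_count_b hab hx L'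
          rw [← hxdef] at this
          exact this
        rw [hga, hgb, hsum, ← cyc_small (le_of_lt hbig)]

lemma sum_layers {c f : ℕ} {K : ℕ} (h : f ≤ K * c) :
    (Finset.range K).sum (fun i => min c (f - i * c)) = f := by
  induction K with
  | zero => simp at h; simp [h]
  | succ k ih =>
    rw [Finset.sum_range_succ]
    by_cases hcase : f ≤ k * c
    · rw [ih hcase, Nat.sub_eq_zero_of_le hcase]
      simp
    · push_neg at hcase
      have hterms : ∀ i ∈ Finset.range k, min c (f - i * c) = c := by
        intro i hi
        rw [Finset.mem_range] at hi
        have h1 : i * c + c = (i + 1) * c := by ring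
        have h2 : (i + 1) * c ≤ k * c := Nat.mul_le_mul_right _ (by omega)
        have : c ≤ f - i * c := by omega
        omega
      rw [Finset.sum_congr rfl hterms, Finset.sum_const, Finset.card_range, smul_eq_mul]
      have hlast : min c (f - k * c) = f - k * c := by
        have : f - k * c ≤ c := by
          rw [Nat.succ_mul] at h
          omega
        omega
      rw [hlast]
      rw [Nat.succ_mul] at h
      omega


end SCR

namespace SCR
open List
attribute [local instance] Classical.propDecidable

variable {A : Type} {I : A → A → Prop}

/-! ### the automaton -/

noncomputable def bump (f : A → ℕ) (a : A) : A → ℕ := Function.update f a (f a + 1)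

def allBig (W : List A) (f : A → ℕ) : Prop := ∀ b, W.count b ≤ f b

noncomputable def stepv (W : List A) (f : A → ℕ) (a : A) : A → ℕ :=
  if allBig W (bump f a) then fun b => bump f a b - W.count b else bump f a

noncomputable def stepb (W : List A) (f : A → ℕ) (a : A) (bit : Bool) : Bool :=
  if allBig W (bump f a) then true else bit

noncomputable def M0 (I : A → A → Prop) (W : List A) : NFA' ((A → ℕ) × Bool) A where
  Δ := fun p a q => aliveC I W (bump p.1 a) ∧ q = (stepv W p.1 a, stepb W p.1 a p.2)
  q0 := (fun _ => 0, false)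
  F := {p | p.1 = fun _ => 0}

lemma bump_same (f : A → ℕ) (a : A) : bump f a a = f a + 1 := Function.update_self _ _ _

lemma bump_ne (f : A → ℕ) {a b : A} (h : b ≠ a) : bump f a b = f b := Function.update_of_ne h _ _

/-- the run invariant -/
def Inv (I : A → A → Prop) (W : List A) (v : List A) (p : (A → ℕ) × Bool) : Prop :=
  aliveC I W p.1 ∧ ¬ allBig W p.1 ∧
  (∃ m, (∀ x, v.count x = p.1 x + m * W.count x) ∧ (p.2 = true ↔ 0 < m)) ∧
  (∀ x y, x ≠ y → ¬ I x y → pf x y v = cyc (pf x y W) (v.count x + v.count y))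

lemma inv_q0 {W : List A} (hWne : W ≠ []) : Inv I W [] (M0 I W).q0 := by
  have hq1 : (M0 I W).q0.1 = fun _ => 0 := rfl
  have hq2 : (M0 I W).q0.2 = false := rfl
  refine ⟨⟨fun a _ => by rw [hq1], fun a b _ _ => by rw [hq1]; simp [cyc_zero]⟩, ?_,
    ⟨0, fun x => by rw [hq1]; simp, by rw [hq2]; simp⟩, ?_⟩
  · intro hbig
    obtain ⟨e, he⟩ := List.exists_mem_of_ne_nil W hWne
    have hpos : 0 < W.count e := List.count_pos_iff.mpr he
    have h9 := hbig e
    rw [hq1] at h9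
    simp at h9
    omega
  · intro x y _ _
    simp [pf, cyc_zero]

lemma cyc_take_of_le {x : List A} {K L : ℕ} (h : K ≤ L) : (cyc x L).take K = cyc x K := by
  rcases eq_or_ne x [] with rfl | hx
  · rw [cyc_nil, cyc_nil]; simp
  · have hx1 : 1 ≤ x.length := by
      cases x with
      | nil => exact absurd rfl hx
      | cons _ _ => simp
    rw [cyc, List.take_take, min_eq_left h]
    exact (cyc_eq_take (le_trans (Nat.le_mul_of_pos_right K hx1)
      (Nat.mul_le_mul_right _ h))).symm

lemma cyc_next {x : List A} (hx : x ≠ []) {L : ℕ} {a : A}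
    (h : (cyc x (L + 1)).count a = (cyc x L).count a + 1) :
    cyc x (L + 1) = cyc x L ++ [a] := by
  have hlen1 : (cyc x (L + 1)).length = L + 1 := length_cyc hx _
  have hLlt : L < (cyc x (L + 1)).length := by omega
  have htake : (cyc x (L + 1)).take L = cyc x L := cyc_take_of_le (by omega)
  have hsplit : cyc x L ++ [(cyc x (L + 1)).get ⟨L, hLlt⟩] = cyc x (L + 1) := by
    conv_rhs => rw [← List.take_length (l := cyc x (L + 1)), hlen1]
    rw [← List.take_concat_get (l := cyc x (L + 1)) (i := L) hLlt, htake, List.concat_eq_append]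
    rfl
  set e := (cyc x (L + 1)).get ⟨L, hLlt⟩ with he
  rcases eq_or_ne e a with rfl | hea
  · exact hsplit.symm
  · exfalso
    rw [← hsplit, List.count_append] at h
    have : List.count a [e] = 0 := List.count_eq_zero.mpr (by simp [Ne.symm hea])
    omega

lemma pf_singleton_out {x y a : A} (h : ¬ (a = x ∨ a = y)) : pf x y [a] = [] := by
  rw [show ([a] : List A) = a :: [] from rfl, pf_cons_out h]
  rfl

lemma pf_singleton_in {x y a : A} (h : a = x ∨ a = y) : pf x y [a] = [a] := by
  rw [show ([a] : List A) = a :: [] from rfl, pf_cons_in h]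
  rfl

lemma inv_step {W : List A} {v : List A} {p q : (A → ℕ) × Bool} {a : A}
    (hi : Inv I W v p) (hd : (M0 I W).Δ p a q) : Inv I W (v ++ [a]) q := by
  obtain ⟨hal, hnorm, ⟨m, hcnt, hbit⟩, hpf⟩ := hi
  obtain ⟨hba, hq⟩ := hd
  have hcapos : 0 < W.count a := by
    by_contra h
    have hz : W.count a = 0 := by omega
    have := hba.1 a hz
    rw [bump_same] at this
    omega
  have hcount_ext : ∀ x, (v ++ [a]).count x = bump p.1 a x + m * W.count x := by
    intro x
    rcases eq_or_ne x a with rfl | hxa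
    · have h1 : (v ++ [x]).count x = v.count x + 1 := by simp
      rw [h1, bump_same, hcnt x]
      omega
    · rw [List.count_append, bump_ne _ hxa, hcnt x]
      have : List.count x [a] = 0 := List.count_eq_zero.mpr (by simp [hxa])
      omega
  have hpf' : ∀ x y, x ≠ y → ¬ I x y →
      pf x y (v ++ [a]) = cyc (pf x y W) ((v ++ [a]).count x + (v ++ [a]).count y) := by
    intro x y hxy hI
    by_cases hmem : a = x ∨ a = y
    · set x' := pf x y W with hx'def
      have hlenx' : x'.length = W.count x + W.count y := length_pf x y hxy W
      have hx' : x' ≠ [] := by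
        intro hnil
        rw [hnil] at hlenx'
        simp at hlenx'
        rcases hmem with rfl | rfl <;> omega
      set Ls := p.1 x + p.1 y with hLs
      have hLold : v.count x + v.count y = m * x'.length + Ls := by
        rw [hcnt x, hcnt y, hlenx']; ring
      have hLnew : (v ++ [a]).count x + (v ++ [a]).count y = m * x'.length + (Ls + 1) := by
        rw [hcount_ext x, hcount_ext y, hlenx']
        rcases hmem with rfl | rfl
        · rw [bump_same, bump_ne _ (Ne.symm hxy)]; ring
        · rw [bump_same, bump_ne _ hxy]; ring
      have hsmall_old : (cyc x' Ls).count x = p.1 x := hal.2 x y hxy hI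
      have hsmall_new : (cyc x' (Ls + 1)).count x = bump p.1 a x := by
        have h9 := hba.2 x y hxy hI
        have harg : bump p.1 a x + bump p.1 a y = Ls + 1 := by
          rcases hmem with rfl | rfl
          · rw [bump_same, bump_ne _ (Ne.symm hxy)]; omega
          · rw [bump_same, bump_ne _ hxy]; omega
        rwa [harg] at h9
      have hfull_old : (cyc x' (m * x'.length + Ls)).count x = m * W.count x + p.1 x := by
        rw [cyc_decomp hx', List.count_append, count_npow, hsmall_old]
        have : x'.count x = W.count x := count_pf_left x y W
        rw [this]
      have hfull_new : (cyc x' (m * x'.length + (Ls + 1))).count x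
          = m * W.count x + bump p.1 a x := by
        rw [cyc_decomp hx', List.count_append, count_npow, hsmall_new]
        have : x'.count x = W.count x := count_pf_left x y W
        rw [this]
      have hnext : cyc x' ((v.count x + v.count y) + 1) = cyc x' (v.count x + v.count y) ++ [a] := by
      -- count of a increases by one
        apply cyc_next hx'
        rcases hmem with rfl | rfl
        · rw [hLold, show m * x'.length + Ls + 1 = m * x'.length + (Ls + 1) from rfl,
            hfull_new, hfull_old, bump_same]
          omega
        · -- a = y: use the complement counts
          have hsum_old := cyc_pf_count_b hxy hx' (m * x'.length + Ls)
          have hsum_new := cyc_pf_count_b hxy hx' (m * x'.length + (Ls + 1))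
          rw [← hx'def] at hsum_old hsum_new
          rw [hfull_old] at hsum_old
          rw [hfull_new] at hsum_new
          rw [hLold, show m * x'.length + Ls + 1 = m * x'.length + (Ls + 1) from rfl]
          rw [bump_ne _ hxy] at hsum_new
          omega
      rw [pf_append, pf_singleton_in hmem, hpf x y hxy hI, hLnew,
        show m * x'.length + (Ls + 1) = (m * x'.length + Ls) + 1 by ring, ← hLold, hnext]
    · rw [pf_append, pf_singleton_out hmem, List.append_nil, hpf x y hxy hI]
      push_neg at hmem
      have h1 : (v ++ [a]).count x = v.count x := by
        rw [List.count_append]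
        have : List.count x [a] = 0 := List.count_eq_zero.mpr (by simp [Ne.symm hmem.1])
        omega
      have h2 : (v ++ [a]).count y = v.count y := by
        rw [List.count_append]
        have : List.count y [a] = 0 := List.count_eq_zero.mpr (by simp [Ne.symm hmem.2])
        omega
      rw [h1, h2]
  subst hq
  by_cases hbig : allBig W (bump p.1 a)
  · refine ⟨?_, ?_, ⟨m + 1, ?_, ?_⟩, hpf'⟩
    · show aliveC I W (stepv W p.1 a)
      rw [stepv, if_pos hbig]
      exact aliveC_sub hba hbig
    · show ¬ allBig W (stepv W p.1 a)
      rw [stepv, if_pos hbig]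
      intro hcon
      rw [allBig] at hnorm; push_neg at hnorm
      obtain ⟨a0, ha0⟩ := hnorm
      have h1 : bump p.1 a a0 ≤ p.1 a0 + 1 := by
        rcases eq_or_ne a0 a with rfl | hne
        · rw [bump_same]
        · rw [bump_ne _ hne]; omega
      have h2 : W.count a0 ≤ bump p.1 a a0 - W.count a0 := hcon a0
      omega
    · intro x
      have h1 := hcount_ext x
      have h2 := hbig x
      show (v ++ [a]).count x = stepv W p.1 a x + (m + 1) * W.count x
      rw [stepv, if_pos hbig]
      show (v ++ [a]).count x = bump p.1 a x - W.count x + (m + 1) * W.count x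
      rw [Nat.succ_mul]
      omega
    · show stepb W p.1 a p.2 = true ↔ 0 < m + 1
      rw [stepb, if_pos hbig]
      simp
  · refine ⟨?_, ?_, ⟨m, ?_, ?_⟩, hpf'⟩
    · show aliveC I W (stepv W p.1 a)
      rw [stepv, if_neg hbig]
      exact hba
    · show ¬ allBig W (stepv W p.1 a)
      rw [stepv, if_neg hbig]
      exact hbig
    · intro x
      show (v ++ [a]).count x = stepv W p.1 a x + m * W.count x
      rw [stepv, if_neg hbig]
      exact hcount_ext x
    · show stepb W p.1 a p.2 = true ↔ 0 < m
      rw [stepb, if_neg hbig]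
      exact hbit

lemma reaches_append {Q : Type} (M : NFA' Q A) (u v : List A) (p q : Q) :
    M.Reaches p (u ++ v) q ↔ ∃ r, M.Reaches p u r ∧ M.Reaches r v q := by
  induction u generalizing p with
  | nil =>
    simp only [List.nil_append]
    constructor
    · intro h; exact ⟨p, rfl, h⟩
    · rintro ⟨r, hr, h⟩
      have : p = r := hr
      rwa [this]
  | cons a u ih =>
    simp only [List.cons_append]
    constructor
    · rintro ⟨r0, h0, h1⟩
      obtain ⟨r, h2, h3⟩ := (ih r0).mp h1
      exact ⟨r, ⟨r0, h0, h2⟩, h3⟩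
    · rintro ⟨r, ⟨r0, h0, h2⟩, h3⟩
      exact ⟨r0, h0, (ih r0).mpr ⟨r, h2, h3⟩⟩

lemma inv_reach {W : List A} (hWne : W ≠ []) :
    ∀ v p, (M0 I W).Reaches (M0 I W).q0 v p → Inv I W v p := by
  intro v
  induction v using List.reverseRecOn with
  | nil =>
    intro p h
    have : (M0 I W).q0 = p := h
    rw [← this]
    exact inv_q0 hWne
  | append_singleton u a ih =>
    intro p h
    rw [reaches_append] at h
    obtain ⟨r, h1, h2⟩ := h
    obtain ⟨r', hd, h3⟩ := h2
    have : r' = p := h3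
    rw [← this]
    exact inv_step (ih r h1) hd

lemma bound_of_norm [Fintype A] {W : List A} {f : A → ℕ}
    (hsplit : ∀ B : Set A, (∃ a ∈ B, 0 < W.count a) → (∃ b, b ∉ B ∧ 0 < W.count b) →
      ∃ a b, a ∈ B ∧ b ∉ B ∧ 0 < W.count a ∧ 0 < W.count b ∧ a ≠ b ∧ ¬ I a b)
    (hal : aliveC I W f) (hnorm : ¬ allBig W f) :
    ∀ a, f a ≤ Fintype.card A * W.count a := by
  rcases Nat.eq_zero_or_pos (Fintype.card A) with hK | hK
  · intro a
    exact absurd (Fintype.card_pos_iff.mpr ⟨a⟩) (by omega)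
  set S : ℕ → Finset A := fun j =>
    Finset.univ.filter (fun a => 0 < W.count a → f a < (j + 1) * W.count a) with hS
  have hmono : ∀ j, S j ⊆ S (j + 1) := by
    intro j a ha
    rw [hS, Finset.mem_filter] at ha ⊢
    refine ⟨Finset.mem_univ a, fun hpos => ?_⟩
    show f a < (j + 2) * W.count a
    have := ha.2 hpos
    have h2 : (j + 1) * W.count a ≤ (j + 2) * W.count a := Nat.mul_le_mul_right _ (by omega)
    omega
  obtain ⟨a0, ha0⟩ : ∃ a0, f a0 < W.count a0 := by
    rw [allBig] at hnorm; push_neg at hnorm; exact hnorm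
  have ha0mem : ∀ j, a0 ∈ S j := by
    intro j
    rw [hS, Finset.mem_filter]
    refine ⟨Finset.mem_univ _, fun hpos => ?_⟩
    have : W.count a0 ≤ (j + 1) * W.count a0 := Nat.le_mul_of_pos_left _ (by omega)
    omega
  have hgrow : ∀ j, S j ≠ Finset.univ → (S j).card + 1 ≤ (S (j + 1)).card := by
    intro j hne
    obtain ⟨b0, hb0⟩ : ∃ b0, b0 ∉ S j := by
      by_contra hcon
      push_neg at hcon
      exact hne (Finset.eq_univ_of_forall hcon)
    have hb0pos : 0 < W.count b0 ∧ (j + 1) * W.count b0 ≤ f b0 := by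
      rw [hS, Finset.mem_filter] at hb0
      push_neg at hb0
      have := hb0 (Finset.mem_univ b0)
      omega
    obtain ⟨a, b, haB, hbB, hapos, hbpos, hab, hI⟩ :=
      hsplit {e | e ∈ S j} ⟨a0, ha0mem j, by
        have : 0 < W.count a0 := by omega
        exact this⟩ ⟨b0, hb0, hb0pos.1⟩
    -- b joins S (j+1)
    have hfa : f a < (j + 1) * W.count a := by
      have := (Finset.mem_filter.mp haB).2
      exact this hapos
    have hx : pf a b W ≠ [] := by
      intro hnil
      have := length_pf a b hab W
      rw [hnil] at this
      simp at this
      omega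
    obtain ⟨q, hq1, hq2, hq3, hq4⟩ := pairq hab (hal.2 a b hab hI) hx
    have hqj : q < j + 1 := by
      have h1 : q * W.count a < (j + 1) * W.count a := by omega
      exact Nat.lt_of_mul_lt_mul_right h1
    have hbmem : b ∈ S (j + 1) := by
      rw [hS, Finset.mem_filter]
      refine ⟨Finset.mem_univ _, fun _ => ?_⟩
      show f b < (j + 2) * W.count b
      have h2 : (q + 1) * W.count b ≤ (j + 1) * W.count b := Nat.mul_le_mul_right _ (by omega)
      have h3 : (j + 1) * W.count b < (j + 2) * W.count b :=
        (Nat.mul_lt_mul_right hbpos).mpr (by omega)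
      omega
    have hss : S j ⊂ S (j + 1) := by
      refine ⟨hmono j, fun hsub => hbB (hsub hbmem)⟩
    have := Finset.card_lt_card hss
    omega
  have hcard : ∀ j, S j = Finset.univ ∨ j + 1 ≤ (S j).card := by
    intro j
    induction j with
    | zero =>
      by_cases h : S 0 = Finset.univ
      · exact Or.inl h
      · right
        have : a0 ∈ S 0 := ha0mem 0
        exact Finset.card_pos.mpr ⟨a0, this⟩
    | succ k ih =>
      by_cases h : S k = Finset.univ
      · left
        apply Finset.eq_univ_of_forall
        intro a
        exact hmono k (h ▸ Finset.mem_univ a)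
      · rcases ih with h' | h'
        · exact absurd h' h
        · right
          have := hgrow k h
          omega
  have hfinal : S (Fintype.card A - 1) = Finset.univ := by
    rcases hcard (Fintype.card A - 1) with h | h
    · exact h
    · apply Finset.eq_univ_of_card
      have h1 : (S (Fintype.card A - 1)).card ≤ Fintype.card A := Finset.card_le_univ _
      omega
  intro a
  have ha : a ∈ S (Fintype.card A - 1) := hfinal ▸ Finset.mem_univ a
  rw [hS, Finset.mem_filter] at ha
  rcases Nat.eq_zero_or_pos (W.count a) with hz | hpos
  · rw [hal.1 a hz]
    omega
  · have := ha.2 hpos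
    have h2 : (Fintype.card A - 1 + 1) = Fintype.card A := by omega
    rw [h2] at this
    omega

lemma bump_comm {a b : A} (hab : a ≠ b) (f : A → ℕ) :
    bump (bump f a) b = bump (bump f b) a := by
  funext x
  by_cases hxa : x = a
  · rw [hxa, bump_ne _ hab, bump_same, bump_same, bump_ne _ hab]
  · by_cases hxb : x = b
    · rw [hxb, bump_same, bump_ne _ (Ne.symm hab), bump_ne _ (Ne.symm hab), bump_same]
    · rw [bump_ne _ hxb, bump_ne _ hxa, bump_ne _ hxa, bump_ne _ hxb]

lemma stepv_eq (W : List A) (f : A → ℕ) (a : A) :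
    stepv W f a = if allBig W (bump f a) then (fun b => bump f a b - W.count b) else bump f a :=
  rfl

lemma stepb_eq (W : List A) (f : A → ℕ) (a : A) (bit : Bool) :
    stepb W f a bit = if allBig W (bump f a) then true else bit := rfl

lemma diamond_core (hirr : ∀ a, ¬ I a a) (hsym : ∀ a b, I a b → I b a)
    {W : List A} {p q r : (A → ℕ) × Bool} {a b : A} (hIab : I a b)
    (hpal : aliveC I W p.1) (hpnorm : ¬ allBig W p.1)
    (hd1 : (M0 I W).Δ p a q) (hd2 : (M0 I W).Δ q b r) :
    (M0 I W).Δ p b (stepv W p.1 b, stepb W p.1 b p.2) ∧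
    (M0 I W).Δ (stepv W p.1 b, stepb W p.1 b p.2) a r := by
  have hab : a ≠ b := by
    rintro rfl
    exact hirr a hIab
  set f := p.1 with hf
  obtain ⟨hba, hq⟩ := hd1
  obtain ⟨hbb, hr⟩ := hd2
  set g2 : A → ℕ := bump (bump f a) b with hg2
  obtain ⟨a0, ha0⟩ : ∃ a0, f a0 < W.count a0 := by
    rw [allBig] at hpnorm; push_neg at hpnorm; exact hpnorm
  have hg2a0 : g2 a0 ≤ f a0 + 1 := by
    by_cases h1 : a0 = b
    · rw [hg2, h1, bump_same, bump_ne _ (Ne.symm hab)]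
    · rw [hg2, bump_ne _ h1]
      by_cases h2 : a0 = a
      · rw [h2, bump_same]
      · rw [bump_ne _ h2]
        omega
  have hbfa : ∀ e, bump f a e ≤ g2 e := by
    intro e
    rw [hg2]
    by_cases he : e = b
    · rw [he, bump_same]; omega
    · rw [bump_ne _ he]
  have hbfb : ∀ e, bump f b e ≤ g2 e := by
    intro e
    rw [hg2, bump_comm hab]
    by_cases he : e = a
    · rw [he, bump_same]; omega
    · rw [bump_ne _ he]
  have hq1v : q.1 = stepv W f a := by rw [hq]
  have hq2v : q.2 = stepb W f a p.2 := by rw [hq]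
  -- alive of g2
  have halg2 : aliveC I W g2 := by
    by_cases hbig1 : allBig W (bump f a)
    · have hqv : q.1 = fun x => bump f a x - W.count x := by
        rw [hq1v, stepv_eq, if_pos hbig1]
      have heq : (fun x => bump q.1 b x + W.count x) = g2 := by
        funext x
        rw [hqv]
        by_cases hxb : x = b
        · rw [hxb, bump_same, hg2, bump_same]
          have := hbig1 b
          omega
        · rw [bump_ne _ hxb, hg2, bump_ne _ hxb]
          have := hbig1 x
          omega
      have := aliveC_addc hbb
      rwa [heq] at this
    · have hqv : q.1 = bump f a := by rw [hq1v, stepv_eq, if_neg hbig1]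
      rwa [hqv] at hbb
  -- alive of bump f b
  have halfb : aliveC I W (bump f b) := by
    constructor
    · intro e he
      by_cases heb : e = b
      · exfalso
        have h0 := halg2.1 e he
        rw [hg2, heb, bump_same] at h0
        omega
      · rw [bump_ne _ heb]
        exact hpal.1 e he
    · intro x y hxy hI
      by_cases hbmem : b = x ∨ b = y
      · have hamem : ¬ (a = x ∨ a = y) := by
          rintro (rfl | rfl)
          · rcases hbmem with h | h
            · exact hab h.symm
            · exact hI (h ▸ hIab)
          · rcases hbmem with h | h
            · exact hI (h ▸ (fun hh => hsym _ _ hh) hIab)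
            · exact hab h.symm
        have hx : bump f b x = g2 x := by
          by_cases hxb : x = b
          · rw [hxb, bump_same, hg2, bump_same, bump_ne _ (Ne.symm hab)]
          · rw [bump_ne _ hxb, hg2, bump_ne _ hxb,
              bump_ne _ (fun h => hamem (Or.inl h.symm))]
        have hy : bump f b y = g2 y := by
          by_cases hyb : y = b
          · rw [hyb, bump_same, hg2, bump_same, bump_ne _ (Ne.symm hab)]
          · rw [bump_ne _ hyb, hg2, bump_ne _ hyb,
              bump_ne _ (fun h => hamem (Or.inr h.symm))]
        rw [hx, hy]
        exact halg2.2 x y hxy hI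
      · push_neg at hbmem
        rw [bump_ne _ (fun h => hbmem.1 h.symm), bump_ne _ (fun h => hbmem.2 h.symm)]
        exact hpal.2 x y hxy hI
  have hnotbb : ¬ (allBig W (bump f a) ∧ allBig W (bump f b)) := by
    rintro ⟨h1, h2⟩
    have e1 := h1 a0
    have e2 := h2 a0
    by_cases hxa : a0 = a
    · rw [hxa] at e2 ha0
      rw [bump_ne _ hab] at e2
      omega
    · rw [bump_ne _ hxa] at e1
      omega
  refine ⟨⟨halfb, rfl⟩, ?_, ?_⟩
  · -- alive of bump (stepv f b) a
    show aliveC I W (bump (stepv W f b, stepb W f b p.2).1 a)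
    by_cases hbig2 : allBig W (bump f b)
    · have heq : bump (stepv W f b, stepb W f b p.2).1 a = fun x => g2 x - W.count x := by
        show bump (stepv W f b) a = _
        funext x
        rw [stepv_eq, if_pos hbig2]
        by_cases hxa : x = a
        · rw [hxa, bump_same]
          have h9 : g2 a = bump f b a + 1 := by rw [hg2, bump_comm hab, bump_same]
          have := hbig2 a
          omega
        · rw [bump_ne _ hxa]
          have h9 : g2 x = bump f b x := by rw [hg2, bump_comm hab, bump_ne _ hxa]
          omega
      rw [heq]
      apply aliveC_sub halg2
      intro e
      have h1 := hbig2 e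
      have h2 := hbfb e
      omega
    · have heq : bump (stepv W f b, stepb W f b p.2).1 a = g2 := by
        show bump (stepv W f b) a = _
        rw [stepv_eq, if_neg hbig2, hg2, bump_comm hab]
      rw [heq]
      exact halg2
  · -- resulting states agree
    rw [hr, hq]
    show (stepv W (stepv W f a) b, stepb W (stepv W f a) b (stepb W f a p.2))
        = (stepv W (stepv W f b) a, stepb W (stepv W f b) a (stepb W f b p.2))
    by_cases hbig1 : allBig W (bump f a)
    · have hbig2 : ¬ allBig W (bump f b) := fun h => hnotbb ⟨hbig1, h⟩
      have hq1 : stepv W f a = fun x => bump f a x - W.count x := by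
        rw [stepv_eq, if_pos hbig1]
      have hbq : bump (stepv W f a) b = fun x => g2 x - W.count x := by
        funext x
        rw [hq1]
        by_cases hxb : x = b
        · rw [hxb, bump_same]
          have h9 : g2 b = bump f a b + 1 := by rw [hg2, bump_same]
          have := hbig1 b
          omega
        · rw [bump_ne _ hxb]
          have h9 : g2 x = bump f a x := by rw [hg2, bump_ne _ hxb]
          omega
      have hnb : ¬ allBig W (bump (stepv W f a) b) := by
        rw [hbq]
        intro hcon
        have h9 : W.count a0 ≤ g2 a0 - W.count a0 := hcon a0
        omega
      have hq2 : stepv W f b = bump f b := by rw [stepv_eq, if_neg hbig2]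
      have hba2 : bump (stepv W f b) a = g2 := by rw [hq2, hg2, bump_comm hab]
      have hbig2' : allBig W (bump (stepv W f b) a) := by
        rw [hba2]
        intro e
        have h1 := hbig1 e
        have h2 := hbfa e
        omega
      have hv1 : stepv W (stepv W f a) b = fun x => g2 x - W.count x := by
        rw [stepv_eq W (stepv W f a) b, if_neg hnb, hbq]
      have hv2 : stepv W (stepv W f b) a = fun x => g2 x - W.count x := by
        rw [stepv_eq W (stepv W f b) a, if_pos hbig2', hba2]
      have hb1 : stepb W (stepv W f a) b (stepb W f a p.2) = true := by
        rw [stepb_eq W (stepv W f a) b, if_neg hnb, stepb_eq, if_pos hbig1]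
      have hb2 : stepb W (stepv W f b) a (stepb W f b p.2) = true := by
        rw [stepb_eq W (stepv W f b) a, if_pos hbig2']
      rw [hv1, hv2, hb1, hb2]
    · by_cases hbig2 : allBig W (bump f b)
      · have hq1 : stepv W f a = bump f a := by rw [stepv_eq, if_neg hbig1]
        have hbq : bump (stepv W f a) b = g2 := by rw [hq1, hg2]
        have hbig1' : allBig W (bump (stepv W f a) b) := by
          rw [hbq]
          intro e
          have h1 := hbig2 e
          have h2 := hbfb e
          omega
        have hq2 : stepv W f b = fun x => bump f b x - W.count x := by
          rw [stepv_eq, if_pos hbig2]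
        have hba2 : bump (stepv W f b) a = fun x => g2 x - W.count x := by
          funext x
          rw [hq2]
          by_cases hxa : x = a
          · rw [hxa, bump_same]
            have h9 : g2 a = bump f b a + 1 := by rw [hg2, bump_comm hab, bump_same]
            have := hbig2 a
            omega
          · rw [bump_ne _ hxa]
            have h9 : g2 x = bump f b x := by rw [hg2, bump_comm hab, bump_ne _ hxa]
            omega
        have hnb : ¬ allBig W (bump (stepv W f b) a) := by
          rw [hba2]
          intro hcon
          have h9 : W.count a0 ≤ g2 a0 - W.count a0 := hcon a0
          omega
        have hv1 : stepv W (stepv W f a) b = fun x => g2 x - W.count x := by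
          rw [stepv_eq W (stepv W f a) b, if_pos hbig1', hbq]
        have hv2 : stepv W (stepv W f b) a = fun x => g2 x - W.count x := by
          rw [stepv_eq W (stepv W f b) a, if_neg hnb, hba2]
        have hb1 : stepb W (stepv W f a) b (stepb W f a p.2) = true := by
          rw [stepb_eq W (stepv W f a) b, if_pos hbig1']
        have hb2 : stepb W (stepv W f b) a (stepb W f b p.2) = true := by
          rw [stepb_eq W (stepv W f b) a, if_neg hnb, stepb_eq, if_pos hbig2]
        rw [hv1, hv2, hb1, hb2]
      · have hq1 : stepv W f a = bump f a := by rw [stepv_eq, if_neg hbig1]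
        have hq2 : stepv W f b = bump f b := by rw [stepv_eq, if_neg hbig2]
        have hbq : bump (stepv W f a) b = g2 := by rw [hq1, hg2]
        have hba2 : bump (stepv W f b) a = g2 := by rw [hq2, hg2, bump_comm hab]
        have hv : stepv W (stepv W f a) b = stepv W (stepv W f b) a := by
          rw [stepv_eq W (stepv W f a) b, stepv_eq W (stepv W f b) a, hbq, hba2]
        have hbit : stepb W (stepv W f a) b (stepb W f a p.2)
            = stepb W (stepv W f b) a (stepb W f b p.2) := by
          rw [stepb_eq W (stepv W f a) b, stepb_eq W (stepv W f b) a, hbq, hba2,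
            stepb_eq, if_neg hbig1, stepb_eq, if_neg hbig2]
        rw [hv, hbit]

lemma pf_npow (a b : A) (W : List A) (n : ℕ) : pf a b (npow W n) = npow (pf a b W) n := by
  induction n with
  | zero => rfl
  | succ k ih => rw [npow_succ, pf_append, ih, npow_succ]

lemma pf_self (a : A) (l : List A) : pf a a l = List.replicate (l.count a) a := by
  induction l with
  | nil => rfl
  | cons e t ih =>
    by_cases he : e = a
    · rw [pf_cons_in (Or.inl he), ih, he, List.count_cons_self, List.replicate_succ]
    · rw [pf_cons_out (by tauto), ih, List.count_cons_of_ne he]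

/-- accepted words represent powers -/
lemma accept_sound (hsym : ∀ a b, I a b → I b a) {W : List A} (hWne : W ≠ [])
    {v : List A} {p : (A → ℕ) × Bool}
    (h : (M0 I W).Reaches (M0 I W).q0 v p) (hF : p.1 = fun _ => 0) :
    ∃ n, tc I v (npow W n) := by
  obtain ⟨hal, hnorm, ⟨m, hcnt, hbit⟩, hpf⟩ := inv_reach hWne v p h
  refine ⟨m, cp2 hsym v (npow W m) ?_ ?_⟩
  · intro e
    rw [count_npow]
    have := hcnt e
    rw [hF] at this
    simpa using this
  · intro a b hab hI
    have h1 := hpf a b hab hI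
    have h2 : v.count a + v.count b = m * (pf a b W).length := by
      have ha := hcnt a
      have hb := hcnt b
      rw [hF] at ha hb
      simp only at ha hb
      rw [length_pf a b hab W, ha, hb]
      ring
    rw [h1, h2, pf_npow]
    rcases eq_or_ne (pf a b W) [] with hx | hx
    · rw [hx, npow_nil, cyc_nil]
    · rw [cyc_full hx]

/-- count vectors of prefixes of a word equivalent to a power are alive -/
lemma counts_alive_of_prefix (hsym : ∀ a b, I a b → I b a) {W v : List A} {n : ℕ}
    (hv : tc I v (npow W n)) {u : List A} (hu : u <+: v) :
    aliveC I W (fun a => u.count a) := by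
  constructor
  · intro a ha
    show u.count a = 0
    have h1 : v.count a = 0 := by
      rw [tc_count hv a, count_npow, ha]
      ring
    have h2 : u.count a ≤ v.count a := hu.sublist.count_le a
    omega
  · intro a b hab hI
    have hWv : pf a b v = npow (pf a b W) n := by
      rw [tc_pf hv hI (fun h => hI (hsym _ _ h)), pf_npow]
    have hpre : pf a b u <+: pf a b v := hu.filter _
    have hlen : (pf a b u).length = u.count a + u.count b := length_pf a b hab u
    have htake : pf a b u = (npow (pf a b W) n).take (u.count a + u.count b) := by
      rw [← hlen, ← hWv]
      exact List.prefix_iff_eq_take.mp hpre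
    have hle : u.count a + u.count b ≤ n * (pf a b W).length := by
      have h1 := hpre.length_le
      rw [hWv, length_npow, hlen] at h1
      exact h1
    have hcyc : cyc (pf a b W) (u.count a + u.count b) = pf a b u := by
      rw [cyc_eq_take hle, htake]
    rw [hcyc, count_pf_left]

/-- every word equivalent to a power is accepted -/
lemma accept_complete (hsym : ∀ a b, I a b → I b a) {W : List A} (hWne : W ≠ [])
    {v : List A} {n : ℕ} (hv : tc I v (npow W n)) :
    ∃ p, (M0 I W).Reaches (M0 I W).q0 v p ∧ p.1 = fun _ => 0 := by
  -- build the run over all prefixes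
  have hrun : ∀ u, u <+: v → ∃ p, (M0 I W).Reaches (M0 I W).q0 u p := by
    intro u
    induction u using List.reverseRecOn with
    | nil => intro _; exact ⟨(M0 I W).q0, rfl⟩
    | append_singleton u a ih =>
      intro hu
      obtain ⟨p, hp⟩ := ih ((List.prefix_append u [a]).trans hu)
      obtain ⟨hal, hnorm, ⟨m, hcnt, hbit⟩, hpf⟩ := inv_reach hWne u p hp
      have halu : aliveC I W (fun x => (u ++ [a]).count x) := counts_alive_of_prefix hsym hv hu
      have heq : (fun x => bump p.1 a x + m * W.count x) = fun x => (u ++ [a]).count x := by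
        funext x
        rcases eq_or_ne x a with rfl | hxa
        · rw [bump_same, List.count_append]
          have h9 : List.count x [x] = 1 := by simp
          rw [h9, hcnt x]
          omega
        · rw [bump_ne _ hxa, List.count_append]
          have h9 : List.count x [a] = 0 := List.count_eq_zero.mpr (by simp [hxa])
          rw [h9, hcnt x]
          omega
      have hba : aliveC I W (bump p.1 a) := by
        apply aliveC_down m
        rw [heq]
        exact halu
      refine ⟨(stepv W p.1 a, stepb W p.1 a p.2), ?_⟩
      rw [reaches_append]
      exact ⟨p, hp, ⟨(stepv W p.1 a, stepb W p.1 a p.2), ⟨hba, rfl⟩, rfl⟩⟩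
  obtain ⟨p, hp⟩ := hrun v (List.prefix_refl v)
  refine ⟨p, hp, ?_⟩
  obtain ⟨hal, hnorm, ⟨m, hcnt, hbit⟩, hpf⟩ := inv_reach hWne v p hp
  have hvc : ∀ x, v.count x = n * W.count x := by
    intro x
    rw [tc_count hv x, count_npow]
  -- m = n and p.1 = 0
  obtain ⟨e, he⟩ := List.exists_mem_of_ne_nil W hWne
  have hepos : 0 < W.count e := List.count_pos_iff.mpr he
  have hmn : m ≤ n := by
    have h1 := hcnt e
    have h2 := hvc e
    by_contra hcon
    push_neg at hcon
    have : n * W.count e < m * W.count e := by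
      exact Nat.mul_lt_mul_right hepos |>.mpr hcon
    omega
  have hmn' : m = n := by
    by_contra hcon
    have hlt : m < n := by omega
    apply hnorm
    intro x
    have h1 := hcnt x
    have h2 := hvc x
    have h3 : p.1 x = (n - m) * W.count x := by
      have : m * W.count x + (n - m) * W.count x = n * W.count x := by
        rw [← Nat.add_mul]
        congr 1
        omega
      omega
    rw [h3]
    have : 1 * W.count x ≤ (n - m) * W.count x := Nat.mul_le_mul_right _ (by omega)
    omega
  funext x
  have h1 := hcnt x
  have h2 := hvc x
  rw [hmn'] at h1
  omega

/-! ### restriction to reachable states -/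

noncomputable def Msub (I : A → A → Prop) (W : List A) :
    NFA' {p : (A → ℕ) × Bool // ∃ v, (M0 I W).Reaches (M0 I W).q0 v p} A where
  Δ := fun p a q => (M0 I W).Δ p.1 a q.1
  q0 := ⟨(M0 I W).q0, [], rfl⟩
  F := {p | p.1.1 = fun _ => 0}

lemma sub_reach_down {W : List A} :
    ∀ (v : List A) (p q), (Msub I W).Reaches p v q → (M0 I W).Reaches p.1 v q.1 := by
  intro v
  induction v with
  | nil =>
    intro p q h
    have : p = q := h
    rw [this]
    rfl
  | cons a u ih =>
    rintro p q ⟨r, hd, hr⟩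
    exact ⟨r.1, hd, ih r q hr⟩

lemma sub_reach_up {W : List A} :
    ∀ (v : List A) (p q) (hP : ∃ v0, (M0 I W).Reaches (M0 I W).q0 v0 p)
      (hQ : ∃ v0, (M0 I W).Reaches (M0 I W).q0 v0 q),
      (M0 I W).Reaches p v q → (Msub I W).Reaches ⟨p, hP⟩ v ⟨q, hQ⟩ := by
  intro v
  induction v with
  | nil =>
    intro p q hP hQ h
    have : p = q := h
    subst this
    rfl
  | cons a u ih =>
    rintro p q hP hQ ⟨r, hd, hr⟩
    have hR : ∃ v0, (M0 I W).Reaches (M0 I W).q0 v0 r := by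
      obtain ⟨v0, hv0⟩ := hP
      exact ⟨v0 ++ [a], (reaches_append _ _ _ _ _).mpr ⟨p, hv0, ⟨r, hd, rfl⟩⟩⟩
    exact ⟨⟨r, hR⟩, hd, ih r q hR hQ hr⟩

/-- counting letters in traces -/
noncomputable def tcount (I : A → A → Prop) (a : A) (t : Trace A I) : ℕ :=
  Con.liftOn t (fun u => u.toList.count a) (fun u v h => (tcF_perm h).count_eq a)

lemma tcount_mk (a : A) (u : List A) :
    tcount I a (trc A I (FreeMonoid.ofList u)) = u.count a := rfl

lemma pow_ofList (w : FreeMonoid A) (n : ℕ) :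
    w ^ n = FreeMonoid.ofList (npow (FreeMonoid.toList w) n) := by
  induction n with
  | zero => rfl
  | succ k ih => rw [pow_succ', ih, npow_succ]; rfl


end SCR

open SCR in
/-- For a nonempty connected trace u, the closure [u*]_I is accepted by a
memorizing I-diamond NFA with at most 2·ρ(u)^|A| states. -/
theorem star_closure_regular (A : Type) [Fintype A] (I : A → A → Prop)
    (hirr : ∀ a, ¬ I a a) (hsym : ∀ a b, I a b → I b a)
    (w : FreeMonoid A) (hne : trc A I w ≠ 1)
    (hconn : TraceConnected A I (trc A I w)) :
    ∃ (Q : Type) (_ : Fintype Q) (M : NFA' Q A),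
      IDiamond I M ∧ Memorizing M ∧
      Fintype.card Q ≤ 2 * (tracePrefixes A I (trc A I w)).ncard ^ (Fintype.card A) ∧
      M.lang = {v : List A | ∃ n : ℕ, traceCon A I (FreeMonoid.ofList v) (w ^ n)} := by

  classical
  set W : List A := FreeMonoid.toList w with hWdef
  have htrc_eq : ∀ u z : List A,
      trc A I (FreeMonoid.ofList u) = trc A I (FreeMonoid.ofList z) ↔ SCR.tc I u z :=
    fun u z => Con.eq _
  have hone : ∀ u : List A, trc A I (FreeMonoid.ofList u) = 1 → u = [] := by
    intro u h
    have h2 : SCR.tc I u [] := by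
      apply (htrc_eq u []).mp
      rw [h]
      rfl
    have h3 := SCR.tc_length h2
    simpa using List.length_eq_zero_iff.mp (by simpa using h3)
  have hWne : W ≠ [] := by
    intro h
    apply hne
    show trc A I (FreeMonoid.ofList W) = 1
    rw [h]
    rfl
  -- the splitting property derived from connectedness
  have hsplit : ∀ B : Set A, (∃ a ∈ B, 0 < W.count a) → (∃ b, b ∉ B ∧ 0 < W.count b) →
      ∃ a b, a ∈ B ∧ b ∉ B ∧ 0 < W.count a ∧ 0 < W.count b ∧ a ≠ b ∧ ¬ I a b := by
    rintro B ⟨a1, ha1B, ha1⟩ ⟨b1, hb1B, hb1⟩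
    by_contra hcon
    push_neg at hcon
    set l : List (A × Bool) := W.map (fun e => (e, if e ∈ B then true else false)) with hl
    have hmapfst : l.map Prod.fst = W := by
      rw [hl, List.map_map]
      exact List.map_id' W
    have hpw : l.Pairwise (fun p q : A × Bool => p.2 = false → q.2 = true → I p.1 q.1) := by
      apply List.pairwise_of_forall_mem_list
      intro p hp q hq hpf hqt
      rw [hl] at hp hq
      obtain ⟨e1, he1, rfl⟩ := List.mem_map.mp hp
      obtain ⟨e2, he2, rfl⟩ := List.mem_map.mp hq
      simp only at hpf hqt
      have h1 : e1 ∉ B := by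
        intro h
        rw [if_pos h] at hpf
        exact Bool.true_eq_false.mp hpf
      have h2 : e2 ∈ B := by
        by_contra h
        rw [if_neg h] at hqt
        exact Bool.false_ne_true hqt
      have hc1 : 0 < W.count e1 := List.count_pos_iff.mpr he1
      have hc2 : 0 < W.count e2 := List.count_pos_iff.mpr he2
      have hne12 : e2 ≠ e1 := fun h => h1 (h ▸ h2)
      exact hsym _ _ (hcon e2 e1 h2 h1 hc2 hc1 hne12)
    set kept : List A := (l.filter (fun p => p.2)).map Prod.fst with hkept
    set dropped : List A := (l.filter (fun p => !p.2)).map Prod.fst with hdropped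
    have htc : SCR.tc I W (kept ++ dropped) := by
      have := SCR.mask_split (I := I) l hpw
      rwa [hmapfst] at this
    have hkeptB : ∀ e ∈ kept, e ∈ B ∧ e ∈ W := by
      intro e he
      rw [hkept] at he
      obtain ⟨pq, hpq, rfl⟩ := List.mem_map.mp he
      have h1 := List.mem_of_mem_filter hpq
      have h2 := List.of_mem_filter hpq
      rw [hl] at h1
      obtain ⟨e1, he1, rfl⟩ := List.mem_map.mp h1
      simp only at h2 ⊢
      constructor
      · by_contra h
        rw [if_neg h] at h2
        exact Bool.false_ne_true h2
      · exact he1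
    have hdropB : ∀ e ∈ dropped, e ∉ B ∧ e ∈ W := by
      intro e he
      rw [hdropped] at he
      obtain ⟨pq, hpq, rfl⟩ := List.mem_map.mp he
      have h1 := List.mem_of_mem_filter hpq
      have h2 := List.of_mem_filter hpq
      rw [hl] at h1
      obtain ⟨e1, he1, rfl⟩ := List.mem_map.mp h1
      simp only [Bool.not_eq_true'] at h2 ⊢
      constructor
      · intro h
        rw [if_pos h] at h2
        exact Bool.true_eq_false.mp h2
      · exact he1
    have hfact : trc A I w = trc A I (FreeMonoid.ofList kept) * trc A I (FreeMonoid.ofList dropped) := by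
      have h9 : trc A I (FreeMonoid.ofList W) = trc A I (FreeMonoid.ofList (kept ++ dropped)) :=
        (htrc_eq _ _).mpr htc
      have h8 : FreeMonoid.ofList (kept ++ dropped)
          = FreeMonoid.ofList kept * FreeMonoid.ofList dropped := rfl
      show trc A I (FreeMonoid.ofList W) = _
      rw [h9, h8]
      exact map_mul _ _ _
    have hindep : TraceIndep A I (trc A I (FreeMonoid.ofList kept)) (trc A I (FreeMonoid.ofList dropped)) := by
      intro w1 w2 h1 h2 a ha b hb
      have ht1 : SCR.tc I kept w1.toList := by
        apply (htrc_eq kept w1.toList).mp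
        exact h1.symm ▸ rfl
      have ht2 : SCR.tc I dropped w2.toList := by
        apply (htrc_eq dropped w2.toList).mp
        exact h2.symm ▸ rfl
      have haK : a ∈ kept := (SCR.tc_mem ht1 a).mpr ha
      have hbD : b ∈ dropped := (SCR.tc_mem ht2 b).mpr hb
      obtain ⟨haB, haW⟩ := hkeptB a haK
      obtain ⟨hbB, hbW⟩ := hdropB b hbD
      exact hcon a b haB hbB (List.count_pos_iff.mpr haW) (List.count_pos_iff.mpr hbW)
        (fun h => hbB (h ▸ haB))
    rcases hconn _ _ hfact hindep with h | h
    · have := hone kept h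
      have ha1K : a1 ∈ kept := by
        rw [hkept, hl]
        apply List.mem_map.mpr
        refine ⟨(a1, true), ?_, rfl⟩
        apply List.mem_filter.mpr
        constructor
        · apply List.mem_map.mpr
          refine ⟨a1, List.count_pos_iff.mp ha1, ?_⟩
          rw [if_pos ha1B]
        · rfl
      rw [this] at ha1K
      exact absurd ha1K (List.not_mem_nil (a := a1))
    · have := hone dropped h
      have hb1D : b1 ∈ dropped := by
        rw [hdropped, hl]
        apply List.mem_map.mpr
        refine ⟨(b1, false), ?_, rfl⟩
        apply List.mem_filter.mpr
        constructor
        · apply List.mem_map.mpr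
          refine ⟨b1, List.count_pos_iff.mp hb1, ?_⟩
          rw [if_neg hb1B]
        · rfl
      rw [this] at hb1D
      exact absurd hb1D (List.not_mem_nil (a := b1))
  -- invariants of reachable states
  have hReachInv : ∀ (p : (A → ℕ) × Bool), (∃ v, (SCR.M0 I W).Reaches (SCR.M0 I W).q0 v p) →
      SCR.aliveC I W p.1 ∧ ¬ SCR.allBig W p.1 ∧ ∀ a, p.1 a ≤ Fintype.card A * W.count a := by
    rintro p ⟨v, hv⟩
    obtain ⟨hal, hnorm, -, -⟩ := SCR.inv_reach hWne v p hv
    exact ⟨hal, hnorm, SCR.bound_of_norm hsplit hal hnorm⟩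
  set PrefSet := tracePrefixes A I (trc A I w) with hPS
  have hmem_of_split : ∀ v z : List A, SCR.tc I W (v ++ z) →
      trc A I (FreeMonoid.ofList v) ∈ PrefSet := by
    intro v z htc
    refine ⟨trc A I (FreeMonoid.ofList z), ?_⟩
    have h9 : trc A I (FreeMonoid.ofList W) = trc A I (FreeMonoid.ofList (v ++ z)) :=
      (htrc_eq _ _).mpr htc
    show trc A I (FreeMonoid.ofList W) = _
    rw [h9]
    exact map_mul _ _ _
  have hrep : ∀ p ∈ PrefSet, ∃ u z : List A,
      p = trc A I (FreeMonoid.ofList u) ∧ SCR.tc I W (u ++ z) := by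
    rintro p ⟨s, hs⟩
    obtain ⟨u, hu⟩ := Con.mk'_surjective (c := traceCon A I) p
    obtain ⟨z, hz⟩ := Con.mk'_surjective (c := traceCon A I) s
    refine ⟨u.toList, z.toList, by rw [← hu]; rfl, ?_⟩
    apply (htrc_eq _ _).mp
    show trc A I (FreeMonoid.ofList W) = _
    have h8 : FreeMonoid.ofList (u.toList ++ z.toList) = u * z := rfl
    rw [h8]
    show trc A I (FreeMonoid.ofList W) = (traceCon A I).mk' (u * z)
    rw [map_mul, hu, hz]
    exact hs
  have hcount_le : ∀ p ∈ PrefSet, ∀ a, SCR.tcount I a p ≤ W.length := by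
    intro p hp a
    obtain ⟨u, z, hpu, htc⟩ := hrep p hp
    rw [hpu, SCR.tcount_mk]
    have h1 := SCR.tc_length htc
    have h2 : u.count a ≤ u.length := List.count_le_length (a := a) (l := u)
    rw [List.length_append] at h1
    omega
  have hpref_inj : ∀ p1 ∈ PrefSet, ∀ p2 ∈ PrefSet,
      (∀ a, SCR.tcount I a p1 = SCR.tcount I a p2) → p1 = p2 := by
    intro p1 hp1 p2 hp2 hc
    obtain ⟨u1, z1, hpu1, htc1⟩ := hrep p1 hp1
    obtain ⟨u2, z2, hpu2, htc2⟩ := hrep p2 hp2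
    have hcnt : ∀ a, u1.count a = u2.count a := by
      intro a
      have := hc a
      rw [hpu1, hpu2, SCR.tcount_mk, SCR.tcount_mk] at this
      exact this
    have hpf : ∀ a b, a ≠ b → ¬ I a b → SCR.pf a b u1 = SCR.pf a b u2 := by
      intro a b hab hI
      have hI' : ¬ I b a := fun h => hI (hsym _ _ h)
      have hW1 : SCR.pf a b W = SCR.pf a b u1 ++ SCR.pf a b z1 := by
        rw [SCR.tc_pf htc1 hI hI', SCR.pf_append]
      have hW2 : SCR.pf a b W = SCR.pf a b u2 ++ SCR.pf a b z2 := by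
        rw [SCR.tc_pf htc2 hI hI', SCR.pf_append]
      have ht1 : SCR.pf a b u1 = (SCR.pf a b W).take (u1.count a + u1.count b) := by
        rw [hW1, ← SCR.length_pf a b hab u1, List.take_left]
      have ht2 : SCR.pf a b u2 = (SCR.pf a b W).take (u2.count a + u2.count b) := by
        rw [hW2, ← SCR.length_pf a b hab u2, List.take_left]
      rw [ht1, ht2, hcnt a, hcnt b]
    have := SCR.cp2 hsym u1 u2 hcnt hpf
    rw [hpu1, hpu2]
    exact (htrc_eq u1 u2).mpr this
  -- finiteness of the prefix set
  have hfinmap : Function.Injective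
      (fun p : ↥PrefSet => fun a : A => (⟨SCR.tcount I a p.1, by
        have := hcount_le p.1 p.2 a
        omega⟩ : Fin (W.length + 1))) := by
    intro p1 p2 h
    apply Subtype.ext
    apply hpref_inj p1.1 p1.2 p2.1 p2.2
    intro a
    have := congrFun h a
    exact congrArg Fin.val this
  haveI hfinP : Finite ↥PrefSet := Finite.of_injective _ hfinmap
  haveI finP : Fintype ↥PrefSet := Fintype.ofFinite _
  -- layers of reachable states are prefixes
  have hlayer : ∀ (f : A → ℕ), SCR.aliveC I W f → ∀ i : ℕ,
      ∃ t, t ∈ PrefSet ∧ ∀ a, SCR.tcount I a t = min (W.count a) (f a - i * W.count a) := by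
    intro f hal i
    have hT := SCR.layer_aliveT hal i
    obtain ⟨v, z, htc, hcnt⟩ := SCR.realize hsym _ W (fun a => min_le_left _ _) hT
    refine ⟨trc A I (FreeMonoid.ofList v), hmem_of_split v z htc, ?_⟩
    intro a
    rw [SCR.tcount_mk]
    exact hcnt a
  set QT := {p : (A → ℕ) × Bool // ∃ v, (SCR.M0 I W).Reaches (SCR.M0 I W).q0 v p} with hQT
  have hchoice : ∀ (q : QT) (i : Fin (Fintype.card A)), ∃ t, t ∈ PrefSet ∧
      ∀ a, SCR.tcount I a t = min (W.count a) (q.1.1 a - i.1 * W.count a) :=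
    fun q i => hlayer q.1.1 (hReachInv q.1 q.2).1 i.1
  set Φ : QT → Bool × (Fin (Fintype.card A) → ↥PrefSet) := fun q =>
    (q.1.2, fun i => ⟨Classical.choose (hchoice q i), (Classical.choose_spec (hchoice q i)).1⟩)
    with hΦ
  have hΦinj : Function.Injective Φ := by
    intro q1 q2 h
    have hb : q1.1.2 = q2.1.2 := congrArg Prod.fst h
    have hfun : ∀ i, Classical.choose (hchoice q1 i) = Classical.choose (hchoice q2 i) := by
      intro i
      have h1 := congrFun (congrArg Prod.snd h) i
      exact Subtype.ext_iff.mp h1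
    have hlayers : ∀ (i : Fin (Fintype.card A)) (a : A),
        min (W.count a) (q1.1.1 a - i.1 * W.count a)
          = min (W.count a) (q2.1.1 a - i.1 * W.count a) := by
      intro i a
      rw [← (Classical.choose_spec (hchoice q1 i)).2 a, hfun i,
        (Classical.choose_spec (hchoice q2 i)).2 a]
    have hf : q1.1.1 = q2.1.1 := by
      funext a
      have h1 := (hReachInv q1.1 q1.2).2.2 a
      have h2 := (hReachInv q2.1 q2.2).2.2 a
      calc q1.1.1 a
          = (Finset.range (Fintype.card A)).sum
              (fun i => min (W.count a) (q1.1.1 a - i * W.count a)) := (SCR.sum_layers h1).symm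
        _ = (Finset.range (Fintype.card A)).sum
              (fun i => min (W.count a) (q2.1.1 a - i * W.count a)) :=
            Finset.sum_congr rfl (fun i hi => hlayers ⟨i, Finset.mem_range.mp hi⟩ a)
        _ = q2.1.1 a := SCR.sum_layers h2
    apply Subtype.ext
    have := Prod.ext_iff.mpr ⟨hf, hb⟩
    exact this
  haveI finQT : Fintype QT := Fintype.ofInjective Φ hΦinj
  have hcard : Fintype.card QT ≤ 2 * PrefSet.ncard ^ (Fintype.card A) := by
    have h1 := Fintype.card_le_of_injective Φ hΦinj
    rw [Fintype.card_prod, Fintype.card_bool, Fintype.card_fun, Fintype.card_fin] at h1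
    have h2 : PrefSet.ncard = Fintype.card ↥PrefSet := by
      rw [← Nat.card_coe_set_eq, Nat.card_eq_fintype_card]
    rw [h2]
    exact h1
  -- the diamond property
  have hdia : IDiamond I (SCR.Msub I W) := by
    intro a b p q r hIab hd1 hd2
    obtain ⟨hal, hnorm, -⟩ := hReachInv p.1 p.2
    obtain ⟨h1, h2⟩ := SCR.diamond_core hirr hsym hIab hal hnorm hd1 hd2
    have hq' : ∃ v, (SCR.M0 I W).Reaches (SCR.M0 I W).q0 v
        (SCR.stepv W p.1.1 b, SCR.stepb W p.1.1 b p.1.2) := by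
      obtain ⟨v0, hv0⟩ := p.2
      exact ⟨v0 ++ [b], (SCR.reaches_append _ _ _ _ _).mpr ⟨p.1, hv0, ⟨_, h1, rfl⟩⟩⟩
    exact ⟨⟨_, hq'⟩, h1, h2⟩
  -- memorizing
  have hmemo : Memorizing (SCR.Msub I W) := by
    constructor
    · intro q
      obtain ⟨v, hv⟩ := q.2
      exact ⟨v, SCR.sub_reach_up v (SCR.M0 I W).q0 q.1 ⟨[], rfl⟩ q.2 hv⟩
    · refine ⟨fun q => {a | q.1.1 a ≠ 0 ∨ (q.1.2 = true ∧ W.count a ≠ 0)}, ?_⟩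
      intro v q hreach
      have hv0 : (SCR.M0 I W).Reaches (SCR.M0 I W).q0 v q.1 :=
        SCR.sub_reach_down v _ q hreach
      obtain ⟨hal, hnorm, ⟨m, hcnt, hbit⟩, -⟩ := SCR.inv_reach hWne v q.1 hv0
      ext a
      simp only [Set.mem_setOf_eq]
      have hcv := hcnt a
      constructor
      · rintro (h | ⟨hb, hc⟩)
        · apply List.count_pos_iff.mp
          omega
        · have hm : 0 < m := hbit.mp hb
          apply List.count_pos_iff.mp
          have : 0 < m * W.count a := Nat.mul_pos hm (by omega)
          omega
      · intro hav
        have hpos : 0 < v.count a := List.count_pos_iff.mpr hav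
        by_cases hf : q.1.1 a = 0
        · right
          rw [hf] at hcv
          refine ⟨hbit.mpr ?_, ?_⟩
          · rcases Nat.eq_zero_or_pos m with h0 | h0
            · rw [h0] at hcv
              simp at hcv
              omega
            · exact h0
          · intro hc0
            rw [hc0] at hcv
            simp at hcv
            omega
        · left
          exact hf
  -- language
  have hlang : (SCR.Msub I W).lang
      = {v : List A | ∃ n : ℕ, traceCon A I (FreeMonoid.ofList v) (w ^ n)} := by
    ext v
    constructor
    · rintro ⟨qF, hqF, hreach⟩
      have hv0 := SCR.sub_reach_down v _ qF hreach
      obtain ⟨n, htc⟩ := SCR.accept_sound hsym hWne hv0 hqF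
      refine ⟨n, ?_⟩
      rw [SCR.pow_ofList w n]
      exact htc
    · rintro ⟨n, htc⟩
      have htc' : SCR.tc I v (SCR.npow W n) := by
        rw [SCR.pow_ofList w n] at htc
        exact htc
      obtain ⟨p, hreach, hF⟩ := SCR.accept_complete hsym hWne htc'
      refine ⟨⟨p, ⟨v, hreach⟩⟩, hF, ?_⟩
      exact SCR.sub_reach_up v _ p _ _ hreach
  exact ⟨QT, finQT, SCR.Msub I W, hdia, hmemo, hcard, hlang⟩
end

section
/- Let p, u, s, q, v, t ∈ M(A,I) with u ≠ 1 and v ≠ 1 both connected. Then the set L(p,u,s,q,v,t) = {(x,y) ∈ ℕ × ℕ : p u^x s = q v^y t} is semilinear; in fact it is a finite union of linear sets of the form {(a + bz, c + dz) : z ∈ ℕ}. -/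
section Dev
open FreeMonoid
variable {A : Type} {I : A → A → Prop}

open Classical in
noncomputable def filt (a b : A) (l : List A) : List A :=
  l.filter (fun c => decide (c = a ∨ c = b))

open Classical in
theorem filt_append (a b : A) (l1 l2 : List A) :
    filt a b (l1 ++ l2) = filt a b l1 ++ filt a b l2 := List.filter_append l1 l2

open Classical in
theorem mem_filt {a b x : A} {l : List A} : x ∈ filt a b l ↔ x ∈ l ∧ (x = a ∨ x = b) := by
  simp [filt, List.mem_filter]

open Classical in
theorem filt_cons_of (a b c : A) (l : List A) (h : c = a ∨ c = b) :
    filt a b (c :: l) = c :: filt a b l := by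
  simp [filt, List.filter_cons, h]

open Classical in
theorem filt_cons_of_not (a b c : A) (l : List A) (h : ¬(c = a ∨ c = b)) :
    filt a b (c :: l) = filt a b l := by
  simp [filt, List.filter_cons, h]

noncomputable def projCon (I : A → A → Prop) : Con (FreeMonoid A) where
  r := fun w w' => ∀ a b : A, ¬ I a b → filt a b w.toList = filt a b w'.toList
  iseqv := ⟨fun _ _ _ _ => rfl, fun h a b hab => (h a b hab).symm,
    fun h1 h2 a b hab => (h1 a b hab).trans (h2 a b hab)⟩
  mul' := fun h1 h2 a b hab => by
    simp only [toList_mul, filt_append, h1 a b hab, h2 a b hab]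

theorem filt_eq_of_traceCon (hirr : ∀ a, ¬ I a a) (hsym : ∀ a b, I a b → I b a)
    {w w' : FreeMonoid A} (h : traceCon A I w w') :
    ∀ a b, ¬ I a b → filt a b w.toList = filt a b w'.toList := by
  have hle : traceCon A I ≤ projCon I := Con.conGen_le.2 ?_
  · exact hle h
  rintro x y ⟨a', b', hI, rfl, rfl⟩ a b hab
  have hne : a' ≠ b' := fun he => hirr a' (he ▸ hI)
  show filt a b [a', b'] = filt a b [b', a']
  by_cases h1 : a' = a ∨ a' = b <;> by_cases h2 : b' = a ∨ b' = b
  · exfalso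
    rcases h1 with rfl | rfl <;> rcases h2 with rfl | rfl
    · exact hne rfl
    · exact hab hI
    · exact hab (hsym _ _ hI)
    · exact hne rfl
  · rw [filt_cons_of _ _ _ _ h1, filt_cons_of_not _ _ _ _ h2,
      filt_cons_of_not _ _ _ _ h2, filt_cons_of _ _ _ _ h1]
  · rw [filt_cons_of_not _ _ _ _ h1, filt_cons_of _ _ _ _ h2,
      filt_cons_of _ _ _ _ h2, filt_cons_of_not _ _ _ _ h1]
  · rw [filt_cons_of_not _ _ _ _ h1, filt_cons_of_not _ _ _ _ h2,
      filt_cons_of_not _ _ _ _ h2, filt_cons_of_not _ _ _ _ h1]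

section Dev2
open FreeMonoid
variable {A : Type} {I : A → A → Prop}

theorem traceCon_base {a b : A} (h : I a b) (l : List A) :
    traceCon A I (ofList (a :: b :: l)) (ofList (b :: a :: l)) := by
  have h0 : traceCon A I (of a * of b) (of b * of a) :=
    ConGen.Rel.of _ _ ⟨a, b, h, rfl, rfl⟩
  have h1 := (traceCon A I).mul h0 ((traceCon A I).refl (ofList l))
  simpa [ofList_cons, mul_assoc] using h1

theorem traceCon_swap (c : A) : ∀ (pre suf : List A), (∀ b ∈ pre, I b c) →
    traceCon A I (ofList (pre ++ c :: suf)) (ofList (c :: (pre ++ suf))) := by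
  intro pre
  induction pre with
  | nil => intro suf _; exact (traceCon A I).refl _
  | cons b pre ih =>
    intro suf hpre
    have h1 := ih suf (fun x hx => hpre x (List.mem_cons_of_mem _ hx))
    have h2 := (traceCon A I).mul ((traceCon A I).refl (of b)) h1
    have h3 : traceCon A I (ofList (b :: c :: (pre ++ suf))) (ofList (c :: b :: (pre ++ suf))) :=
      traceCon_base (hpre b (List.mem_cons_self)) _
    exact (traceCon A I).trans h2 h3

theorem traceCon_comm : ∀ (w2 w1 : List A), (∀ a ∈ w1, ∀ b ∈ w2, I a b) →
    traceCon A I (ofList (w1 ++ w2)) (ofList (w2 ++ w1)) := by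
  intro w2
  induction w2 with
  | nil =>
    intro w1 _
    rw [List.append_nil]
    exact (traceCon A I).refl _
  | cons c w2 ih =>
    intro w1 h
    have h1 := traceCon_swap c w1 w2 (fun b hb => h b hb c (List.mem_cons_self))
    have h2 := (traceCon A I).mul ((traceCon A I).refl (of c))
      (ih w1 (fun a ha b hb => h a ha b (List.mem_cons_of_mem _ hb)))
    exact (traceCon A I).trans h1 h2

theorem exists_first_split {c : A} : ∀ {l : List A}, c ∈ l →
    ∃ pre suf, l = pre ++ c :: suf ∧ ∀ b ∈ pre, b ≠ c := by
  intro l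
  induction l with
  | nil => intro h; cases h
  | cons d l ih =>
    intro h
    by_cases hd : d = c
    · exact ⟨[], l, by rw [hd]; rfl, by simp⟩
    · have hc : c ∈ l := by
        rcases List.mem_cons.1 h with h' | h'
        · exact absurd h'.symm hd
        · exact h'
      obtain ⟨pre, suf, rfl, hpre⟩ := ih hc
      refine ⟨d :: pre, suf, rfl, ?_⟩
      intro b hb
      rcases List.mem_cons.1 hb with rfl | hb
      · exact hd
      · exact hpre b hb

theorem nil_of_filt (hirr : ∀ a, ¬ I a a) {w' : List A}
    (h : ∀ a b, ¬ I a b → filt a b ([] : List A) = filt a b w') : w' = [] := by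
  cases w' with
  | nil => rfl
  | cons a l =>
    exfalso
    have h0 := (h a a (hirr a)).symm
    rw [filt_cons_of a a a l (Or.inl rfl)] at h0
    exact List.cons_ne_nil _ _ h0

theorem proj_complete (hirr : ∀ a, ¬ I a a) (hsym : ∀ a b, I a b → I b a) :
    ∀ (n : ℕ) (w w' : List A), w.length ≤ n →
      (∀ a b, ¬ I a b → filt a b w = filt a b w') →
      traceCon A I (ofList w) (ofList w') := by
  intro n
  induction n with
  | zero =>
    intro w w' hl h
    have hw : w = [] := List.length_eq_zero_iff.1 (Nat.le_zero.1 hl)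
    subst hw
    rw [nil_of_filt hirr h]
    exact (traceCon A I).refl _
  | succ n ih =>
    intro w w' hl h
    cases w with
    | nil =>
      rw [nil_of_filt hirr h]
      exact (traceCon A I).refl _
    | cons c x =>
      have hcs : filt c c (c :: x) = c :: filt c c x := filt_cons_of _ _ _ _ (Or.inl rfl)
      have hcw' : c ∈ w' := by
        have h0 := (h c c (hirr c)).symm
        have hm : c ∈ filt c c w' := by
          rw [h0, hcs]; exact List.mem_cons_self
        exact (mem_filt.1 hm).1
      obtain ⟨pre, suf, rfl, hpre⟩ := exists_first_split hcw'
      have hpreI : ∀ b ∈ pre, I b c := by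
        intro b hb
        by_contra hbc
        have hf := h b c hbc
        rw [filt_cons_of b c c x (Or.inr rfl), filt_append] at hf
        have hbf : b ∈ filt b c pre := mem_filt.2 ⟨hb, Or.inl rfl⟩
        obtain ⟨e, rest, he⟩ := List.exists_cons_of_ne_nil (List.ne_nil_of_mem hbf)
        rw [he] at hf
        have hce : c = e := by
          have h9 := congrArg (fun l => l.head?) hf
          simpa using h9
        have hef : e ∈ filt b c pre := by rw [he]; exact List.mem_cons_self
        have heq : e ∈ pre := (mem_filt.1 hef).1
        exact hpre e heq hce.symm
      have hswap := traceCon_swap c pre suf hpreI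
      have hx : traceCon A I (ofList x) (ofList (pre ++ suf)) := by
        apply ih x (pre ++ suf) (Nat.le_of_succ_le_succ hl)
        intro a b hab
        have hf := h a b hab
        rw [filt_append]
        by_cases hc : c = a ∨ c = b
        · have hpre0 : filt a b pre = [] := by
            apply List.eq_nil_iff_forall_not_mem.2
            intro e he
            obtain ⟨hep, heab⟩ := mem_filt.1 he
            have hec : e ≠ c := hpre e hep
            have hIec : I e c := hpreI e hep
            rcases heab with rfl | rfl
            · rcases hc with rfl | rfl
              · exact hec rfl
              · exact hab hIec
            · rcases hc with rfl | rfl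
              · exact hab (hsym _ _ hIec)
              · exact hec rfl
          rw [filt_cons_of a b c x hc, filt_append, filt_cons_of a b c suf hc, hpre0] at hf
          rw [hpre0]
          exact List.cons_injective hf
        · rw [filt_cons_of_not a b c x hc, filt_append, filt_cons_of_not a b c suf hc] at hf
          exact hf
      have h2 := (traceCon A I).mul ((traceCon A I).refl (of c)) hx
      exact (traceCon A I).trans h2 ((traceCon A I).symm hswap)

end Dev2
section Dev3
open FreeMonoid
variable {A : Type} {I : A → A → Prop}

theorem trc_eq_iff {w w' : FreeMonoid A} :
    trc A I w = trc A I w' ↔ traceCon A I w w' := Con.eq _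

theorem trace_eq_of_proj (hirr : ∀ a, ¬ I a a) (hsym : ∀ a b, I a b → I b a)
    {w w' : FreeMonoid A}
    (h : ∀ a b, ¬ I a b → filt a b w.toList = filt a b w'.toList) :
    trc A I w = trc A I w' := by
  have h1 := proj_complete (I := I) hirr hsym w.toList.length w.toList w'.toList le_rfl h
  exact trc_eq_iff.2 h1

theorem t_cancel_left (hirr : ∀ a, ¬ I a a) (hsym : ∀ a b, I a b → I b a)
    {x y z : Trace A I} (h : x * y = x * z) : y = z := by
  obtain ⟨wx, rfl⟩ := Con.mk'_surjective x
  obtain ⟨wy, rfl⟩ := Con.mk'_surjective y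
  obtain ⟨wz, rfl⟩ := Con.mk'_surjective z
  rw [← map_mul, ← map_mul] at h
  have h2 := filt_eq_of_traceCon hirr hsym (trc_eq_iff.1 h)
  apply trace_eq_of_proj hirr hsym
  intro a b hab
  have h3 := h2 a b hab
  rw [toList_mul, toList_mul, filt_append, filt_append] at h3
  exact List.append_cancel_left h3

theorem t_cancel_right (hirr : ∀ a, ¬ I a a) (hsym : ∀ a b, I a b → I b a)
    {x y z : Trace A I} (h : y * x = z * x) : y = z := by
  obtain ⟨wx, rfl⟩ := Con.mk'_surjective x
  obtain ⟨wy, rfl⟩ := Con.mk'_surjective y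
  obtain ⟨wz, rfl⟩ := Con.mk'_surjective z
  rw [← map_mul, ← map_mul] at h
  have h2 := filt_eq_of_traceCon hirr hsym (trc_eq_iff.1 h)
  apply trace_eq_of_proj hirr hsym
  intro a b hab
  have h3 := h2 a b hab
  rw [toList_mul, toList_mul, filt_append, filt_append] at h3
  exact List.append_cancel_right h3

theorem mem_of_trc_eq (hirr : ∀ a, ¬ I a a) (hsym : ∀ a b, I a b → I b a)
    {w w' : FreeMonoid A} (h : trc A I w = trc A I w')
    {a : A} (ha : a ∈ w.toList) : a ∈ w'.toList := by
  have h2 := filt_eq_of_traceCon hirr hsym (trc_eq_iff.1 h) a a (hirr a)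
  have h3 : a ∈ filt a a w'.toList := by
    rw [← h2]; exact mem_filt.2 ⟨ha, Or.inl rfl⟩
  exact (mem_filt.1 h3).1

theorem traceIndep_iff (hirr : ∀ a, ¬ I a a) (hsym : ∀ a b, I a b → I b a)
    {w w' : FreeMonoid A} :
    TraceIndep A I (trc A I w) (trc A I w') ↔ ∀ a ∈ w.toList, ∀ b ∈ w'.toList, I a b := by
  constructor
  · intro h; exact h w w' rfl rfl
  · intro h v v' hv hv' a ha b hb
    exact h a (mem_of_trc_eq hirr hsym hv.symm ha) b (mem_of_trc_eq hirr hsym hv'.symm hb)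

theorem tindep_comm {s t : Trace A I} (h : TraceIndep A I s t) : s * t = t * s := by
  obtain ⟨w1, rfl⟩ := Con.mk'_surjective s
  obtain ⟨w2, rfl⟩ := Con.mk'_surjective t
  have hp := h w1 w2 rfl rfl
  have h1 := traceCon_comm (I := I) w2.toList w1.toList hp
  rw [← map_mul, ← map_mul]
  exact trc_eq_iff.2 h1

theorem toList_eq_nil_of_trc_one (hirr : ∀ a, ¬ I a a) (hsym : ∀ a b, I a b → I b a)
    {w : FreeMonoid A} (h : trc A I w = 1) : w.toList = [] := by
  have h1 : trc A I w = trc A I 1 := by rw [h, trc]; exact (map_one _).symm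
  apply List.eq_nil_iff_forall_not_mem.2
  intro a ha
  exact absurd (mem_of_trc_eq hirr hsym h1 ha) (by simp [toList_one])

theorem tindep_one_left (hirr : ∀ a, ¬ I a a) (hsym : ∀ a b, I a b → I b a)
    (t : Trace A I) : TraceIndep A I 1 t := by
  intro w w' hw _ a ha b hb
  rw [toList_eq_nil_of_trc_one hirr hsym hw.symm] at ha
  cases ha

theorem tindep_symm (hsym : ∀ a b, I a b → I b a) {s t : Trace A I}
    (h : TraceIndep A I s t) : TraceIndep A I t s := by
  intro w w' hw hw' a ha b hb
  exact hsym _ _ (h w' w hw' hw b hb a ha)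

theorem tindep_of_mul_left (hirr : ∀ a, ¬ I a a) (hsym : ∀ a b, I a b → I b a)
    {x y z : Trace A I} (h : TraceIndep A I (x * y) z) : TraceIndep A I x z := by
  intro w w' hw hw' a ha b hb
  obtain ⟨wy, rfl⟩ := Con.mk'_surjective y
  refine h (w * wy) w' ?_ hw' a ?_ b hb
  · rw [hw, trc, trc, map_mul]
  · rw [toList_mul]; exact List.mem_append_left _ ha

theorem tindep_of_mul_right (hirr : ∀ a, ¬ I a a) (hsym : ∀ a b, I a b → I b a)
    {x y z : Trace A I} (h : TraceIndep A I (x * y) z) : TraceIndep A I y z := by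
  intro w w' hw hw' a ha b hb
  obtain ⟨wx, rfl⟩ := Con.mk'_surjective x
  refine h (wx * w) w' ?_ hw' a ?_ b hb
  · rw [hw, trc, trc, map_mul]
  · rw [toList_mul]; exact List.mem_append_right _ ha

theorem tindep_mul (hirr : ∀ a, ¬ I a a) (hsym : ∀ a b, I a b → I b a)
    {x y z : Trace A I} (hx : TraceIndep A I x z) (hy : TraceIndep A I y z) :
    TraceIndep A I (x * y) z := by
  intro w w' hw hw' a ha b hb
  obtain ⟨wx, rfl⟩ := Con.mk'_surjective x
  obtain ⟨wy, rfl⟩ := Con.mk'_surjective y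
  have hww : trc A I (wx * wy) = trc A I w := by
    rw [← hw, trc, map_mul]
  have ha' : a ∈ (wx * wy).toList := mem_of_trc_eq hirr hsym hww.symm ha
  rw [toList_mul] at ha'
  rcases List.mem_append.1 ha' with h1 | h1
  · exact hx wx w' rfl hw' a h1 b hb
  · exact hy wy w' rfl hw' a h1 b hb

noncomputable def lenCon (A : Type) (I : A → A → Prop) : Con (FreeMonoid A) where
  r := fun w w' => w.toList.length = w'.toList.length
  iseqv := ⟨fun _ => rfl, Eq.symm, Eq.trans⟩
  mul' := @fun w x y z h1 h2 => by
    have h1' : (FreeMonoid.toList w).length = (FreeMonoid.toList x).length := h1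
    have h2' : (FreeMonoid.toList y).length = (FreeMonoid.toList z).length := h2
    simp only [FreeMonoid.toList_mul, List.length_append, h1', h2']

noncomputable def tlen (t : Trace A I) : ℕ :=
  Con.liftOn t (fun w => w.toList.length) (fun a b h => by
    have hle : traceCon A I ≤ lenCon A I := Con.conGen_le.2 (by
      rintro x y ⟨a', b', hI, rfl, rfl⟩
      rfl)
    exact hle h)

theorem tlen_trc (w : FreeMonoid A) : tlen (trc A I w) = w.toList.length := rfl

theorem tlen_mul (x y : Trace A I) : tlen (x * y) = tlen x + tlen y := by
  obtain ⟨wx, rfl⟩ := Con.mk'_surjective x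
  obtain ⟨wy, rfl⟩ := Con.mk'_surjective y
  rw [← map_mul]
  show tlen (trc A I (wx * wy)) = tlen (trc A I wx) + tlen (trc A I wy)
  rw [tlen_trc, tlen_trc, tlen_trc, toList_mul, List.length_append]

theorem tlen_one : tlen (1 : Trace A I) = 0 := rfl

theorem tlen_pow (x : Trace A I) (n : ℕ) : tlen (x ^ n) = n * tlen x := by
  induction n with
  | zero => simp [tlen_one]
  | succ n ih => rw [pow_succ, tlen_mul, ih]; ring

theorem tlen_pos (hirr : ∀ a, ¬ I a a) (hsym : ∀ a b, I a b → I b a)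
    {x : Trace A I} (h : x ≠ 1) : 0 < tlen x := by
  obtain ⟨wx, rfl⟩ := Con.mk'_surjective x
  rw [Nat.pos_iff_ne_zero]
  intro h0
  have h1 : wx.toList = [] := List.length_eq_zero_iff.1 h0
  apply h
  have : wx = 1 := by
    have := congrArg ofList h1
    rwa [ofList_toList, ofList_nil] at this
  rw [this]
  exact map_one _
end Dev3
section Dev4
open FreeMonoid
variable {A : Type} {I : A → A → Prop}

theorem trc_ofList_append (l1 l2 : List A) :
    trc A I (ofList (l1 ++ l2)) = trc A I (ofList l1) * trc A I (ofList l2) := by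
  rw [ofList_append, trc, map_mul]; rfl

theorem trc_mul (w w' : FreeMonoid A) :
    trc A I (w * w') = trc A I w * trc A I w' := map_mul _ _ _

theorem trc_toList (w : FreeMonoid A) : trc A I (ofList w.toList) = trc A I w := rfl

theorem firstLetter (hirr : ∀ a, ¬ I a a) (hsym : ∀ a b, I a b → I b a)
    (c : A) (m y1 y2 : Trace A I)
    (h : trc A I (of c) * m = y1 * y2) :
    (∃ y1', y1 = trc A I (of c) * y1' ∧ m = y1' * y2) ∨
      (∃ y2', y2 = trc A I (of c) * y2' ∧ m = y1 * y2' ∧ TraceIndep A I y1 (trc A I (of c))) := by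
  obtain ⟨wm, rfl⟩ := Con.mk'_surjective m
  obtain ⟨w1, rfl⟩ := Con.mk'_surjective y1
  obtain ⟨w2, rfl⟩ := Con.mk'_surjective y2
  have h' : trc A I (of c * wm) = trc A I (w1 * w2) := by
    rw [trc_mul, trc_mul]; exact h
  have hproj := filt_eq_of_traceCon hirr hsym (trc_eq_iff.1 h')
  have hL : (of c * wm).toList = c :: wm.toList := rfl
  by_cases hc : c ∈ w1.toList
  · -- c comes from y1
    obtain ⟨pre, suf, hsplit, hpre⟩ := exists_first_split hc
    have hpreI : ∀ b ∈ pre, I b c := by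
      intro b hb
      by_contra hbc
      have hf := hproj b c hbc
      rw [hL, filt_cons_of b c c _ (Or.inr rfl), toList_mul, hsplit, filt_append,
        filt_append] at hf
      have hbf : b ∈ filt b c pre := mem_filt.2 ⟨hb, Or.inl rfl⟩
      obtain ⟨e, rest, he⟩ := List.exists_cons_of_ne_nil (List.ne_nil_of_mem hbf)
      rw [he] at hf
      have hce : c = e := by
        have h9 := congrArg (fun l => l.head?) hf
        simpa using h9
      have hef : e ∈ filt b c pre := by rw [he]; exact List.mem_cons_self
      exact hpre e (mem_filt.1 hef).1 hce.symm
    have hy1 : trc A I w1 = trc A I (of c) * trc A I (ofList (pre ++ suf)) := by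
      have hsw := trc_eq_iff.2 (traceCon_swap (I := I) c pre suf hpreI)
      have hw1 : trc A I w1 = trc A I (ofList (pre ++ c :: suf)) := by
        rw [← trc_toList w1, hsplit]
      rw [hw1, hsw]
      rw [show (c :: (pre ++ suf)) = [c] ++ (pre ++ suf) from rfl, trc_ofList_append]
      rfl
    refine Or.inl ⟨trc A I (ofList (pre ++ suf)), hy1, ?_⟩
    apply t_cancel_left hirr hsym (x := trc A I (of c))
    rw [← mul_assoc, ← hy1]
    exact h
  · -- c comes from y2
    have hcw : c ∈ w2.toList := by
      have hf := hproj c c (hirr c)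
      rw [hL, filt_cons_of c c c _ (Or.inl rfl)] at hf
      have hmem : c ∈ filt c c (w1 * w2).toList := by
        rw [← hf]; exact List.mem_cons_self
      have := (mem_filt.1 hmem).1
      rw [toList_mul] at this
      rcases List.mem_append.1 this with h1 | h1
      · exact absurd h1 hc
      · exact h1
    have hw1I : ∀ b ∈ w1.toList, I b c := by
      intro b hb
      by_contra hbc
      have hf := hproj b c hbc
      rw [hL, filt_cons_of b c c _ (Or.inr rfl), toList_mul, filt_append] at hf
      have hbf : b ∈ filt b c w1.toList := mem_filt.2 ⟨hb, Or.inl rfl⟩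
      obtain ⟨e, rest, he⟩ := List.exists_cons_of_ne_nil (List.ne_nil_of_mem hbf)
      rw [he] at hf
      have hce : c = e := by
        have h9 := congrArg (fun l => l.head?) hf
        simpa using h9
      have hef : e ∈ filt b c w1.toList := by rw [he]; exact List.mem_cons_self
      exact hc (hce ▸ (mem_filt.1 hef).1)
    obtain ⟨pre2, suf2, hsplit2, hpre2⟩ := exists_first_split hcw
    have hpre2I : ∀ b ∈ pre2, I b c := by
      intro b hb
      by_contra hbc
      have hf := hproj b c hbc
      rw [hL, filt_cons_of b c c _ (Or.inr rfl), toList_mul, hsplit2, filt_append,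
        filt_append] at hf
      cases hw1f : filt b c w1.toList with
      | nil =>
        rw [hw1f, List.nil_append] at hf
        have hbf : b ∈ filt b c pre2 := mem_filt.2 ⟨hb, Or.inl rfl⟩
        obtain ⟨e, rest, he⟩ := List.exists_cons_of_ne_nil (List.ne_nil_of_mem hbf)
        rw [he] at hf
        have hce : c = e := by
          have h9 := congrArg (fun l => l.head?) hf
          simpa using h9
        have hef : e ∈ filt b c pre2 := by rw [he]; exact List.mem_cons_self
        exact hpre2 e (mem_filt.1 hef).1 hce.symm
      | cons e rest =>
        rw [hw1f] at hf
        have hce : c = e := by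
          have h9 := congrArg (fun l => l.head?) hf
          simpa using h9
        have hef : e ∈ filt b c w1.toList := by rw [hw1f]; exact List.mem_cons_self
        exact hc (hce ▸ (mem_filt.1 hef).1)
    have hy2 : trc A I w2 = trc A I (of c) * trc A I (ofList (pre2 ++ suf2)) := by
      have hsw := trc_eq_iff.2 (traceCon_swap (I := I) c pre2 suf2 hpre2I)
      have hw2 : trc A I w2 = trc A I (ofList (pre2 ++ c :: suf2)) := by
        rw [← trc_toList w2, hsplit2]
      rw [hw2, hsw]
      rw [show (c :: (pre2 ++ suf2)) = [c] ++ (pre2 ++ suf2) from rfl, trc_ofList_append]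
      rfl
    have hbig : trc A I w1 * trc A I w2 =
        trc A I (of c) * (trc A I w1 * trc A I (ofList (pre2 ++ suf2))) := by
      have hsw := trc_eq_iff.2 (traceCon_swap (I := I) c (w1.toList ++ pre2) suf2 (by
        intro b hb
        rcases List.mem_append.1 hb with h1 | h1
        · exact hw1I b h1
        · exact hpre2I b h1))
      have e1 : trc A I w1 * trc A I w2 =
          trc A I (ofList ((w1.toList ++ pre2) ++ c :: suf2)) := by
        rw [← trc_toList w1, ← trc_toList w2, ← trc_ofList_append, hsplit2,
          List.append_assoc]
      rw [e1, hsw]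
      rw [show (c :: ((w1.toList ++ pre2) ++ suf2)) = [c] ++ ((w1.toList ++ pre2) ++ suf2)
        from rfl, trc_ofList_append, List.append_assoc, trc_ofList_append, trc_toList]
      rfl
    refine Or.inr ⟨trc A I (ofList (pre2 ++ suf2)), hy2, ?_, ?_⟩
    · apply t_cancel_left hirr hsym (x := trc A I (of c))
      show trc A I (of c) * trc A I wm =
        trc A I (of c) * (trc A I w1 * trc A I (ofList (pre2 ++ suf2)))
      rw [← hbig]
      exact h
    · exact (traceIndep_iff hirr hsym).2 (by
        intro a ha b hb
        have : b = c := by simpa using hb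
        subst this
        exact hw1I a ha)
end Dev4
section Dev5
open FreeMonoid
variable {A : Type} {I : A → A → Prop}

theorem levi_list (hirr : ∀ a, ¬ I a a) (hsym : ∀ a b, I a b → I b a) :
    ∀ (w1 : List A) (x2 y1 y2 : Trace A I),
      trc A I (ofList w1) * x2 = y1 * y2 →
      ∃ z pp qq ww : Trace A I, trc A I (ofList w1) = z * pp ∧ x2 = qq * ww ∧
        y1 = z * qq ∧ y2 = pp * ww ∧ TraceIndep A I pp qq := by
  intro w1
  induction w1 with
  | nil =>
    intro x2 y1 y2 h
    have h1 : trc A I (ofList ([] : List A)) = 1 := map_one _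
    rw [h1, one_mul] at h
    exact ⟨1, 1, y1, y2, by rw [h1, one_mul], by rw [h], (one_mul _).symm,
      (one_mul _).symm, tindep_one_left hirr hsym _⟩
  | cons c w1 ih =>
    intro x2 y1 y2 h
    have h0 : trc A I (of c) * (trc A I (ofList w1) * x2) = y1 * y2 := by
      rw [← mul_assoc, ← trc_mul]; exact h
    rcases firstLetter hirr hsym c _ y1 y2 h0 with ⟨y1', hy1, hm⟩ | ⟨y2', hy2, hm, hind⟩
    · obtain ⟨z, pp, qq, ww, e1, e2, e3, e4, hi⟩ := ih x2 y1' y2 hm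
      refine ⟨trc A I (of c) * z, pp, qq, ww, ?_, e2, ?_, e4, hi⟩
      · rw [show ofList (c :: w1) = of c * ofList w1 from rfl, trc_mul, e1, mul_assoc]
      · rw [hy1, e3, mul_assoc]
    · obtain ⟨z, pp, qq, ww, e1, e2, e3, e4, hi⟩ := ih x2 y1 y2' hm
      have hzc : TraceIndep A I z (trc A I (of c)) :=
        tindep_of_mul_left hirr hsym (e3 ▸ hind)
      have hqc : TraceIndep A I qq (trc A I (of c)) :=
        tindep_of_mul_right hirr hsym (e3 ▸ hind)
      refine ⟨z, trc A I (of c) * pp, qq, ww, ?_, e2, e3, ?_, ?_⟩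
      · rw [show ofList (c :: w1) = of c * ofList w1 from rfl, trc_mul, e1, ← mul_assoc,
          ← tindep_comm hzc, mul_assoc]
      · rw [hy2, e4, mul_assoc]
      · exact tindep_mul hirr hsym (tindep_symm hsym hqc) hi

theorem levi (hirr : ∀ a, ¬ I a a) (hsym : ∀ a b, I a b → I b a)
    (x1 x2 y1 y2 : Trace A I) (h : x1 * x2 = y1 * y2) :
    ∃ z pp qq ww : Trace A I, x1 = z * pp ∧ x2 = qq * ww ∧
      y1 = z * qq ∧ y2 = pp * ww ∧ TraceIndep A I pp qq := by
  obtain ⟨w1, rfl⟩ := Con.mk'_surjective x1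
  exact levi_list hirr hsym w1.toList x2 y1 y2 h

theorem closure_lemma (hirr : ∀ a, ¬ I a a) (hsym : ∀ a b, I a b → I b a)
    (p u s q v t : Trace A I) {x1 y1 x2 y2 : ℕ}
    (h1 : p * u ^ x1 * s = q * v ^ y1 * t) (h2 : p * u ^ x2 * s = q * v ^ y2 * t)
    (hx : x1 ≤ x2) (hy : y1 ≤ y2) :
    p * u ^ (x2 + (x2 - x1)) * s = q * v ^ (y2 + (y2 - y1)) * t := by
  set k := x2 - x1 with hk
  set m := y2 - y1 with hm
  obtain ⟨z, a, b, w, e1, e2, e3, e4, hab⟩ := levi hirr hsym _ _ _ _ h1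
  have hL2 : p * u ^ x2 * s = z * (a * (u ^ k * (b * w))) := by
    have hxx : u ^ x2 = u ^ x1 * u ^ k := by rw [← pow_add]; congr 1; omega
    rw [hxx, e2, ← mul_assoc p, e1]
    simp only [mul_assoc]
  have hR2 : q * v ^ y2 * t = z * (b * (v ^ m * (a * w))) := by
    have hyy : v ^ y2 = v ^ y1 * v ^ m := by rw [← pow_add]; congr 1; omega
    rw [hyy, e4, ← mul_assoc q, e3]
    simp only [mul_assoc]
  have hcent : a * (u ^ k * b) = b * (v ^ m * a) := by
    apply t_cancel_left hirr hsym (x := z)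
    apply t_cancel_right hirr hsym (x := w)
    have hh : z * (a * (u ^ k * (b * w))) = z * (b * (v ^ m * (a * w))) := by
      rw [← hL2, ← hR2]; exact h2
    simp only [← mul_assoc] at hh ⊢
    exact hh
  obtain ⟨z2, P, Q, W2, e1', e2', e3', e4', hPQ⟩ := levi hirr hsym _ _ _ _ hcent
  have hz2 : z2 = 1 := by
    obtain ⟨wz, rfl⟩ := Con.mk'_surjective z2
    obtain ⟨wP, rfl⟩ := Con.mk'_surjective P
    obtain ⟨wQ, rfl⟩ := Con.mk'_surjective Q
    cases hwz : wz.toList with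
    | nil =>
      have hone : wz = 1 := by
        rw [← ofList_toList wz, hwz, ofList_nil]
      rw [hone]
      exact map_one _
    | cons e rest =>
      exfalso
      have hea : e ∈ (wz * wP).toList := by
        rw [toList_mul, hwz]; exact List.mem_append_left _ (List.mem_cons_self)
      have heb : e ∈ (wz * wQ).toList := by
        rw [toList_mul, hwz]; exact List.mem_append_left _ (List.mem_cons_self)
      have ha : a = trc A I (wz * wP) := by rw [e1', trc_mul]; rfl
      have hb : b = trc A I (wz * wQ) := by rw [e3', trc_mul]; rfl
      exact hirr e (hab (wz * wP) (wz * wQ) ha hb e hea e heb)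
  rw [hz2, one_mul] at e1' e3'
  have hu : u ^ k * b = b * W2 := by rw [e2', ← e3']
  have hv : v ^ m * a = a * W2 := by rw [e4', ← e1']
  have hu1 : ∀ r : Trace A I, u ^ k * (b * r) = b * (W2 * r) := fun r => by
    rw [← mul_assoc, hu, mul_assoc]
  have hv1 : ∀ r : Trace A I, v ^ m * (a * r) = a * (W2 * r) := fun r => by
    rw [← mul_assoc, hv, mul_assoc]
  have hL3 : p * u ^ (x2 + k) * s = z * (a * (u ^ k * (u ^ k * (b * w)))) := by
    have hxx : u ^ (x2 + k) = u ^ x1 * (u ^ k * u ^ k) := by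
      rw [← pow_add, ← pow_add]; congr 1; omega
    rw [hxx, e2, ← mul_assoc p, e1]
    simp only [mul_assoc]
  have hR3 : q * v ^ (y2 + m) * t = z * (b * (v ^ m * (v ^ m * (a * w)))) := by
    have hyy : v ^ (y2 + m) = v ^ y1 * (v ^ m * v ^ m) := by
      rw [← pow_add, ← pow_add]; congr 1; omega
    rw [hyy, e4, ← mul_assoc q, e3]
    simp only [mul_assoc]
  rw [hL3, hR3, hu1 w, hu1 (W2 * w), hv1 w, hv1 (W2 * w), ← mul_assoc a b,
    tindep_comm hab, mul_assoc]
end Dev5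
end Dev


/-- The solution set of p u^x s = q v^y t (u, v nonempty connected) is a finite
union of linear sets {(a+bz, c+dz) : z ∈ ℕ}. -/
theorem power_equation_semilinear (A : Type) [Fintype A] (I : A → A → Prop)
    (hirr : ∀ a, ¬ I a a) (hsym : ∀ a b, I a b → I b a)
    (p u s q v t : Trace A I) (hu : u ≠ 1) (hv : v ≠ 1)
    (hcu : TraceConnected A I u) (hcv : TraceConnected A I v) :
    ∃ (r : ℕ) (a b c d : Fin r → ℕ),
      {xy : ℕ × ℕ | p * u ^ xy.1 * s = q * v ^ xy.2 * t} =
        ⋃ i : Fin r, {xy : ℕ × ℕ | ∃ z : ℕ, xy = (a i + b i * z, c i + d i * z)} := by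
  classical
  set T : Set (ℕ × ℕ) := {xy : ℕ × ℕ | p * u ^ xy.1 * s = q * v ^ xy.2 * t} with hT
  have hTmem : ∀ x y : ℕ, ((x, y) ∈ T) ↔ p * u ^ x * s = q * v ^ y * t := fun _ _ => Iff.rfl
  have hconv : ∀ {a b a' b' : ℕ}, (a, b) ∈ T → a = a' → b = b' → (a', b') ∈ T := by
    rintro a b a' b' h rfl rfl; exact h
  set U := tlen u with hUdef
  set V := tlen v with hVdef
  have hU : 0 < U := tlen_pos hirr hsym hu
  have hV : 0 < V := tlen_pos hirr hsym hv
  have hlen : ∀ {x y : ℕ}, (x, y) ∈ T →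
      tlen p + tlen s + x * U = tlen q + tlen t + y * V := by
    intro x y hxy
    have h0 : p * u ^ x * s = q * v ^ y * t := hxy
    have h1 := congrArg tlen h0
    rw [tlen_mul, tlen_mul, tlen_mul, tlen_mul, tlen_pow, tlen_pow,
      ← hUdef, ← hVdef] at h1
    omega
  have hfun : ∀ {x y y' : ℕ}, (x, y) ∈ T → (x, y') ∈ T → y = y' := by
    intro x y y' h1 h2
    have e1 := hlen h1
    have e2 := hlen h2
    have e3 : y * V = y' * V := by omega
    exact Nat.eq_of_mul_eq_mul_right hV e3
  have hmono : ∀ {x y x' y' : ℕ}, (x, y) ∈ T → (x', y') ∈ T → x < x' → y < y' := by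
    intro x y x' y' h1 h2 hxx
    have e1 := hlen h1
    have e2 := hlen h2
    have e3 : x * U < x' * U := (Nat.mul_lt_mul_right hU).2 hxx
    have e4 : y * V < y' * V := by omega
    exact (Nat.mul_lt_mul_right hV).1 e4
  have hbound : ∀ {x y : ℕ}, (x, y) ∈ T → y ≤ tlen p + tlen s + x * U := by
    intro x y h1
    have e1 := hlen h1
    have e2 : y ≤ y * V := Nat.le_mul_of_pos_right y hV
    omega
  have hclos : ∀ {x y x' y' : ℕ}, (x, y) ∈ T → (x', y') ∈ T → x ≤ x' → y ≤ y' →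
      (x' + (x' - x), y' + (y' - y)) ∈ T := by
    intro x y x' y' h1 h2 hx hy
    exact closure_lemma hirr hsym p u s q v t h1 h2 hx hy
  by_cases hfin : T.Finite
  · -- finite case: union of singletons
    set L := hfin.toFinset.toList with hL
    refine ⟨L.length, fun i => (L.get i).1, fun _ => 0, fun i => (L.get i).2, fun _ => 0, ?_⟩
    ext xy
    simp only [Set.mem_iUnion, Set.mem_setOf_eq]
    constructor
    · intro hxy
      have hmem : xy ∈ L := by
        rw [hL, Finset.mem_toList, Set.Finite.mem_toFinset]
        exact hxy
      obtain ⟨i, hi⟩ := List.mem_iff_get.1 hmem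
      refine ⟨i, 0, ?_⟩
      rw [← hi]
      simp
    · rintro ⟨i, z, rfl⟩
      have hmem : L.get i ∈ T := by
        rw [← Set.Finite.mem_toFinset hfin, ← Finset.mem_toList, ← hL]
        exact List.get_mem L i
      simpa using hconv hmem rfl rfl
  · -- infinite case
    have hinf : T.Infinite := hfin
    obtain ⟨⟨a1, a2⟩, hp1, ⟨b1, b2⟩, hp2, hne⟩ := hinf.nontrivial
    have hex : ∃ dd : ℕ, 0 < dd ∧ ∃ x y y' : ℕ, (x, y) ∈ T ∧ (x + dd, y') ∈ T := by
      rcases lt_trichotomy a1 b1 with hlt | heq | hlt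
      · exact ⟨b1 - a1, by omega, a1, a2, b2, hp1, hconv hp2 (by omega) rfl⟩
      · exfalso
        apply hne
        have : a2 = b2 := hfun (heq ▸ hp1) hp2
        rw [heq, this]
      · exact ⟨a1 - b1, by omega, b1, b2, a2, hp2, hconv hp1 (by omega) rfl⟩
    set d := Nat.find hex with hd
    obtain ⟨hdpos, x1, y1, y2', hQ0, hQ1⟩ := Nat.find_spec hex
    have hmin : ∀ r : ℕ, r < d → ¬(0 < r ∧ ∃ x y y' : ℕ, (x, y) ∈ T ∧ (x + r, y') ∈ T) :=
      fun r hr => Nat.find_min hex hr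
    have hy12 : y1 < y2' := hmono hQ0 hQ1 (by omega)
    set e := y2' - y1 with he
    have hepos : 0 < e := by omega
    have hAP : ∀ kk : ℕ, (x1 + d * kk, y1 + e * kk) ∈ T ∧
        (x1 + d * (kk + 1), y1 + e * (kk + 1)) ∈ T := by
      intro kk
      induction kk with
      | zero =>
        refine ⟨hconv hQ0 (by omega) (by omega), hconv hQ1 (by omega) (by omega)⟩
      | succ kk ih =>
        obtain ⟨ih1, ih2⟩ := ih
        refine ⟨ih2, ?_⟩
        have h3 := hclos ih1 ih2
          (by simp only [Nat.mul_succ]; omega) (by simp only [Nat.mul_succ]; omega)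
        refine hconv h3 ?_ ?_ <;> (simp only [Nat.mul_succ]; omega)
    have hcover : ∀ xx yy : ℕ, (xx, yy) ∈ T → x1 ≤ xx →
        ∃ kk, xx = x1 + d * kk ∧ yy = y1 + e * kk := by
      intro xx yy h hge
      set kk := (xx - x1) / d with hkk
      set r := (xx - x1) % d with hr
      have hdm : d * kk + r = xx - x1 := Nat.div_add_mod (xx - x1) d
      have hrd : r < d := Nat.mod_lt _ hdpos
      have hQk := (hAP kk).1
      by_cases hr0 : r = 0
      · have hx : xx = x1 + d * kk := by omega
        exact ⟨kk, hx, hfun (hconv h hx rfl) (hAP kk).1⟩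
      · exfalso
        apply hmin r hrd
        exact ⟨Nat.pos_of_ne_zero hr0, x1 + d * kk, y1 + e * kk, yy, hQk,
          hconv h (by omega) rfl⟩
    set F : Set (ℕ × ℕ) := {xy : ℕ × ℕ | xy ∈ T ∧ xy.1 < x1} with hF
    have hFfin : F.Finite := by
      apply Set.Finite.subset (Set.Finite.prod (Set.finite_Iio x1)
        (Set.finite_Iio (tlen p + tlen s + x1 * U + 1)))
      rintro ⟨aa, bb⟩ ⟨hmem, hlt⟩
      have hb := hbound hmem
      have hUa : aa * U ≤ x1 * U := Nat.mul_le_mul_right U (le_of_lt hlt)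
      exact ⟨hlt, by simp only [Set.mem_Iio]; omega⟩
    set L := hFfin.toFinset.toList with hL
    set n := L.length with hn
    refine ⟨n + 1,
      Fin.snoc (fun i => (L.get i).1) x1,
      Fin.snoc (fun _ => 0) d,
      Fin.snoc (fun i => (L.get i).2) y1,
      Fin.snoc (fun _ => 0) e, ?_⟩
    ext ⟨xx, yy⟩
    simp only [Set.mem_iUnion, Set.mem_setOf_eq]
    constructor
    · intro h
      by_cases hlt : xx < x1
      · have hmem : (xx, yy) ∈ L := by
          rw [hL, Finset.mem_toList, Set.Finite.mem_toFinset]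
          exact ⟨h, hlt⟩
        obtain ⟨i, hi⟩ := List.mem_iff_get.1 hmem
        refine ⟨i.castSucc, 0, ?_⟩
        simp only [Fin.snoc_castSucc]
        rw [hi]
        simp
      · obtain ⟨kk, hx, hy⟩ := hcover xx yy h (by omega)
        refine ⟨Fin.last n, kk, ?_⟩
        simp only [Fin.snoc_last]
        rw [Prod.mk.injEq]
        exact ⟨hx, hy⟩
    · rintro ⟨i, z, hz⟩
      induction i using Fin.lastCases with
      | last =>
        simp only [Fin.snoc_last] at hz
        rw [hz]
        exact (hAP z).1
      | cast i =>
        simp only [Fin.snoc_castSucc] at hz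
        have hmem : L.get i ∈ F := by
          rw [← Set.Finite.mem_toFinset hFfin, ← Finset.mem_toList, ← hL]
          exact List.get_mem L i
        rw [hz]
        exact hconv hmem.1 (by simp) (by simp)
end

section
/- Let A ∈ ℤ^{n×m}, a ∈ ℤ^n, C ∈ ℕ^{k×m}, c ∈ ℕ^k, and let β bound the absolute values of all entries of A, a, C, c. Then the set L = {Cz + c : z ∈ ℕ^m, Az = a} ⊆ ℕ^k is semilinear, and if L is nonempty then L contains a vector all of whose entries are at most β + n!·m·(m+1)·β^{n+1}. -/
open Matrix

/-- A subset of ℕ^k is semilinear if it is a finite union of linear sets. -/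
def IsSemilinear {k : ℕ} (L : Set (Fin k → ℕ)) : Prop :=
  ∃ (r : ℕ) (base : Fin r → Fin k → ℕ) (num : Fin r → ℕ)
    (per : (i : Fin r) → Fin (num i) → Fin k → ℕ),
    L = {v | ∃ (i : Fin r) (x : Fin (num i) → ℕ), v = base i + ∑ j, x j • per i j}

section Part1

variable {n m : ℕ} (A : Matrix (Fin n) (Fin m) ℤ) (a : Fin n → ℤ)

/-- cast a ℕ-vector to ℤ -/
lemma myPWO {m : ℕ} (s : Set (Fin m → ℕ)) : s.IsPWO :=
  Set.isPWO_of_wellQuasiOrderedLE s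

def natCastVec {m : ℕ} (z : Fin m → ℕ) : Fin m → ℤ := fun j => (z j : ℤ)

lemma natCastVec_add {m : ℕ} (z w : Fin m → ℕ) :
    natCastVec (z + w) = natCastVec z + natCastVec w := by
  funext j; simp [natCastVec]

lemma natCastVec_sum {m : ℕ} {ι : Type*} (s : Finset ι) (f : ι → Fin m → ℕ) :
    natCastVec (∑ i ∈ s, f i) = ∑ i ∈ s, natCastVec (f i) := by
  funext j; simp [natCastVec]

lemma natCastVec_smul {m : ℕ} (t : ℕ) (z : Fin m → ℕ) :
    natCastVec (t • z) = (t : ℤ) • natCastVec z := by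
  funext j; simp [natCastVec]

lemma natCastVec_sub {m : ℕ} {z w : Fin m → ℕ} (h : w ≤ z) :
    natCastVec (z - w) = natCastVec z - natCastVec w := by
  funext j
  simp only [natCastVec, Pi.sub_apply]
  exact_mod_cast Nat.cast_sub (h j)

/-- the set of minimal elements of a set of ℕ-vectors -/
def minimals {m : ℕ} (T : Set (Fin m → ℕ)) : Set (Fin m → ℕ) :=
  {b ∈ T | ∀ y ∈ T, y ≤ b → y = b}

lemma minimals_finite {m : ℕ} (T : Set (Fin m → ℕ)) : (minimals T).Finite := by
  have hpwo : (minimals T).IsPWO := myPWO _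
  have hanti : IsAntichain (· ≤ ·) (minimals T) := by
    intro b hb y hy hne hle
    exact hne (hy.2 b hb.1 hle)
  exact hanti.finite_of_partiallyWellOrderedOn hpwo

lemma exists_minimal_le {m : ℕ} (T : Set (Fin m → ℕ)) {z : Fin m → ℕ} (hz : z ∈ T) :
    ∃ b ∈ minimals T, b ≤ z := by
  have hwf : {y ∈ T | y ≤ z}.IsWF := (myPWO _).isWF
  have hne : {y ∈ T | y ≤ z}.Nonempty := ⟨z, hz, le_refl z⟩
  have hb := hwf.min_mem hne
  refine ⟨hwf.min hne, ⟨hb.1, ?_⟩, hb.2⟩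
  intro y hy hyb
  by_contra hney
  exact hwf.not_lt_min hne ⟨hy, le_trans hyb hb.2⟩ (lt_of_le_of_ne hyb hney)

end Part1

section Struct

variable {n m : ℕ} (A : Matrix (Fin n) (Fin m) ℤ) (a : Fin n → ℤ)

def HomPos (A : Matrix (Fin n) (Fin m) ℤ) : Set (Fin m → ℕ) :=
  {h | A.mulVec (natCastVec h) = 0 ∧ h ≠ 0}

lemma sum_pos_of_ne_zero {w : Fin m → ℕ} (hw : w ≠ 0) : 1 ≤ ∑ j, w j := by
  rcases Function.ne_iff.mp hw with ⟨j, hj⟩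
  calc 1 ≤ w j := Nat.one_le_iff_ne_zero.mpr hj
  _ ≤ ∑ j, w j := Finset.single_le_sum (fun _ _ => Nat.zero_le _) (Finset.mem_univ j)

lemma hom_decomp (l : List (Fin m → ℕ))
    (hl : ∀ h, h ∈ minimals (HomPos A) → h ∈ l) :
    ∀ (N : ℕ) (w : Fin m → ℕ), (∑ j, w j) ≤ N → A.mulVec (natCastVec w) = 0 →
    ∃ x : Fin l.length → ℕ, w = ∑ i, x i • l.get i := by
  intro N
  induction N with
  | zero =>
    intro w hw _
    refine ⟨0, ?_⟩
    have : w = 0 := by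
      funext j
      have : w j ≤ 0 := le_trans
        (Finset.single_le_sum (fun _ _ => Nat.zero_le _) (Finset.mem_univ j)) hw
      simpa using Nat.le_zero.mp this
    simp [this]
  | succ N ih =>
    intro w hw heq
    by_cases hw0 : w = 0
    · exact ⟨0, by simp [hw0]⟩
    · obtain ⟨h, hmem, hle⟩ := exists_minimal_le (HomPos A) (z := w) ⟨heq, hw0⟩
      obtain ⟨i₀, hi₀⟩ := List.mem_iff_get.mp (hl h hmem)
      have hhw : h ≤ w := hle
      have hhom : A.mulVec (natCastVec h) = 0 := hmem.1.1
      have hne : h ≠ 0 := hmem.1.2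
      have hsub : A.mulVec (natCastVec (w - h)) = 0 := by
        rw [natCastVec_sub hhw, Matrix.mulVec_sub, heq, hhom, sub_zero]
      have hsum : (∑ j, (w - h) j) ≤ N := by
        have h1 : (∑ j, (w - h) j) + (∑ j, h j) = ∑ j, w j := by
          rw [← Finset.sum_add_distrib]
          refine Finset.sum_congr rfl fun j _ => ?_
          have hj : h j ≤ w j := hhw j
          simp only [Pi.sub_apply]
          omega
        have h2 := sum_pos_of_ne_zero hne
        omega
      obtain ⟨x', hx'⟩ := ih (w - h) hsum hsub
      refine ⟨fun i => x' i + (if i = i₀ then 1 else 0), ?_⟩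
      have hw' : w = (w - h) + h := by
        funext j; have hj : h j ≤ w j := hhw j
        simp only [Pi.sub_apply, Pi.add_apply]; omega
      rw [hw', hx']
      have : ∀ i : Fin l.length,
          (x' i + (if i = i₀ then 1 else 0)) • l.get i
            = x' i • l.get i + (if i = i₀ then l.get i₀ else 0) := by
        intro i
        by_cases hii : i = i₀ <;> simp [hii, add_smul]
      rw [Finset.sum_congr rfl (fun i _ => this i), Finset.sum_add_distrib]
      have hsum2 : (∑ i : Fin l.length, (if i = i₀ then l.get i₀ else 0)) = h := by
        rw [Finset.sum_ite_eq' Finset.univ i₀ (fun _ => l.get i₀)]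
        simpa using hi₀
      rw [hsum2]

end Struct

section Assemble

lemma mulVec_sum' {α : Type*} [NonUnitalNonAssocSemiring α] {k m : ℕ}
    (M : Matrix (Fin k) (Fin m) α) {ι : Type*} (s : Finset ι) (f : ι → Fin m → α) :
    M.mulVec (∑ i ∈ s, f i) = ∑ i ∈ s, M.mulVec (f i) := by
  classical
  induction s using Finset.cons_induction with
  | empty => simp [Matrix.mulVec_zero]
  | cons i s hi ih =>
    rw [Finset.sum_cons, Finset.sum_cons, Matrix.mulVec_add, ih]

theorem semilinear_part {n m k : ℕ} (A : Matrix (Fin n) (Fin m) ℤ) (a : Fin n → ℤ)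
    (C : Matrix (Fin k) (Fin m) ℕ) (c : Fin k → ℕ) :
    IsSemilinear {v : Fin k → ℕ | ∃ z : Fin m → ℕ,
      A.mulVec (natCastVec z) = a ∧ v = C.mulVec z + c} := by
  classical
  set Sol := {z : Fin m → ℕ | A.mulVec (natCastVec z) = a} with hSol
  have hBfin := minimals_finite Sol
  have hHfin := minimals_finite (HomPos A)
  set lB := hBfin.toFinset.toList with hlB
  set lH := hHfin.toFinset.toList with hlH
  have hmemB : ∀ b, b ∈ lB ↔ b ∈ minimals Sol := by
    intro b; rw [hlB, Finset.mem_toList, Set.Finite.mem_toFinset]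
  have hmemH : ∀ h, h ∈ lH ↔ h ∈ minimals (HomPos A) := by
    intro h; rw [hlH, Finset.mem_toList, Set.Finite.mem_toFinset]
  have hCsum : ∀ (N : ℕ) (x : Fin N → ℕ) (g : Fin N → Fin m → ℕ),
      C.mulVec (∑ i, x i • g i) = ∑ i, x i • C.mulVec (g i) := by
    intro N x g
    rw [mulVec_sum']
    exact Finset.sum_congr rfl fun i _ => Matrix.mulVec_smul C (x i) (g i)
  refine ⟨lB.length, fun i => C.mulVec (lB.get i) + c, fun _ => lH.length,
    fun i j => C.mulVec (lH.get j), ?_⟩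
  ext v
  simp only [Set.mem_setOf_eq]
  constructor
  · rintro ⟨z, hz, rfl⟩
    obtain ⟨b, hbmin, hbz⟩ := exists_minimal_le Sol hz
    obtain ⟨i, hi⟩ := List.mem_iff_get.mp ((hmemB b).mpr hbmin)
    have hbsol : A.mulVec (natCastVec b) = a := hbmin.1
    have hhom : A.mulVec (natCastVec (z - b)) = 0 := by
      rw [natCastVec_sub hbz, Matrix.mulVec_sub, hz, hbsol, sub_self]
    obtain ⟨x, hx⟩ := hom_decomp A lH (fun h hm => (hmemH h).mpr hm)
      (∑ j, (z - b) j) (z - b) le_rfl hhom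
    refine ⟨i, x, ?_⟩
    have hzb : z = b + (z - b) := by
      funext j; have hj : b j ≤ z j := hbz j
      simp only [Pi.add_apply, Pi.sub_apply]; omega
    rw [hzb, hx, Matrix.mulVec_add, hCsum, hi]
    funext j'
    simp only [Pi.add_apply, Finset.sum_apply]
    ring
  · rintro ⟨i, x, rfl⟩
    have hb : lB.get i ∈ minimals Sol := (hmemB _).mp (List.get_mem lB i)
    have hbsol : A.mulVec (natCastVec (lB.get i)) = a := hb.1
    have hhj : ∀ j, A.mulVec (natCastVec (lH.get j)) = 0 :=
      fun j => ((hmemH _).mp (List.get_mem lH j)).1.1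
    refine ⟨lB.get i + ∑ j, x j • lH.get j, ?_, ?_⟩
    · have h1 : natCastVec (∑ j, x j • lH.get j)
          = ∑ j, (x j : ℤ) • natCastVec (lH.get j) := by
        rw [natCastVec_sum]
        exact Finset.sum_congr rfl fun j _ => natCastVec_smul _ _
      rw [natCastVec_add, h1, Matrix.mulVec_add, hbsol, mulVec_sum']
      have h2 : ∀ j : Fin lH.length,
          A.mulVec ((x j : ℤ) • natCastVec (lH.get j)) = 0 := by
        intro j
        rw [Matrix.mulVec_smul, hhj, smul_zero]
      rw [Finset.sum_congr rfl fun j _ => h2 j]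
      simp
    · rw [Matrix.mulVec_add, hCsum]
      funext j'
      simp only [Pi.add_apply, Finset.sum_apply]
      ring

end Assemble

lemma abs_det_le {s : ℕ} (M : Matrix (Fin s) (Fin s) ℤ) (b : ℤ)
    (hb : 0 ≤ b) (h : ∀ i j, |M i j| ≤ b) : |M.det| ≤ (s.factorial : ℤ) * b ^ s := by
  rw [Matrix.det_apply]
  calc |∑ σ : Equiv.Perm (Fin s), Equiv.Perm.sign σ • ∏ i, M (σ i) i|
      ≤ ∑ σ : Equiv.Perm (Fin s), |Equiv.Perm.sign σ • ∏ i, M (σ i) i| :=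
        Finset.abs_sum_le_sum_abs _ _
    _ ≤ ∑ _σ : Equiv.Perm (Fin s), b ^ s := by
        refine Finset.sum_le_sum fun σ _ => ?_
        have h1 : |Equiv.Perm.sign σ • ∏ i, M (σ i) i| = |∏ i, M (σ i) i| := by
          rcases Int.units_eq_one_or (Equiv.Perm.sign σ) with h' | h' <;>
            simp [h', Units.smul_def]
        rw [h1]
        rw [Finset.abs_prod]
        calc ∏ i, |M (σ i) i| ≤ ∏ _i : Fin s, b :=
              Finset.prod_le_prod (fun i _ => abs_nonneg _) (fun i _ => h (σ i) i)
          _ = b ^ s := by simp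
    _ = (s.factorial : ℤ) * b ^ s := by
        rw [Finset.sum_const, Finset.card_univ, Fintype.card_perm]
        simp [nsmul_eq_mul, Fintype.card_fin]

lemma fact_pow_mono {s N : ℕ} {b : ℤ} (hs : s ≤ N) (hb : 1 ≤ b) :
    (s.factorial : ℤ) * b ^ s ≤ (N.factorial : ℤ) * b ^ N := by
  have h1 : (s.factorial : ℤ) ≤ N.factorial := by
    exact_mod_cast Nat.factorial_le hs
  have h2 : b ^ s ≤ b ^ N := pow_le_pow_right₀ hb hs
  have := pow_pos (lt_of_lt_of_le one_pos hb) s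
  have h3 : (0:ℤ) < (N.factorial : ℤ) := by exact_mod_cast Nat.factorial_pos N
  nlinarith

lemma exists_rows {n s : ℕ} (M : Matrix (Fin n) (Fin s) ℚ)
    (h : LinearIndependent ℚ (fun j : Fin s => Mᵀ j)) :
    ∃ r : Fin s → Fin n, Function.Injective r ∧ (M.submatrix r id).det ≠ 0 := by
  classical
  -- the rows of M span ℚ^s
  have hinj : Function.Injective M.mulVecLin := by
    have := Matrix.mulVec_injective_iff (M := M).mpr h
    intro x y hxy
    exact this hxy
  have hrank : M.rank = s := by
    rw [Matrix.rank, LinearMap.finrank_range_of_inj hinj]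
    simp [Module.finrank_fin_fun]
  have hrankT : Mᵀ.rank = s := by rw [Matrix.rank_transpose]; exact hrank
  have hspan : Submodule.span ℚ (Set.range M) = ⊤ := by
    have h2 := Matrix.range_mulVecLin Mᵀ
    rw [Matrix.col, Matrix.transpose_transpose] at h2
    have h1 : Module.finrank ℚ (Submodule.span ℚ (Set.range M)) = s := by
      rw [← h2]; exact hrankT
    apply Submodule.eq_top_of_finrank_eq
    rw [h1]
    simp [Module.finrank_fin_fun]
  obtain ⟨b, hb_sub, hb_span, hb_li⟩ := exists_linearIndependent ℚ (Set.range M)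
  rw [hspan] at hb_span
  have hb_fin : b.Finite := hb_li.setFinite
  haveI := hb_fin.fintype
  have hb_card : Fintype.card b = s := by
    have h1 := finrank_span_set_eq_card hb_li
    have h3 : Module.finrank ℚ (⊤ : Submodule ℚ (Fin s → ℚ)) = s := by
      simp [Module.finrank_fin_fun]
    rw [hb_span, h3] at h1
    rw [← Set.toFinset_card]
    omega
  let e : Fin s ≃ b := (Fintype.equivFinOfCardEq hb_card).symm
  have hpick : ∀ p : Fin s, ∃ i : Fin n, M i = (e p : Fin s → ℚ) :=
    fun p => hb_sub (e p).2
  choose r hr using hpick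
  have hrinj : Function.Injective r := by
    intro p q hpq
    have : (e p : Fin s → ℚ) = (e q : Fin s → ℚ) := by rw [← hr p, ← hr q, hpq]
    exact e.injective (Subtype.ext this)
  refine ⟨r, hrinj, ?_⟩
  intro hdet
  obtain ⟨v, hv0, hv⟩ := (Matrix.exists_vecMul_eq_zero_iff).mpr hdet
  have hli : LinearIndependent ℚ (fun p : Fin s => (e p : Fin s → ℚ)) :=
    hb_li.comp e e.injective
  have hsum : ∑ p, v p • ((e p : ↑b) : Fin s → ℚ) = 0 := by
    funext j
    have h3 := congrFun hv j
    simp only [Matrix.vecMul, dotProduct, Matrix.submatrix_apply, id_eq,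
      Pi.zero_apply] at h3
    simp only [Finset.sum_apply, Pi.smul_apply, smul_eq_mul, Pi.zero_apply]
    rw [← h3]
    exact Finset.sum_congr rfl fun p _ => by rw [hr p]
  exact hv0 (funext fun p => Fintype.linearIndependent_iff.mp hli v hsum p)

lemma exists_small_kernel {n m : ℕ} (A : Matrix (Fin n) (Fin m) ℤ) (β : ℤ) (hβ : 1 ≤ β)
    (hA : ∀ i j, |A i j| ≤ β) (S : Finset (Fin m))
    (hdep : ¬ LinearIndependent ℚ (fun j : S => fun i => (A i (j : Fin m) : ℚ))) :
    ∃ u : Fin m → ℤ, u ≠ 0 ∧ (∀ j, j ∉ S → u j = 0) ∧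
      (∀ i, ∑ j, A i j * u j = 0) ∧ (∀ j, |u j| ≤ (n.factorial : ℤ) * β ^ n) := by
  classical
  set colQ : Fin m → (Fin n → ℚ) := fun j i => (A i j : ℚ) with hcolQ
  set V : Submodule ℚ (Fin n → ℚ) := Submodule.span ℚ (colQ '' ↑S) with hV
  -- extract an independent spanning subset of the columns of S
  obtain ⟨b, hb_sub, hb_span, hb_li⟩ := exists_linearIndependent ℚ (colQ '' ↑S)
  have hb_fin : b.Finite := hb_li.setFinite
  haveI := hb_fin.fintype
  have hbV : ∀ v ∈ b, v ∈ V := fun v hv => Submodule.subset_span (hb_sub hv)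
  have hs_card : Fintype.card b = Module.finrank ℚ V := by
    have h1 := finrank_span_set_eq_card hb_li
    rw [hb_span] at h1
    rw [← Set.toFinset_card, ← h1]
  set s : ℕ := Module.finrank ℚ V with hs
  have hsn : s ≤ n := by
    have := Submodule.finrank_le V
    simpa [Module.finrank_fin_fun] using this
  -- choose indices for b
  have hpick : ∀ v : b, ∃ j : Fin m, j ∈ S ∧ colQ j = v := by
    intro v
    obtain ⟨j, hj, hjv⟩ := hb_sub v.2
    exact ⟨j, hj, hjv⟩
  choose g₀ hg₀S hg₀ using hpick
  have hg₀inj : Function.Injective g₀ := by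
    intro v w hvw
    apply Subtype.ext
    rw [← hg₀ v, ← hg₀ w, hvw]
  set T₀ : Finset (Fin m) := Finset.univ.image g₀ with hT₀
  have hT₀S : T₀ ⊆ S := by
    intro j hj
    obtain ⟨v, _, rfl⟩ := Finset.mem_image.mp hj
    exact hg₀S v
  have hT₀card : T₀.card = s := by
    rw [hT₀, Finset.card_image_of_injective _ hg₀inj]
    simp [hs_card]
  have hcolQT₀inj : ∀ j ∈ T₀, ∀ j' ∈ T₀, colQ j = colQ j' → j = j' := by
    intro j hj j' hj' hcc
    obtain ⟨v, _, rfl⟩ := Finset.mem_image.mp hj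
    obtain ⟨w, _, rfl⟩ := Finset.mem_image.mp hj'
    have : v = w := by
      apply Subtype.ext
      rw [← hg₀ v, ← hg₀ w, hcc]
    rw [this]
  have hmemb : ∀ j ∈ T₀, colQ j ∈ b := by
    intro j hj
    obtain ⟨v, _, rfl⟩ := Finset.mem_image.mp hj
    rw [hg₀ v]; exact v.2
  -- there is an extra column j₀ ∈ S \ T₀
  have hj₀ : ∃ j₀ ∈ S, j₀ ∉ T₀ := by
    by_contra hcon
    push_neg at hcon
    have hST : S = T₀ := Finset.Subset.antisymm hcon hT₀S
    apply hdep
    -- the family on T₀ is linearly independent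
    set ψ : b → T₀ := fun v => (⟨g₀ v, Finset.mem_image.mpr
        ⟨v, Finset.mem_univ v, rfl⟩⟩ : T₀) with hψ
    have hψinj : Function.Injective ψ := by
      intro v w hvw
      exact hg₀inj (congrArg Subtype.val hvw)
    have hψbij : Function.Bijective ψ := by
      refine (Fintype.bijective_iff_injective_and_card _).mpr ⟨hψinj, ?_⟩
      rw [hs_card, Fintype.card_coe, hT₀card]
    set φ : b ≃ T₀ := Equiv.ofBijective _ hψbij with hφ
    have hkey : ∀ j : T₀, (fun i => (A i (j : Fin m) : ℚ)) = (φ.symm j : Fin n → ℚ) := by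
      intro j
      have h1 : φ (φ.symm j) = j := φ.apply_symm_apply j
      have h2 : g₀ (φ.symm j) = (j : Fin m) := congrArg Subtype.val h1
      rw [← h2]
      exact hg₀ (φ.symm j)
    have hli : LinearIndependent ℚ (fun j : T₀ => fun i => (A i (j : Fin m) : ℚ)) := by
      have hfe : (fun j : T₀ => fun i => (A i (j : Fin m) : ℚ))
          = Subtype.val ∘ φ.symm := funext hkey
      rw [hfe]
      exact hb_li.comp φ.symm φ.symm.injective
    rw [hST]
    exact hli
  obtain ⟨j₀, hj₀S, hj₀T⟩ := hj₀
  set T : Finset (Fin m) := insert j₀ T₀ with hT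
  have hTcard : T.card = s + 1 := by
    rw [hT, Finset.card_insert_of_notMem hj₀T, hT₀card]
  have hTS : T ⊆ S := Finset.insert_subset hj₀S hT₀S
  set e := T.orderIsoOfFin hTcard with he
  set g : Fin (s+1) → Fin m := fun q => (e q : Fin m) with hg
  have hginj : Function.Injective g := fun q q' hqq => e.injective (Subtype.ext hqq)
  have hgT : ∀ q, g q ∈ T := fun q => (e q).2
  set q₀ : Fin (s+1) := e.symm ⟨j₀, Finset.mem_insert_self _ _⟩ with hq₀def
  have hq₀ : g q₀ = j₀ := congrArg Subtype.val (e.apply_symm_apply _)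
  have hgT₀ : ∀ q, q ≠ q₀ → g q ∈ T₀ := by
    intro q hq
    rcases Finset.mem_insert.mp (hgT q) with h' | h'
    · exact absurd (hginj (h'.trans hq₀.symm)) hq
    · exact h'
  have hcolV : ∀ q, colQ (g q) ∈ V := by
    intro q
    by_cases hq : q = q₀
    · subst hq
      rw [hq₀]
      exact Submodule.subset_span ⟨j₀, hj₀S, rfl⟩
    · exact hbV _ (hmemb _ (hgT₀ q hq))
  have hnotli : ¬ LinearIndependent ℚ (fun q : Fin (s+1) => colQ (g q)) := by
    intro hcon
    have hvv : LinearIndependent ℚ (fun q : Fin (s+1) => (⟨colQ (g q), hcolV q⟩ : V)) := by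
      apply LinearIndependent.of_comp V.subtype
      exact hcon
    have := hvv.fintype_card_le_finrank
    simp only [Fintype.card_fin, ← hs] at this
    omega
  obtain ⟨c, hcsum, q₁, hq₁⟩ := Fintype.not_linearIndependent_iff.mp hnotli
  have hc0 : c ≠ 0 := Function.ne_iff.mpr ⟨q₁, hq₁⟩
  -- the matrix W of the independent columns
  set W : Matrix (Fin n) (Fin s) ℚ := fun i p => colQ (g (q₀.succAbove p)) i with hW
  have hWli : LinearIndependent ℚ (fun p : Fin s => Wᵀ p) := by
    have hmem : ∀ p : Fin s, colQ (g (q₀.succAbove p)) ∈ b :=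
      fun p => hmemb _ (hgT₀ _ (Fin.succAbove_ne q₀ p))
    set τ : Fin s → b := fun p => ⟨colQ (g (q₀.succAbove p)), hmem p⟩ with hτ
    have hτinj : Function.Injective τ := by
      intro p p' hpp
      have h1 : colQ (g (q₀.succAbove p)) = colQ (g (q₀.succAbove p')) :=
        congrArg Subtype.val hpp
      have h2 := hcolQT₀inj _ (hgT₀ _ (Fin.succAbove_ne q₀ p)) _
        (hgT₀ _ (Fin.succAbove_ne q₀ p')) h1
      exact Fin.succAbove_right_injective (hginj h2)
    exact hb_li.comp τ hτinj
  obtain ⟨r, hrinj, hrdet⟩ := exists_rows W hWli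
  -- the candidate kernel vector, via cofactor minors
  set Mq : Fin (s+1) → Matrix (Fin s) (Fin s) ℤ :=
    fun q => fun p p' => A (r p) (g (q.succAbove p')) with hMq
  set uu : Fin (s+1) → ℤ := fun q => (-1)^(q:ℕ) * (Mq q).det with huu
  set u : Fin m → ℤ := fun j => if hj : j ∈ T then uu (e.symm ⟨j, hj⟩) else 0 with hu
  have hu_g : ∀ q, u (g q) = uu q := by
    intro q
    have hmem : g q ∈ T := hgT q
    rw [hu]
    simp only [hmem, dif_pos]
    congr 1
    have : (⟨g q, hmem⟩ : T) = e q := Subtype.ext rfl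
    rw [this, OrderIso.symm_apply_apply]
  have hu_off : ∀ j, j ∉ T → u j = 0 := by
    intro j hj
    rw [hu]; exact dif_neg hj
  -- nonvanishing
  have hcast : (Mq q₀).map (Int.cast : ℤ → ℚ) = W.submatrix r id := by
    ext p p'
    rfl
  have hdet0 : (Mq q₀).det ≠ 0 := by
    intro hcon
    apply hrdet
    have h1 := RingHom.map_det (Int.castRingHom ℚ) (Mq q₀)
    rw [RingHom.mapMatrix_apply] at h1
    simp only [Int.coe_castRingHom] at h1
    rw [← hcast, ← h1, hcon]
    simp
  have hune : u ≠ 0 := by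
    apply Function.ne_iff.mpr
    refine ⟨g q₀, ?_⟩
    rw [hu_g q₀]
    simp only [huu, Pi.zero_apply]
    exact mul_ne_zero (pow_ne_zero _ (by norm_num)) hdet0
  refine ⟨u, hune, fun j hj => hu_off j (fun hjT => hj (hTS hjT)), ?_, ?_⟩
  · -- the kernel equation
    intro i
    have hstep1 : ∑ j, A i j * u j = ∑ j ∈ T, A i j * u j := by
      symm
      apply Finset.sum_subset (Finset.subset_univ T)
      intro j _ hj
      rw [hu_off j hj, mul_zero]
    have hstep2 : ∑ j ∈ T, A i j * u j = ∑ q, A i (g q) * uu q := by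
      rw [← Finset.sum_coe_sort T (fun j => A i j * u j),
        ← Equiv.sum_comp e.toEquiv (fun j : T => A i (j : Fin m) * u (j : Fin m))]
      exact Finset.sum_congr rfl fun q _ => by rw [← hu_g q]; rfl
    set B : Matrix (Fin (s+1)) (Fin (s+1)) ℤ :=
      Matrix.of (Fin.cons (fun q => A i (g q)) (fun p q => A (r p) (g q))) with hB
    have hBdet : B.det = ∑ q, A i (g q) * uu q := by
      rw [Matrix.det_succ_row_zero]
      refine Finset.sum_congr rfl fun q _ => ?_
      have h1 : B 0 q = A i (g q) := rfl
      have h2 : B.submatrix Fin.succ q.succAbove = Mq q := by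
        ext p p'
        simp [hB, Matrix.submatrix_apply, Fin.cons_succ, hMq]
      rw [h1, h2]
      simp only [huu]
      ring
    have hBdet0 : B.det = 0 := by
      have hvec : (B.map (Int.cast : ℤ → ℚ)).mulVec c = 0 := by
        funext p
        have hrow : ∀ i' : Fin n, ∑ q, (A i' (g q) : ℚ) * c q = 0 := by
          intro i'
          have := congrFun hcsum i'
          simp only [Finset.sum_apply, Pi.smul_apply, smul_eq_mul, Pi.zero_apply] at this
          rw [← this]
          exact Finset.sum_congr rfl fun q _ => by rw [mul_comm]
        refine Fin.cases ?_ ?_ p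
        · simp only [Matrix.mulVec, dotProduct, Matrix.map_apply, Pi.zero_apply]
          show ∑ q, ((B 0 q : ℤ) : ℚ) * c q = 0
          have hB0 : ∀ q, B 0 q = A i (g q) := fun q => rfl
          simp only [hB0]
          exact hrow i
        · intro p'
          simp only [Matrix.mulVec, dotProduct, Matrix.map_apply, Pi.zero_apply]
          show ∑ q, ((B p'.succ q : ℤ) : ℚ) * c q = 0
          have hBp : ∀ q, B p'.succ q = A (r p') (g q) := fun q => rfl
          simp only [hBp]
          exact hrow (r p')
      have hdetq : (B.map (Int.cast : ℤ → ℚ)).det = 0 :=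
        Matrix.exists_mulVec_eq_zero_iff.mp ⟨c, hc0, hvec⟩
      have h1 := RingHom.map_det (Int.castRingHom ℚ) B
      rw [RingHom.mapMatrix_apply] at h1
      simp only [Int.coe_castRingHom] at h1
      rw [hdetq] at h1
      exact_mod_cast h1
    rw [hstep1, hstep2, ← hBdet, hBdet0]
  · -- the bound
    intro j
    by_cases hj : j ∈ T
    · have hju : u j = uu (e.symm ⟨j, hj⟩) := by rw [hu]; exact dif_pos hj
      rw [hju]
      simp only [huu]
      rw [abs_mul, abs_pow, abs_neg, abs_one, one_pow, one_mul]
      calc |(Mq (e.symm ⟨j, hj⟩)).det| ≤ (s.factorial : ℤ) * β ^ s :=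
            abs_det_le _ β (le_trans zero_le_one hβ) (fun p p' => hA _ _)
        _ ≤ (n.factorial : ℤ) * β ^ n := fact_pow_mono hsn hβ
    · rw [hu_off j hj]
      simp only [abs_zero]
      positivity

lemma indep_support_bound {n m : ℕ} (A : Matrix (Fin n) (Fin m) ℤ) (a : Fin n → ℤ) (β : ℤ)
    (hβ : 1 ≤ β) (hA : ∀ i j, |A i j| ≤ β) (ha : ∀ i, |a i| ≤ β)
    (S : Finset (Fin m)) (z : Fin m → ℚ)
    (hzS : ∀ j, j ∉ S → z j = 0)
    (heq : ∀ i, ∑ j, (A i j : ℚ) * z j = (a i : ℚ))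
    (hind : LinearIndependent ℚ (fun j : S => fun i => (A i (j : Fin m) : ℚ))) :
    ∀ j, |z j| ≤ (((n.factorial : ℤ) * β ^ n : ℤ) : ℚ) := by
  classical
  have hΔpos : (0:ℤ) ≤ (n.factorial : ℤ) * β ^ n := by positivity
  set s := S.card with hscard
  set eS := S.orderIsoOfFin rfl with heS
  set g : Fin s → Fin m := fun p => (eS p : Fin m) with hg
  have hginj : Function.Injective g := fun p q h => eS.injective (Subtype.ext h)
  have hgS : ∀ p, g p ∈ S := fun p => (eS p).2
  have hsn : s ≤ n := by
    have := hind.fintype_card_le_finrank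
    simpa [Module.finrank_fin_fun, hscard] using this
  set M : Matrix (Fin n) (Fin s) ℚ := fun i p => (A i (g p) : ℚ) with hM
  have hMli : LinearIndependent ℚ (fun p : Fin s => Mᵀ p) := by
    have h1 : (fun p : Fin s => Mᵀ p)
        = (fun j : S => fun i => (A i (j : Fin m) : ℚ)) ∘ (fun p => eS p) := rfl
    rw [h1]
    exact hind.comp _ (fun p q h => eS.injective h)
  obtain ⟨r, hrinj, hrdet⟩ := exists_rows M hMli
  set N : Matrix (Fin s) (Fin s) ℚ := M.submatrix r id with hN
  set Nz : Matrix (Fin s) (Fin s) ℤ := fun p p' => A (r p) (g p') with hNz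
  have hNcast : Nz.map (Int.cast : ℤ → ℚ) = N := by
    ext p p'; rfl
  set bvec : Fin s → ℚ := fun p => (a (r p) : ℚ) with hbvec
  set x : Fin s → ℚ := fun p => z (g p) with hx
  have hsys : N.mulVec x = bvec := by
    funext p
    have h1 := heq (r p)
    have h2 : ∑ j, (A (r p) j : ℚ) * z j = ∑ j ∈ S, (A (r p) j : ℚ) * z j := by
      symm
      apply Finset.sum_subset (Finset.subset_univ S)
      intro j _ hj
      rw [hzS j hj, mul_zero]
    have h3 : ∑ j ∈ S, (A (r p) j : ℚ) * z j = ∑ p', (A (r p) (g p') : ℚ) * z (g p') := by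
      rw [← Finset.sum_coe_sort S (fun j => (A (r p) j : ℚ) * z j),
        ← Equiv.sum_comp eS.toEquiv (fun j : S => (A (r p) (j : Fin m) : ℚ) * z (j : Fin m))]
      rfl
    simp only [Matrix.mulVec, dotProduct]
    show ∑ p', N p p' * x p' = bvec p
    calc ∑ p', N p p' * x p' = ∑ p', (A (r p) (g p') : ℚ) * z (g p') := rfl
      _ = ∑ j ∈ S, (A (r p) j : ℚ) * z j := h3.symm
      _ = (a (r p) : ℚ) := by rw [← h2]; exact h1
  have hNunit : IsUnit N := (Matrix.isUnit_iff_isUnit_det N).mpr (isUnit_iff_ne_zero.mpr hrdet)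
  have hxdet : x = N.det⁻¹ • Matrix.cramer N bvec := by
    have hinj : Function.Injective N.mulVec := Matrix.mulVec_injective_iff_isUnit.mpr hNunit
    apply hinj
    rw [hsys, Matrix.mulVec_smul, Matrix.mulVec_cramer, smul_smul,
      inv_mul_cancel₀ hrdet, one_smul]
  -- |det N| ≥ 1
  have hNzdet : ((Nz.det : ℤ) : ℚ) = N.det := by
    have h1 := RingHom.map_det (Int.castRingHom ℚ) Nz
    rw [RingHom.mapMatrix_apply] at h1
    simp only [Int.coe_castRingHom] at h1
    rw [h1, hNcast]
  have hNzdet0 : Nz.det ≠ 0 := by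
    intro hcon
    rw [← hNzdet, hcon] at hrdet
    simp at hrdet
  have hdetge : (1:ℚ) ≤ |N.det| := by
    rw [← hNzdet]
    have : (1:ℤ) ≤ |Nz.det| := Int.one_le_abs hNzdet0
    calc (1:ℚ) = ((1:ℤ):ℚ) := by norm_num
      _ ≤ ((|Nz.det| : ℤ) : ℚ) := by exact_mod_cast this
      _ = |((Nz.det : ℤ) : ℚ)| := by rw [Int.cast_abs]
  intro j
  by_cases hj : j ∈ S
  · set p := eS.symm ⟨j, hj⟩ with hp
    have hgp : g p = j := congrArg Subtype.val (eS.apply_symm_apply _)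
    have hzj : z j = x p := by simp only [hx]; rw [hgp]
    rw [hzj, hxdet]
    simp only [Pi.smul_apply, smul_eq_mul, Matrix.cramer_apply]
    -- bound the updated determinant
    set Uz : Matrix (Fin s) (Fin s) ℤ := Nz.updateCol p (fun p' => a (r p')) with hUz
    have hUcast : Uz.map (Int.cast : ℤ → ℚ) = N.updateCol p bvec := by
      ext p1 p2
      by_cases hp2 : p2 = p <;>
        simp [hUz, Matrix.updateCol_apply, hp2, Matrix.map_apply, hNcast.symm, hbvec]
    have hUdet : ((Uz.det : ℤ) : ℚ) = (N.updateCol p bvec).det := by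
      have h1 := RingHom.map_det (Int.castRingHom ℚ) Uz
      rw [RingHom.mapMatrix_apply] at h1
      simp only [Int.coe_castRingHom] at h1
      rw [h1, hUcast]
    have hUbound : |Uz.det| ≤ (s.factorial : ℤ) * β ^ s := by
      apply abs_det_le _ β (le_trans zero_le_one hβ)
      intro p1 p2
      by_cases hp2 : p2 = p <;> simp [hUz, Matrix.updateCol_apply, hp2]
      · exact ha _
      · exact hA _ _
    have hUQ : |(N.updateCol p bvec).det| ≤ (((n.factorial : ℤ) * β ^ n : ℤ) : ℚ) := by
      rw [← hUdet]
      have h2 : |Uz.det| ≤ (n.factorial : ℤ) * β ^ n :=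
        le_trans hUbound (fact_pow_mono hsn hβ)
      calc |((Uz.det : ℤ) : ℚ)| = ((|Uz.det| : ℤ) : ℚ) := by rw [Int.cast_abs]
        _ ≤ (((n.factorial : ℤ) * β ^ n : ℤ) : ℚ) := by exact_mod_cast h2
    calc |N.det⁻¹ * (N.updateCol p bvec).det|
        = |N.det|⁻¹ * |(N.updateCol p bvec).det| := by rw [abs_mul, abs_inv]
      _ ≤ 1 * |(N.updateCol p bvec).det| := by
          apply mul_le_mul_of_nonneg_right _ (abs_nonneg _)
          rw [inv_le_one_iff₀]  -- might need different lemma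
          right; exact hdetge
      _ = |(N.updateCol p bvec).det| := one_mul _
      _ ≤ _ := hUQ
  · rw [hzS j hj]
    simp only [abs_zero]
    exact_mod_cast hΔpos

/-- a ray: nonnegative integer kernel vector with small entries -/
def GoodRay {n m : ℕ} (A : Matrix (Fin n) (Fin m) ℤ) (Δ : ℤ) (d : Fin m → ℤ) : Prop :=
  (∀ j, 0 ≤ d j) ∧ (∀ i, ∑ j, A i j * d j = 0) ∧ (∀ j, d j ≤ Δ)

/-- decomposition of a rational solution into a small solution plus rays -/
def HasDecomp {n m : ℕ} (A : Matrix (Fin n) (Fin m) ℤ) (a : Fin n → ℤ) (Δ : ℤ)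
    (z : Fin m → ℚ) (p : ℕ) : Prop :=
  ∃ (w : Fin m → ℚ) (d : Fin p → Fin m → ℤ) (μ : Fin p → ℚ),
    (∀ j, 0 ≤ w j) ∧ (∀ i, ∑ j, (A i j : ℚ) * w j = (a i : ℚ)) ∧ (∀ j, w j ≤ (Δ : ℚ)) ∧
    (∀ i, GoodRay A Δ (d i)) ∧ (∀ i, 0 ≤ μ i) ∧
    (∀ j, z j = w j + ∑ i, μ i * (d i j : ℚ))

lemma move_lemma {n m : ℕ} (A : Matrix (Fin n) (Fin m) ℤ) (a : Fin n → ℤ)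
    (S : Finset (Fin m)) (z : Fin m → ℚ)
    (hzpos : ∀ j ∈ S, 0 < z j) (hz0 : ∀ j, j ∉ S → z j = 0)
    (heq : ∀ i, ∑ j, (A i j : ℚ) * z j = (a i : ℚ))
    (v : Fin m → ℤ) (hvS : ∀ j, j ∉ S → v j = 0)
    (hvker : ∀ i, ∑ j, A i j * v j = 0)
    (hvpos : ∃ j, 0 < v j) :
    ∃ (j' : Fin m) (t : ℚ), j' ∈ S ∧ 0 < t ∧
      (∀ j, 0 ≤ z j - t * (v j : ℚ)) ∧
      (∀ j, j ∉ S.erase j' → z j - t * (v j : ℚ) = 0) ∧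
      (∀ i, ∑ j, (A i j : ℚ) * (z j - t * (v j : ℚ)) = (a i : ℚ)) := by
  classical
  set P : Finset (Fin m) := S.filter (fun j => 0 < v j) with hP
  have hPne : P.Nonempty := by
    obtain ⟨j, hj⟩ := hvpos
    have hjS : j ∈ S := by
      by_contra hc
      rw [hvS j hc] at hj
      exact lt_irrefl 0 hj
    exact ⟨j, Finset.mem_filter.mpr ⟨hjS, hj⟩⟩
  obtain ⟨j', hj'P, hj'min⟩ := Finset.exists_min_image P (fun j => z j / (v j : ℚ)) hPne
  have hj'S : j' ∈ S := (Finset.mem_filter.mp hj'P).1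
  have hvj' : 0 < v j' := (Finset.mem_filter.mp hj'P).2
  have hvj'Q : (0:ℚ) < (v j' : ℚ) := by exact_mod_cast hvj'
  set t : ℚ := z j' / (v j' : ℚ) with ht
  have htpos : 0 < t := div_pos (hzpos j' hj'S) hvj'Q
  have hkey : ∀ j, 0 ≤ z j - t * (v j : ℚ) := by
    intro j
    rcases le_or_gt (v j) 0 with hv | hv
    · have h1 : (v j : ℚ) ≤ 0 := by exact_mod_cast hv
      have h2 : 0 ≤ z j := by
        by_cases hjS : j ∈ S
        · exact le_of_lt (hzpos j hjS)
        · rw [hz0 j hjS]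
      nlinarith
    · have hjS : j ∈ S := by
        by_contra hc
        rw [hvS j hc] at hv
        exact lt_irrefl 0 hv
      have hjP : j ∈ P := Finset.mem_filter.mpr ⟨hjS, hv⟩
      have h1 := hj'min j hjP
      have hvQ : (0:ℚ) < (v j : ℚ) := by exact_mod_cast hv
      rw [ht] at *
      rw [div_le_div_iff₀ hvj'Q hvQ] at h1
      have h2 : z j' / (v j' : ℚ) * (v j : ℚ) ≤ z j := by
        rw [div_mul_eq_mul_div, div_le_iff₀ hvj'Q]
        nlinarith
      linarith
  refine ⟨j', t, hj'S, htpos, hkey, ?_, ?_⟩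
  · intro j hj
    by_cases hjS : j ∈ S
    · have hjj' : j = j' := by
        by_contra hc
        exact hj (Finset.mem_erase.mpr ⟨hc, hjS⟩)
      subst hjj'
      rw [ht]
      field_simp
      ring
    · rw [hz0 j hjS, hvS j hjS]
      simp
  · intro i
    have h1 : ∑ j, (A i j : ℚ) * (z j - t * (v j : ℚ))
        = ∑ j, (A i j : ℚ) * z j - t * ∑ j, (A i j : ℚ) * (v j : ℚ) := by
      rw [Finset.mul_sum, ← Finset.sum_sub_distrib]
      exact Finset.sum_congr rfl fun j _ => by ring
    have h2 : ∑ j, (A i j : ℚ) * (v j : ℚ) = 0 := by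
      have := hvker i
      have hc : ((∑ j, A i j * v j : ℤ) : ℚ) = 0 := by rw [this]; simp
      push_cast at hc
      exact hc
    rw [h1, h2, heq i, mul_zero, sub_zero]

lemma exists_decomp {n m : ℕ} (A : Matrix (Fin n) (Fin m) ℤ) (a : Fin n → ℤ) (β : ℤ)
    (hβ : 1 ≤ β) (hA : ∀ i j, |A i j| ≤ β) (ha : ∀ i, |a i| ≤ β) :
    ∀ (N : ℕ) (S : Finset (Fin m)) (z : Fin m → ℚ), S.card ≤ N →
    (∀ j, 0 ≤ z j) → (∀ j, j ∉ S → z j = 0) →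
    (∀ i, ∑ j, (A i j : ℚ) * z j = (a i : ℚ)) →
    ∃ p, HasDecomp A a ((n.factorial : ℤ) * β ^ n) z p := by
  classical
  set Δ : ℤ := (n.factorial : ℤ) * β ^ n with hΔ
  have hΔ1 : (1:ℤ) ≤ Δ := by
    rw [hΔ]
    have h1 : (1:ℤ) ≤ (n.factorial : ℤ) := by exact_mod_cast Nat.one_le_iff_ne_zero.mpr n.factorial_ne_zero
    have h2 : (1:ℤ) ≤ β ^ n := one_le_pow₀ hβ
    nlinarith
  intro N
  induction N with
  | zero =>
    intro S z hcard hpos hsupp heq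
    refine ⟨0, z, Fin.elim0, Fin.elim0, hpos, heq, ?_, (fun i => i.elim0), (fun i => i.elim0), ?_⟩
    · intro j
      have hS : S = ∅ := Finset.card_eq_zero.mp (Nat.le_zero.mp hcard)
      have : z j = 0 := hsupp j (by rw [hS]; exact Finset.notMem_empty j)
      rw [this]
      exact_mod_cast le_trans zero_le_one hΔ1
    · intro j; simp
  | succ N ih =>
    intro S z hcard hpos hsupp heq
    by_cases hz0 : ∃ j ∈ S, z j = 0
    · obtain ⟨j', hj'S, hzj'⟩ := hz0
      apply ih (S.erase j') z
      · rw [Finset.card_erase_of_mem hj'S]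
        omega
      · exact hpos
      · intro j hj
        by_cases hjS : j ∈ S
        · have : j = j' := by
            by_contra hc
            exact hj (Finset.mem_erase.mpr ⟨hc, hjS⟩)
          rw [this]; exact hzj'
        · exact hsupp j hjS
      · exact heq
    · push_neg at hz0
      have hzpos : ∀ j ∈ S, 0 < z j :=
        fun j hj => lt_of_le_of_ne (hpos j) (Ne.symm (hz0 j hj))
      by_cases hind : LinearIndependent ℚ (fun j : S => fun i => (A i (j : Fin m) : ℚ))
      · have hbd := indep_support_bound A a β hβ hA ha S z hsupp heq hind
        refine ⟨0, z, Fin.elim0, Fin.elim0, hpos, heq, ?_, (fun i => i.elim0),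
          (fun i => i.elim0), ?_⟩
        · intro j
          have := hbd j
          rw [abs_le] at this
          exact this.2
        · intro j; simp
      · obtain ⟨u, hu0, huS, huker, hubd⟩ := exists_small_kernel A β hβ hA S hind
        -- orient u to have a positive entry
        obtain ⟨v, hvS, hvker, hvbd, hvpos, hvcases⟩ :
            ∃ v : Fin m → ℤ, (∀ j, j ∉ S → v j = 0) ∧ (∀ i, ∑ j, A i j * v j = 0) ∧
              (∀ j, |v j| ≤ Δ) ∧ (∃ j, 0 < v j) ∧ (v = u ∨ v = -u) := by
          obtain ⟨j₁, hj₁⟩ := Function.ne_iff.mp hu0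
          have hj₁' : u j₁ ≠ 0 := by simpa using hj₁
          rcases lt_or_gt_of_ne hj₁' with h | h
          · refine ⟨-u, ?_, ?_, ?_, ⟨j₁, ?_⟩, Or.inr rfl⟩
            · intro j hj; simp [huS j hj]
            · intro i
              have hns : ∑ j, A i j * (-u) j = -∑ j, A i j * u j := by
                rw [← Finset.sum_neg_distrib]
                exact Finset.sum_congr rfl fun j _ => by simp
              rw [hns, huker i, neg_zero]
            · intro j; simp only [Pi.neg_apply, abs_neg]; exact hubd j
            · simp only [Pi.neg_apply]
              omega
          · exact ⟨u, huS, huker, hubd, ⟨j₁, h⟩, Or.inl rfl⟩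
        obtain ⟨j₁', t₁, hj₁'S, ht₁, hkey₁, hsupp₁, heq₁⟩ :=
          move_lemma A a S z hzpos hsupp heq v hvS hvker hvpos
        by_cases hvneg : ∃ j, v j < 0
        · -- mixed direction: move both ways and take a convex combination
          have hnvpos : ∃ j, 0 < (-v) j := by
            obtain ⟨j, hj⟩ := hvneg
            exact ⟨j, by simp [hj]⟩
          have hnvS : ∀ j, j ∉ S → (-v) j = 0 := fun j hj => by simp [hvS j hj]
          have hnvker : ∀ i, ∑ j, A i j * (-v) j = 0 := by
            intro i
            have : ∑ j, A i j * (-v) j = -∑ j, A i j * v j := by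
              rw [← Finset.sum_neg_distrib]
              exact Finset.sum_congr rfl fun j _ => by simp
            rw [this, hvker i, neg_zero]
          obtain ⟨j₂', t₂, hj₂'S, ht₂, hkey₂, hsupp₂, heq₂⟩ :=
            move_lemma A a S z hzpos hsupp heq (-v) hnvS hnvker hnvpos
          set z₁ : Fin m → ℚ := fun j => z j - t₁ * (v j : ℚ) with hz₁
          set z₂ : Fin m → ℚ := fun j => z j + t₂ * (v j : ℚ) with hz₂
          have hz₂' : ∀ j, z j - t₂ * ((-v) j : ℚ) = z₂ j := by
            intro j
            simp only [hz₂, Pi.neg_apply]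
            push_cast
            ring
          obtain ⟨p₁, w₁, d₁, μ₁, hw₁pos, hw₁eq, hw₁bd, hd₁, hμ₁, hdec₁⟩ :=
            ih (S.erase j₁') z₁ (by rw [Finset.card_erase_of_mem hj₁'S]; omega)
              hkey₁ hsupp₁ heq₁
          obtain ⟨p₂, w₂, d₂, μ₂, hw₂pos, hw₂eq, hw₂bd, hd₂, hμ₂, hdec₂⟩ :=
            ih (S.erase j₂') z₂ (by rw [Finset.card_erase_of_mem hj₂'S]; omega)
              (fun j => by rw [← hz₂' j]; exact hkey₂ j)
              (fun j hj => by rw [← hz₂' j]; exact hsupp₂ j hj)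
              (fun i => by
                have := heq₂ i
                rw [← this]
                exact Finset.sum_congr rfl fun j _ => by rw [hz₂' j])
          set θ : ℚ := t₁ / (t₁ + t₂) with hθ
          have htt : 0 < t₁ + t₂ := by linarith
          have hθ0 : 0 ≤ θ := le_of_lt (div_pos ht₁ htt)
          have hθ1 : θ ≤ 1 := by
            rw [hθ, div_le_one htt]; linarith
          have hzcomb : ∀ j, z j = (1 - θ) * z₁ j + θ * z₂ j := by
            intro j
            rw [hz₁, hz₂, hθ]
            field_simp
            ring
          set w : Fin m → ℚ := fun j => (1 - θ) * w₁ j + θ * w₂ j with hw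
          refine ⟨p₁ + p₂, w,
            fun i => Fin.addCases (fun i₁ => d₁ i₁) (fun i₂ => d₂ i₂) i,
            fun i => Fin.addCases (fun i₁ => (1 - θ) * μ₁ i₁) (fun i₂ => θ * μ₂ i₂) i,
            ?_, ?_, ?_, ?_, ?_, ?_⟩
          · intro j
            simp only [hw]
            have h1 := hw₁pos j; have h2 := hw₂pos j
            nlinarith
          · intro i
            have h1 : ∑ j, (A i j : ℚ) * w j
                = (1 - θ) * ∑ j, (A i j : ℚ) * w₁ j + θ * ∑ j, (A i j : ℚ) * w₂ j := by
              rw [Finset.mul_sum, Finset.mul_sum, ← Finset.sum_add_distrib]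
              refine Finset.sum_congr rfl fun j _ => ?_
              simp only [hw]
              ring
            rw [h1, hw₁eq i, hw₂eq i]
            ring
          · intro j
            simp only [hw]
            have h1 := hw₁bd j; have h2 := hw₂bd j
            nlinarith
          · intro i
            refine Fin.addCases ?_ ?_ i
            · intro i₁; simpa using hd₁ i₁
            · intro i₂; simpa using hd₂ i₂
          · intro i
            refine Fin.addCases ?_ ?_ i
            · intro i₁
              simp only [Fin.addCases_left]
              have h1 := hμ₁ i₁; nlinarith
            · intro i₂
              simp only [Fin.addCases_right]
              have h1 := hμ₂ i₂; nlinarith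
          · intro j
            rw [Fin.sum_univ_add]
            simp only [Fin.addCases_left, Fin.addCases_right, hw]
            rw [hzcomb j, hdec₁ j, hdec₂ j]
            have e₁ : ∑ i, (1 - θ) * μ₁ i * (d₁ i j : ℚ)
                = (1 - θ) * ∑ i, μ₁ i * (d₁ i j : ℚ) := by
              rw [Finset.mul_sum]
              exact Finset.sum_congr rfl fun i _ => by ring
            have e₂ : ∑ i, θ * μ₂ i * (d₂ i j : ℚ)
                = θ * ∑ i, μ₂ i * (d₂ i j : ℚ) := by
              rw [Finset.mul_sum]
              exact Finset.sum_congr rfl fun i _ => by ring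
            rw [e₁, e₂]
            ring
        · -- v is itself a nonnegative ray
          push_neg at hvneg
          set z₁ : Fin m → ℚ := fun j => z j - t₁ * (v j : ℚ) with hz₁
          obtain ⟨p₁, w₁, d₁, μ₁, hw₁pos, hw₁eq, hw₁bd, hd₁, hμ₁, hdec₁⟩ :=
            ih (S.erase j₁') z₁ (by rw [Finset.card_erase_of_mem hj₁'S]; omega)
              hkey₁ hsupp₁ heq₁
          refine ⟨p₁ + 1, w₁, Fin.snoc d₁ v, Fin.snoc μ₁ t₁,
            hw₁pos, hw₁eq, hw₁bd, ?_, ?_, ?_⟩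
          · intro i
            refine Fin.lastCases ?_ ?_ i
            · simp only [Fin.snoc_last]
              exact ⟨hvneg, hvker, fun j => le_trans (le_abs_self _) (hvbd j)⟩
            · intro i₁; simpa using hd₁ i₁
          · intro i
            refine Fin.lastCases ?_ ?_ i
            · simp only [Fin.snoc_last]; exact le_of_lt ht₁
            · intro i₁; simpa using hμ₁ i₁
          · intro j
            rw [Fin.sum_univ_castSucc]
            simp only [Fin.snoc_last, Fin.snoc_castSucc]
            have : z j = z₁ j + t₁ * (v j : ℚ) := by rw [hz₁]; ring
            rw [this, hdec₁ j]
            ring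

lemma decomp_reduce {n m : ℕ} (A : Matrix (Fin n) (Fin m) ℤ) (a : Fin n → ℤ) (Δ : ℤ) :
    ∀ (p : ℕ) (z : Fin m → ℚ), HasDecomp A a Δ z p →
    ∃ p', p' ≤ m ∧ HasDecomp A a Δ z p' := by
  classical
  intro p
  induction p using Nat.strong_induction_on with
  | _ p ih =>
  intro z hd
  by_cases hpm : p ≤ m
  · exact ⟨p, hpm, hd⟩
  · obtain ⟨w, d, μ, hw0, hweq, hwbd, hray, hμ, hdec⟩ := hd
    have hnli : ¬ LinearIndependent ℚ (fun i : Fin p => fun j => (d i j : ℚ)) := by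
      intro hcon
      have := hcon.fintype_card_le_finrank
      simp only [Fintype.card_fin, Module.finrank_fin_fun] at this
      omega
    obtain ⟨c₀, hc₀sum, i₁, hi₁⟩ := Fintype.not_linearIndependent_iff.mp hnli
    obtain ⟨c, hcsum, hcpos⟩ :
        ∃ c : Fin p → ℚ, (∀ j, ∑ i, c i * (d i j : ℚ) = 0) ∧ (∃ i, 0 < c i) := by
      have hc₀sum' : ∀ j, ∑ i, c₀ i * (d i j : ℚ) = 0 := by
        intro j
        have := congrFun hc₀sum j
        simpa [Finset.sum_apply] using this
      rcases lt_or_gt_of_ne hi₁ with h | h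
      · refine ⟨-c₀, fun j => ?_, ⟨i₁, by simpa using h⟩⟩
        have : ∑ i, (-c₀) i * (d i j : ℚ) = -∑ i, c₀ i * (d i j : ℚ) := by
          rw [← Finset.sum_neg_distrib]
          exact Finset.sum_congr rfl fun i _ => by simp
        rw [this, hc₀sum' j, neg_zero]
      · exact ⟨c₀, hc₀sum', ⟨i₁, h⟩⟩
    set I : Finset (Fin p) := Finset.univ.filter (fun i => 0 < c i) with hI
    have hIne : I.Nonempty := by
      obtain ⟨i, hi⟩ := hcpos
      exact ⟨i, Finset.mem_filter.mpr ⟨Finset.mem_univ i, hi⟩⟩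
    obtain ⟨i', hi'I, hi'min⟩ := Finset.exists_min_image I (fun i => μ i / c i) hIne
    have hci' : 0 < c i' := (Finset.mem_filter.mp hi'I).2
    set t : ℚ := μ i' / c i' with htdef
    have ht0 : 0 ≤ t := div_nonneg (hμ i') (le_of_lt hci')
    set μ' : Fin p → ℚ := fun i => μ i - t * c i with hμ'def
    have hμ'0 : ∀ i, 0 ≤ μ' i := by
      intro i
      rcases le_or_gt (c i) 0 with hc | hc
      · have := hμ i
        simp only [hμ'def]
        nlinarith
      · have hiI : i ∈ I := Finset.mem_filter.mpr ⟨Finset.mem_univ i, hc⟩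
        have h1 := hi'min i hiI
        rw [div_le_div_iff₀ hci' hc] at h1
        simp only [hμ'def, htdef]
        rw [div_mul_eq_mul_div, sub_nonneg, div_le_iff₀ hci']
        nlinarith
    have hμ'i' : μ' i' = 0 := by
      simp only [hμ'def, htdef]
      field_simp
      ring
    have hsum' : ∀ j, ∑ i, μ' i * (d i j : ℚ) = ∑ i, μ i * (d i j : ℚ) := by
      intro j
      have h1 : ∑ i, μ' i * (d i j : ℚ)
          = ∑ i, μ i * (d i j : ℚ) - t * ∑ i, c i * (d i j : ℚ) := by
        rw [Finset.mul_sum, ← Finset.sum_sub_distrib]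
        refine Finset.sum_congr rfl fun i _ => ?_
        simp only [hμ'def]
        ring
      rw [h1, hcsum j, mul_zero, sub_zero]
    rcases Nat.exists_eq_succ_of_ne_zero (show p ≠ 0 by omega) with ⟨p'', rfl⟩
    refine ih p'' (by omega) z ⟨w, fun i => d (i'.succAbove i), fun i => μ' (i'.succAbove i),
      hw0, hweq, hwbd, fun i => hray _, fun i => hμ'0 _, ?_⟩
    intro j
    rw [hdec j]
    congr 1
    rw [← hsum' j, Fin.sum_univ_succAbove (fun i => μ' i * (d i j : ℚ)) i', hμ'i']
    simp

lemma small_solution {n m : ℕ} (A : Matrix (Fin n) (Fin m) ℤ) (a : Fin n → ℤ) (β : ℤ)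
    (hβ : 1 ≤ β) (hA : ∀ i j, |A i j| ≤ β) (ha : ∀ i, |a i| ≤ β)
    (z₀ : Fin m → ℕ) (hz₀ : A.mulVec (fun j => (z₀ j : ℤ)) = a) :
    ∃ z : Fin m → ℕ, A.mulVec (fun j => (z j : ℤ)) = a ∧
      ∀ j, (z j : ℤ) ≤ (m + 1 : ℤ) * ((n.factorial : ℤ) * β ^ n) := by
  classical
  set Δ : ℤ := (n.factorial : ℤ) * β ^ n with hΔdef
  have hΔ1 : (1:ℤ) ≤ Δ := by
    rw [hΔdef]
    have h1 : (1:ℤ) ≤ (n.factorial : ℤ) := by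
      exact_mod_cast Nat.one_le_iff_ne_zero.mpr n.factorial_ne_zero
    have h2 : (1:ℤ) ≤ β ^ n := one_le_pow₀ hβ
    nlinarith
  set zq : Fin m → ℚ := fun j => (z₀ j : ℚ) with hzq
  have hzeq : ∀ i, ∑ j, (A i j : ℚ) * zq j = (a i : ℚ) := by
    intro i
    have h1 := congrFun hz₀ i
    simp only [Matrix.mulVec, dotProduct] at h1
    have h2 : ((∑ j, A i j * (z₀ j : ℤ) : ℤ) : ℚ) = ((a i : ℤ) : ℚ) := by
      rw [h1]
    push_cast at h2
    simpa [hzq] using h2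
  obtain ⟨p₀, hd₀⟩ := exists_decomp A a β hβ hA ha m Finset.univ zq
    (le_of_eq (Finset.card_fin m))
    (fun j => by simp [hzq])
    (fun j hj => absurd (Finset.mem_univ j) hj)
    hzeq
  obtain ⟨p, hpm, w, d, μ, hw0, hweq, hwbd, hray, hμ, hdec⟩ := decomp_reduce A a Δ p₀ zq hd₀
  set zz : Fin m → ℤ := fun j => (z₀ j : ℤ) - ∑ i, ⌊μ i⌋ * d i j with hzz
  have hzzq : ∀ j, (zz j : ℚ) = w j + ∑ i, (μ i - (⌊μ i⌋ : ℚ)) * (d i j : ℚ) := by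
    intro j
    simp only [hzz]
    push_cast
    have h1 : (z₀ j : ℚ) = w j + ∑ i, μ i * (d i j : ℚ) := hdec j
    rw [h1, add_sub_assoc, ← Finset.sum_sub_distrib]
    congr 1
    refine Finset.sum_congr rfl fun i _ => ?_
    ring
  have hzznn : ∀ j, 0 ≤ zz j := by
    intro j
    have h1 : (0:ℚ) ≤ (zz j : ℚ) := by
      rw [hzzq j]
      have h2 : ∀ i : Fin p, 0 ≤ (μ i - (⌊μ i⌋ : ℚ)) * (d i j : ℚ) := by
        intro i
        apply mul_nonneg
        · have := Int.floor_le (μ i); linarith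
        · exact_mod_cast (hray i).1 j
      have h3 : (0:ℚ) ≤ ∑ i, (μ i - (⌊μ i⌋ : ℚ)) * (d i j : ℚ) :=
        Finset.sum_nonneg fun i _ => h2 i
      linarith [hw0 j]
    exact_mod_cast h1
  have hzzbd : ∀ j, zz j ≤ (m + 1 : ℤ) * Δ := by
    intro j
    have h1 : (zz j : ℚ) ≤ ((m + 1 : ℤ) * Δ : ℤ) := by
      rw [hzzq j]
      have h2 : ∀ i : Fin p, (μ i - (⌊μ i⌋ : ℚ)) * (d i j : ℚ) ≤ (Δ : ℚ) := by
        intro i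
        have hf1 : μ i - (⌊μ i⌋ : ℚ) ≤ 1 := by
          have := Int.lt_floor_add_one (μ i); linarith
        have hf0 : 0 ≤ μ i - (⌊μ i⌋ : ℚ) := by
          have := Int.floor_le (μ i); linarith
        have hd0 : (0:ℚ) ≤ (d i j : ℚ) := by exact_mod_cast (hray i).1 j
        have hdΔ : (d i j : ℚ) ≤ (Δ : ℚ) := by exact_mod_cast (hray i).2.2 j
        calc (μ i - (⌊μ i⌋ : ℚ)) * (d i j : ℚ) ≤ 1 * (Δ : ℚ) := by
              apply mul_le_mul hf1 hdΔ hd0 zero_le_one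
          _ = (Δ : ℚ) := one_mul _
      have h3 : ∑ i, (μ i - (⌊μ i⌋ : ℚ)) * (d i j : ℚ) ≤ (p : ℚ) * (Δ : ℚ) := by
        calc ∑ i, (μ i - (⌊μ i⌋ : ℚ)) * (d i j : ℚ) ≤ ∑ _i : Fin p, (Δ : ℚ) :=
              Finset.sum_le_sum fun i _ => h2 i
          _ = (p : ℚ) * (Δ : ℚ) := by simp [mul_comm]
      have h4 : (p : ℚ) ≤ (m : ℚ) := by exact_mod_cast hpm
      have h5 : (0:ℚ) ≤ (Δ:ℚ) := by exact_mod_cast le_trans zero_le_one hΔ1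
      have h6 := hwbd j
      push_cast
      nlinarith
    exact_mod_cast h1
  have hzzeq : ∀ i, ∑ j, A i j * zz j = a i := by
    intro i
    have hsw : ∑ l : Fin p, ⌊μ l⌋ * ∑ j, A i j * d l j
        = ∑ j, ∑ l : Fin p, A i j * (⌊μ l⌋ * d l j) := by
      have e1 : ∀ l, ⌊μ l⌋ * ∑ j, A i j * d l j = ∑ j, A i j * (⌊μ l⌋ * d l j) := by
        intro l
        rw [Finset.mul_sum]
        exact Finset.sum_congr rfl fun j _ => by ring
      rw [Finset.sum_congr rfl (fun l _ => e1 l), Finset.sum_comm]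
    have h1 : ∑ j, A i j * zz j
        = ∑ j, A i j * (z₀ j : ℤ) - ∑ l, ⌊μ l⌋ * ∑ j, A i j * d l j := by
      rw [hsw, ← Finset.sum_sub_distrib]
      refine Finset.sum_congr rfl fun j _ => ?_
      simp only [hzz]
      rw [mul_sub]
      congr 1
      rw [Finset.mul_sum]
    rw [h1]
    have h2 : ∀ l : Fin p, ∑ j, A i j * d l j = 0 := fun l => (hray l).2.1 i
    have h3 : ∑ l : Fin p, ⌊μ l⌋ * ∑ j, A i j * d l j = 0 := by
      refine Finset.sum_eq_zero fun l _ => ?_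
      rw [h2 l, mul_zero]
    rw [h3, sub_zero]
    have h4 := congrFun hz₀ i
    simp only [Matrix.mulVec, dotProduct] at h4
    exact h4
  refine ⟨fun j => (zz j).toNat, ?_, ?_⟩
  · funext i
    simp only [Matrix.mulVec, dotProduct]
    have h5 : ∀ j, ((zz j).toNat : ℤ) = zz j := fun j => Int.toNat_of_nonneg (hzznn j)
    calc ∑ j, A i j * ((zz j).toNat : ℤ) = ∑ j, A i j * zz j :=
          Finset.sum_congr rfl fun j _ => by rw [h5 j]
      _ = a i := hzzeq i
  · intro j
    rw [Int.toNat_of_nonneg (hzznn j)]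
    exact hzzbd j

/-- Images of solution sets of linear Diophantine systems are semilinear and,
if nonempty, contain a small vector. -/
theorem diophantine_semilinear_small_solution (n m k : ℕ)
    (A : Matrix (Fin n) (Fin m) ℤ) (a : Fin n → ℤ)
    (C : Matrix (Fin k) (Fin m) ℕ) (c : Fin k → ℕ) (β : ℕ)
    (hA : ∀ i j, (A i j).natAbs ≤ β) (ha : ∀ i, (a i).natAbs ≤ β)
    (hC : ∀ i j, C i j ≤ β) (hc : ∀ i, c i ≤ β) :
    IsSemilinear {v : Fin k → ℕ | ∃ z : Fin m → ℕ,
        A.mulVec (fun j => (z j : ℤ)) = a ∧ v = C.mulVec z + c} ∧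
    ((∃ z : Fin m → ℕ, A.mulVec (fun j => (z j : ℤ)) = a) →
      ∃ z : Fin m → ℕ, A.mulVec (fun j => (z j : ℤ)) = a ∧
        ∀ i, (C.mulVec z + c) i ≤ β + n.factorial * m * (m + 1) * β ^ (n + 1)) := by
  constructor
  · exact semilinear_part A a C c
  · rintro ⟨z₀, hz₀⟩
    by_cases hβ0 : β = 0
    · subst hβ0
      refine ⟨z₀, hz₀, ?_⟩
      intro i
      have hC0 : ∀ j, C i j = 0 := fun j => Nat.le_zero.mp (hC i j)
      have hc0 : c i = 0 := Nat.le_zero.mp (hc i)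
      have h1 : (C.mulVec z₀ + c) i = ∑ j, C i j * z₀ j + c i := by
        simp [Matrix.mulVec, dotProduct]
      rw [h1, hc0]
      have h2 : ∑ j, C i j * z₀ j = 0 :=
        Finset.sum_eq_zero fun j _ => by rw [hC0 j, zero_mul]
      rw [h2]
      exact Nat.zero_le _
    · have hβ : 1 ≤ β := Nat.one_le_iff_ne_zero.mpr hβ0
      have hβz : (1:ℤ) ≤ (β : ℤ) := by exact_mod_cast hβ
      have hA' : ∀ i j, |A i j| ≤ (β : ℤ) := by
        intro i j
        rw [Int.abs_eq_natAbs]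
        exact_mod_cast hA i j
      have ha' : ∀ i, |a i| ≤ (β : ℤ) := by
        intro i
        rw [Int.abs_eq_natAbs]
        exact_mod_cast ha i
      obtain ⟨z, hz, hbd⟩ := small_solution A a (β : ℤ) hβz hA' ha' z₀ hz₀
      refine ⟨z, hz, ?_⟩
      have hzbd : ∀ j, z j ≤ (m + 1) * (n.factorial * β ^ n) := by
        intro j
        have h1 := hbd j
        have h2 : ((m + 1 : ℤ)) * ((n.factorial : ℤ) * (β:ℤ) ^ n)
            = (((m + 1) * (n.factorial * β ^ n) : ℕ) : ℤ) := by push_cast; ring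
        rw [h2] at h1
        exact_mod_cast h1
      intro i
      have h1 : (C.mulVec z + c) i = ∑ j, C i j * z j + c i := by
        simp [Matrix.mulVec, dotProduct]
      rw [h1]
      have h2 : ∑ j, C i j * z j ≤ ∑ _j : Fin m, β * ((m + 1) * (n.factorial * β ^ n)) :=
        Finset.sum_le_sum fun j _ => Nat.mul_le_mul (hC i j) (hzbd j)
      have h3 : ∑ _j : Fin m, β * ((m + 1) * (n.factorial * β ^ n))
          = m * (β * ((m + 1) * (n.factorial * β ^ n))) := by
        rw [Finset.sum_const, Finset.card_univ, Fintype.card_fin, smul_eq_mul]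
      have h4 : m * (β * ((m + 1) * (n.factorial * β ^ n)))
          = n.factorial * m * (m + 1) * β ^ (n + 1) := by
        rw [pow_succ]
        ring
      calc ∑ j, C i j * z j + c i
          ≤ m * (β * ((m + 1) * (n.factorial * β ^ n))) + β := by
            rw [← h3]
            exact Nat.add_le_add h2 (hc i)
        _ = β + n.factorial * m * (m + 1) * β ^ (n + 1) := by rw [h4, Nat.add_comm]
end
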